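/- arXiv:1101.4393 — 9 statements merged into one kernel-verified Lean document; each statement's English description precedes it below -/
import Mathlib

section
/- Let G be a connected graph on n vertices with maximum degree Δ₁ and second maximum degree Δ₂. Then the distance spectral radius satisfies ρ(G) ≥ √((2n−2−Δ₁)(2n−2−Δ₂)), with equality if and only if G is a regular graph of diameter at most 2. -/
open SimpleGraph Finset
open scoped Matrix

section AuxSpectral
variable {m : Type*} [Fintype m] [DecidableEq m]

lemma aux_dotProduct_mulVec_le {A : Matrix m m ℝ} (hA : A.IsHermitian) (x : m → ℝ) :
    x ⬝ᵥ (A *ᵥ x) ≤ (⨆ i, hA.eigenvalues i) * (x ⬝ᵥ x) := by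
  classical
  set U : Matrix m m ℝ := (hA.eigenvectorUnitary : Matrix m m ℝ) with hUdef
  have hU1 : U * star U = 1 := Matrix.mem_unitaryGroup_iff.mp hA.eigenvectorUnitary.2
  set y : m → ℝ := star U *ᵥ x with hy
  have hst : (RCLike.ofReal ∘ hA.eigenvalues : m → ℝ) = hA.eigenvalues := by
    ext i; simp
  have hAx : A *ᵥ x = U *ᵥ ((Matrix.diagonal hA.eigenvalues) *ᵥ y) := by
    conv_lhs => rw [hA.spectral_theorem]
    rw [Unitary.conjStarAlgAut_apply, hst, ← Matrix.mulVec_mulVec, ← Matrix.mulVec_mulVec]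
  have hdot : ∀ z : m → ℝ, x ⬝ᵥ (U *ᵥ z) = y ⬝ᵥ z := by
    intro z
    rw [Matrix.dotProduct_mulVec, hy]
    congr 1
    rw [Matrix.star_eq_conjTranspose, ← Matrix.mulVec_transpose]
    congr 1
  have key1 : x ⬝ᵥ (A *ᵥ x) = ∑ i, hA.eigenvalues i * (y i)^2 := by
    rw [hAx, hdot]
    simp only [dotProduct, Matrix.mulVec_diagonal]
    exact Finset.sum_congr rfl fun i _ => by ring
  have key2 : x ⬝ᵥ x = ∑ i, (y i)^2 := by
    have hUy : U *ᵥ y = x := by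
      rw [hy, Matrix.mulVec_mulVec, hU1, Matrix.one_mulVec]
    have hyy : y ⬝ᵥ y = x ⬝ᵥ x := by rw [← hdot y, hUy]
    rw [← hyy]
    simp only [dotProduct]
    exact Finset.sum_congr rfl fun i _ => by ring
  rw [key1, key2, Finset.mul_sum]
  refine Finset.sum_le_sum fun i _ => ?_
  have hle : hA.eigenvalues i ≤ ⨆ j, hA.eigenvalues j :=
    le_ciSup (Set.Finite.bddAbove (Set.finite_range _)) i
  nlinarith [sq_nonneg (y i)]

lemma aux_iSup_eigenvalues_le [Nonempty m] {A : Matrix m m ℝ} (hA : A.IsHermitian)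
    (hpos : ∀ i j, 0 ≤ A i j) (s : ℝ) (hs : ∀ i, ∑ j, A i j ≤ s) :
    (⨆ i, hA.eigenvalues i) ≤ s := by
  refine ciSup_le fun k => ?_
  have hev : Module.End.HasEigenvalue (Matrix.toLin' A) (hA.eigenvalues k) := by
    apply Module.End.hasEigenvalue_of_hasEigenvector (x := ⇑(hA.eigenvectorBasis k))
    refine ⟨Module.End.mem_eigenspace_iff.mpr ?_, ?_⟩
    · rw [Matrix.toLin'_apply, hA.mulVec_eigenvectorBasis]
    · intro h
      exact hA.eigenvectorBasis.orthonormal.ne_zero k (by ext j; exact congrFun h j)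
  obtain ⟨i, hi⟩ := eigenvalue_mem_ball hev
  rw [Metric.mem_closedBall, Real.dist_eq] at hi
  have h1 : hA.eigenvalues k ≤ A i i + ∑ j ∈ Finset.univ.erase i, ‖A i j‖ := by
    have := abs_le.mp hi
    linarith [this.2]
  have h2 : ∑ j ∈ Finset.univ.erase i, ‖A i j‖ = ∑ j ∈ Finset.univ.erase i, A i j :=
    Finset.sum_congr rfl fun j _ => Real.norm_of_nonneg (hpos i j)
  rw [h2, Finset.add_sum_erase _ _ (Finset.mem_univ i)] at h1
  exact h1.trans (hs i)

end AuxSpectral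

/-- The distance matrix of a graph `G`: the `(i,j)` entry is the graph distance
between `i` and `j`, as a real number. -/
noncomputable def distMatrix {V : Type*} [Fintype V] (G : SimpleGraph V) : Matrix V V ℝ :=
  fun i j => (G.dist i j : ℝ)

lemma distMatrix_isHermitian {V : Type*} [Fintype V] (G : SimpleGraph V) :
    (distMatrix G).IsHermitian := by
  unfold Matrix.IsHermitian
  ext i j
  simp [distMatrix, Matrix.conjTranspose_apply, SimpleGraph.dist_comm]

/-- The distance spectral radius of `G`: the largest eigenvalue of the distance matrix. -/
noncomputable def distSpectralRadius {V : Type*} [Fintype V] [DecidableEq V]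
    (G : SimpleGraph V) : ℝ :=
  ⨆ i, (distMatrix_isHermitian G).eigenvalues i

/-- The distance energy of `G`: the sum of the absolute values of the eigenvalues of
the distance matrix. -/
noncomputable def distEnergy {V : Type*} [Fintype V] [DecidableEq V]
    (G : SimpleGraph V) : ℝ :=
  ∑ i, |(distMatrix_isHermitian G).eigenvalues i|

noncomputable def rowSumD {V : Type*} [Fintype V] (G : SimpleGraph V) (w : V) : ℝ :=
  ∑ j, (G.dist w j : ℝ)

noncomputable def totalD {V : Type*} [Fintype V] (G : SimpleGraph V) : ℝ :=
  ∑ w, rowSumD G w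

def lbF {V : Type*} [DecidableEq V] (G : SimpleGraph V) [DecidableRel G.Adj] (w j : V) : ℝ :=
  if G.Adj w j then 1 else if j = w then 0 else 2

/-- **Theorem 1.** For a connected graph `G` on `n` vertices with maximum degree `Δ₁`
and second maximum degree `Δ₂`, `ρ(G) ≥ √((2n-2-Δ₁)(2n-2-Δ₂))`, with equality iff `G`
is a regular graph of diameter at most 2. -/
theorem distSpectralRadius_lower_bound_degrees {n : ℕ} (G : SimpleGraph (Fin n))
    [DecidableRel G.Adj] (hconn : G.Connected) (Δ₁ Δ₂ : ℕ) (u v : Fin n) (huv : u ≠ v)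
    (hu : G.degree u = Δ₁) (hv : G.degree v = Δ₂)
    (hmax : ∀ w, G.degree w ≤ Δ₁) (hmax2 : ∀ w, w ≠ u → G.degree w ≤ Δ₂) :
    Real.sqrt ((2 * (n : ℝ) - 2 - (Δ₁ : ℝ)) * (2 * (n : ℝ) - 2 - (Δ₂ : ℝ))) ≤
      distSpectralRadius G ∧
    (distSpectralRadius G =
        Real.sqrt ((2 * (n : ℝ) - 2 - (Δ₁ : ℝ)) * (2 * (n : ℝ) - 2 - (Δ₂ : ℝ))) ↔
      (∃ r, G.IsRegularOfDegree r) ∧ ∀ x y : Fin n, G.dist x y ≤ 2) := by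
  classical
  haveI : Nonempty (Fin n) := ⟨u⟩
  have hn2 : 2 ≤ n := by
    have h1 : 1 < Fintype.card (Fin n) := Fintype.one_lt_card_iff_nontrivial.mpr ⟨u, v, huv⟩
    simp at h1; omega
  have hn2' : (2:ℝ) ≤ n := by exact_mod_cast hn2
  have hn0 : (0:ℝ) < n := by linarith
  set a : ℝ := 2 * (n : ℝ) - 2 - (Δ₁ : ℝ) with ha_def
  set b : ℝ := 2 * (n : ℝ) - 2 - (Δ₂ : ℝ) with hb_def
  clear_value a b
  set ρ : ℝ := distSpectralRadius G with hρ_def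
  clear_value ρ
  have hf_def : ∀ w j : Fin n, lbF G w j = if G.Adj w j then 1 else if j = w then 0 else 2 :=
    fun _ _ => rfl
  have hf_le : ∀ w j : Fin n, lbF G w j ≤ (G.dist w j : ℝ) := by
    intro w j
    by_cases hadj : G.Adj w j
    · have : G.dist w j = 1 := SimpleGraph.dist_eq_one_iff_adj.mpr hadj
      simp [lbF, hadj, this]
    · by_cases hjw : j = w
      · simp [lbF, hadj, hjw]
      · have h0 : 0 < G.dist w j := hconn.pos_dist_of_ne (fun e => hjw e.symm)
        have h1 : G.dist w j ≠ 1 := fun e => hadj (SimpleGraph.dist_eq_one_iff_adj.mp e)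
        have h2 : 2 ≤ G.dist w j := by omega
        simp only [lbF, hadj, hjw, if_false]
        exact_mod_cast h2
  have hf_le2 : ∀ w j : Fin n, lbF G w j ≤ 2 := by
    intro w j
    simp only [lbF]
    split_ifs <;> norm_num
  have hsumf : ∀ w, ∑ j, lbF G w j = 2 * (n:ℝ) - 2 - (G.degree w : ℝ) := by
    intro w
    have hterm : ∀ j, lbF G w j
        = 2 - (if G.Adj w j then (1:ℝ) else 0) - (if j = w then (2:ℝ) else 0) := by
      intro j
      by_cases hadj : G.Adj w j
      · have hjw : j ≠ w := fun e => G.irrefl (e ▸ hadj)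
        simp [lbF, hadj, hjw]
        norm_num
      · by_cases hjw : j = w <;> simp [lbF, hadj, hjw]
    rw [Finset.sum_congr rfl fun j _ => hterm j, Finset.sum_sub_distrib,
      Finset.sum_sub_distrib]
    have e1 : ∑ _j : Fin n, (2:ℝ) = 2 * n := by
      simp [Finset.sum_const, mul_comm]
    have e2 : ∑ j, (if G.Adj w j then (1:ℝ) else 0) = (G.degree w : ℝ) := by
      rw [Finset.sum_boole]
      norm_cast
      rw [SimpleGraph.degree, SimpleGraph.neighborFinset_eq_filter]
    have e3 : ∑ j, (if j = w then (2:ℝ) else 0) = 2 := by simp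
    rw [e1, e2, e3]
    ring
  have hS_def : ∀ w : Fin n, rowSumD G w = ∑ j, (G.dist w j : ℝ) := fun _ => rfl
  have hS_ge : ∀ w, 2 * (n:ℝ) - 2 - (G.degree w : ℝ) ≤ rowSumD G w := by
    intro w
    rw [← hsumf w]
    exact Finset.sum_le_sum fun j _ => hf_le w j
  have hT_def : totalD G = ∑ w, rowSumD G w := rfl
  -- Rayleigh with the all-ones vector
  have hray : totalD G ≤ ρ * n := by
    have h := aux_dotProduct_mulVec_le (distMatrix_isHermitian G) (fun _ => (1:ℝ))
    have hxDx : (fun _ => (1:ℝ)) ⬝ᵥ (distMatrix G *ᵥ fun _ => (1:ℝ)) = totalD G := by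
      rw [hT_def]
      simp only [dotProduct, Matrix.mulVec, one_mul, mul_one]
      exact Finset.sum_congr rfl fun w _ => rfl
    have hxx : (fun _ => (1:ℝ)) ⬝ᵥ ((fun _ => (1:ℝ)) : Fin n → ℝ) = (n:ℝ) := by
      simp [dotProduct]
    rw [hxDx, hxx] at h
    rw [hρ_def]
    show totalD G ≤ (⨆ i, (distMatrix_isHermitian G).eigenvalues i) * n
    exact h
  -- basic numeric facts
  have hd1 : (Δ₁:ℝ) ≤ (n:ℝ) - 1 := by
    have := G.degree_lt_card_verts u
    rw [hu, Fintype.card_fin] at this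
    have : Δ₁ + 1 ≤ n := this
    have := (Nat.cast_le (α := ℝ)).mpr this
    push_cast at this
    linarith
  have hΔ21 : Δ₂ ≤ Δ₁ := by rw [← hv]; exact hmax v
  have hd2 : (Δ₂:ℝ) ≤ (Δ₁:ℝ) := by exact_mod_cast hΔ21
  have ha0 : 0 ≤ a := by rw [ha_def]; linarith
  have hab : a ≤ b := by rw [ha_def, hb_def]; linarith
  have hb0 : 0 ≤ b := le_trans ha0 hab
  have hsqrt_le : Real.sqrt (a * b) ≤ (a + b) / 2 := by
    rw [show (a + b) / 2 = Real.sqrt (((a + b) / 2) ^ 2) from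
      (Real.sqrt_sq (by linarith)).symm]
    apply Real.sqrt_le_sqrt
    nlinarith [sq_nonneg (a - b)]
  have hTlb : a + ((n:ℝ) - 1) * b ≤ totalD G := by
    have h1 : ∑ w, (if w = u then a else b) = a + ((n:ℝ) - 1) * b := by
      rw [← Finset.add_sum_erase _ _ (Finset.mem_univ u), if_pos rfl]
      congr 1
      rw [Finset.sum_congr rfl (fun w hw => if_neg (Finset.mem_erase.mp hw).1),
        Finset.sum_const, Finset.card_erase_of_mem (Finset.mem_univ u), Finset.card_univ,
        Fintype.card_fin, nsmul_eq_mul, Nat.cast_sub (by omega), Nat.cast_one]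
    rw [hT_def, ← h1]
    refine Finset.sum_le_sum fun w _ => ?_
    by_cases hwu : w = u
    · rw [if_pos hwu, hwu, ha_def]
      have := hS_ge u
      rw [hu] at this
      exact this
    · rw [if_neg hwu]
      have h2 := hS_ge w
      have h3 : (G.degree w : ℝ) ≤ (Δ₂ : ℝ) := by exact_mod_cast hmax2 w hwu
      rw [hb_def]
      linarith
  have hmid : (n:ℝ) * ((a + b) / 2) ≤ a + ((n:ℝ) - 1) * b := by
    nlinarith [mul_nonneg (sub_nonneg.mpr hn2') (sub_nonneg.mpr hab)]
  have hmain : Real.sqrt (a * b) ≤ ρ := by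
    nlinarith [Real.sqrt_nonneg (a * b)]
  refine ⟨hmain, ?_, ?_⟩
  · -- equality → regular & diameter ≤ 2
    intro h
    have hub : totalD G ≤ Real.sqrt (a * b) * n := by rw [← h]; exact hray
    have heq_half : (a + b) / 2 = Real.sqrt (a * b) := by
      have : (n:ℝ) * ((a + b) / 2) ≤ Real.sqrt (a * b) * n := by linarith
      have h2 : (a + b) / 2 ≤ Real.sqrt (a * b) := by nlinarith
      linarith
    have hsq : ((a + b) / 2) ^ 2 = a * b := by
      rw [heq_half]; exact Real.sq_sqrt (mul_nonneg ha0 hb0)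
    have hab_eq : a = b := by
      have h4 : (a - b) ^ 2 = 0 := by linear_combination 4 * hsq
      have h5 : a - b = 0 := by
        have := sq_eq_zero_iff.mp h4
        exact this
      linarith
    have hsab : Real.sqrt (a * b) = a := by
      rw [← hab_eq, Real.sqrt_mul_self ha0]
    have hT_eq : totalD G = (n:ℝ) * a := by
      rw [hsab] at hub
      have := hTlb
      rw [← hab_eq] at this
      have h2 : a + ((n:ℝ) - 1) * a = (n:ℝ) * a := by ring
      rw [h2] at this
      linarith
    -- each row sum equals a, and each degree equals Δ₁
    have hSa_ge : ∀ w, a ≤ rowSumD G w := by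
      intro w
      have h1 := hS_ge w
      have h2 : (G.degree w : ℝ) ≤ (Δ₁ : ℝ) := by exact_mod_cast hmax w
      rw [ha_def]; linarith
    have hS_eq : ∀ w, rowSumD G w = a := by
      have hz : ∑ w, (rowSumD G w - a) = 0 := by
        rw [Finset.sum_sub_distrib, Finset.sum_const, Finset.card_univ, Fintype.card_fin,
          nsmul_eq_mul, ← hT_def, hT_eq]
        ring
      intro w
      have := (Finset.sum_eq_zero_iff_of_nonneg
        (fun w _ => sub_nonneg.mpr (hSa_ge w))).mp hz w (Finset.mem_univ w)
      linarith
    have hdeg_eq : ∀ w, G.degree w = Δ₁ := by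
      intro w
      have h1 := hS_ge w
      rw [hS_eq w] at h1
      have h2 : (G.degree w : ℝ) ≤ (Δ₁ : ℝ) := by exact_mod_cast hmax w
      have h3 : (G.degree w : ℝ) = (Δ₁ : ℝ) := by rw [ha_def] at h1; linarith
      exact_mod_cast h3
    have hdist_f : ∀ w j, (G.dist w j : ℝ) = lbF G w j := by
      intro w j
      have hz : ∑ j, ((G.dist w j : ℝ) - lbF G w j) = 0 := by
        rw [Finset.sum_sub_distrib, hsumf w, ← hS_def w, hS_eq w]
        have h3 : (G.degree w : ℝ) = (Δ₁ : ℝ) := by exact_mod_cast hdeg_eq w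
        rw [h3, ha_def]
        ring
      have := (Finset.sum_eq_zero_iff_of_nonneg
        (fun j _ => sub_nonneg.mpr (hf_le w j))).mp hz j (Finset.mem_univ j)
      linarith
    refine ⟨⟨Δ₁, fun w => hdeg_eq w⟩, fun x y => ?_⟩
    have h1 : (G.dist x y : ℝ) ≤ 2 := by rw [hdist_f x y]; exact hf_le2 x y
    exact_mod_cast h1
  · -- regular & diameter ≤ 2 → equality
    rintro ⟨⟨r, hreg⟩, hdiam⟩
    have hΔ₁r : Δ₁ = r := by rw [← hu, hreg u]
    have hΔ₂r : Δ₂ = r := by rw [← hv, hreg v]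
    have hab_eq : a = b := by rw [ha_def, hb_def, hΔ₁r, hΔ₂r]
    have hdist_f : ∀ w j, (G.dist w j : ℝ) = lbF G w j := by
      intro w j
      by_cases hadj : G.Adj w j
      · have : G.dist w j = 1 := SimpleGraph.dist_eq_one_iff_adj.mpr hadj
        simp [lbF, hadj, this]
      · by_cases hjw : j = w
        · simp [lbF, hadj, hjw, hjw ▸ SimpleGraph.dist_self (G := G) (v := w)]
        · have h0 : 0 < G.dist w j := hconn.pos_dist_of_ne (fun e => hjw e.symm)
          have h1 : G.dist w j ≠ 1 := fun e => hadj (SimpleGraph.dist_eq_one_iff_adj.mp e)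
          have h2 : G.dist w j ≤ 2 := hdiam w j
          have h3 : G.dist w j = 2 := by omega
          simp [lbF, hadj, hjw, h3]
    have hS_eq : ∀ w, rowSumD G w = a := by
      intro w
      have hsum : ∑ j : Fin n, (G.dist w j : ℝ) = ∑ j : Fin n, lbF G w j :=
        Finset.sum_congr rfl fun j _ => hdist_f w j
      rw [hS_def w, hsum, hsumf w, hreg w, ha_def, hΔ₁r]
    have hupper : ρ ≤ a := by
      rw [hρ_def]
      show (⨆ i, (distMatrix_isHermitian G).eigenvalues i) ≤ a
      apply aux_iSup_eigenvalues_le (distMatrix_isHermitian G)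
        (fun i j => by simp [distMatrix]) a
      intro i
      simp only [distMatrix]
      exact le_of_eq ((hS_def i).symm.trans (hS_eq i))
    have hlower : a ≤ ρ := by
      have hT_eq : totalD G = (n:ℝ) * a := by
        have hsum : ∑ w : Fin n, rowSumD G w = ∑ _w : Fin n, a :=
          Finset.sum_congr rfl fun w _ => hS_eq w
        rw [hT_def, hsum, Finset.sum_const, Finset.card_univ, Fintype.card_fin, nsmul_eq_mul]
      rw [hT_eq] at hray
      exact (mul_le_mul_iff_of_pos_right hn0).mp (by linarith)
    have : ρ = a := le_antisymm hupper hlower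
    rw [this, ← hab_eq, Real.sqrt_mul_self ha0]
end

section
/- Let G be a connected graph on n vertices with minimum degree δ₁, second minimum degree δ₂, and diameter d. Then ρ(G) ≤ √([dn − d(d−1)/2 − 1 − δ₁(d−1)]·[dn − d(d−1)/2 − 1 − δ₂(d−1)]), with equality if and only if G is a regular graph of diameter at most 2. -/
open SimpleGraph Finset

/-! ### Auxiliary lemmas -/

open Matrix

section Aux

set_option linter.unusedSectionVars false

variable {V : Type*} [Fintype V] [DecidableEq V] {G : SimpleGraph V}

lemma aux_walk_dist_le (hc : G.Connected) {x y : V} (p : G.Walk x y) :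
    ∀ s t, s ≤ t → t ≤ p.length → G.dist (p.getVert s) (p.getVert t) ≤ t - s := by
  intro s t
  induction t with
  | zero => intro hst _; interval_cases s; simp
  | succ t ih =>
    intro hst hlen
    rcases Nat.eq_or_lt_of_le hst with h | h
    · simp [h]
    · have hst' : s ≤ t := by omega
      have h1 : G.dist (p.getVert t) (p.getVert (t+1)) ≤ 1 := by
        have := p.adj_getVert_succ (by omega : t < p.length)
        exact le_of_eq ((dist_eq_one_iff_adj).2 this)
      calc G.dist (p.getVert s) (p.getVert (t+1))
          ≤ G.dist (p.getVert s) (p.getVert t) + G.dist (p.getVert t) (p.getVert (t+1)) :=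
            hc.dist_triangle
        _ ≤ (t - s) + 1 := add_le_add (ih hst' (by omega)) h1
        _ = t + 1 - s := by omega

lemma aux_geodesic_dist (hc : G.Connected) {x y : V} (p : G.Walk x y)
    (hp : p.length = G.dist x y) {s t : ℕ} (hst : s ≤ t) (ht : t ≤ p.length) :
    G.dist (p.getVert s) (p.getVert t) = t - s := by
  have hle := aux_walk_dist_le hc p s t hst ht
  have h1 : G.dist x (p.getVert s) ≤ s := by
    simpa using aux_walk_dist_le hc p 0 s (Nat.zero_le _) (le_trans hst ht)
  have h2 : G.dist (p.getVert t) y ≤ p.length - t := by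
    simpa [p.getVert_length] using aux_walk_dist_le hc p t p.length ht le_rfl
  have h3 : G.dist x y ≤ G.dist x (p.getVert s) + G.dist (p.getVert s) (p.getVert t)
      + G.dist (p.getVert t) y := by
    calc G.dist x y ≤ G.dist x (p.getVert t) + G.dist (p.getVert t) y := hc.dist_triangle
      _ ≤ _ := by
          have := hc.dist_triangle (u := x) (v := p.getVert s) (w := p.getVert t)
          omega
  omega

lemma aux_exists_vert_dist (hc : G.Connected) (w y : V) {k : ℕ} (hk : k ≤ G.dist w y) :
    ∃ z, G.dist w z = k := by
  obtain ⟨p, hp⟩ := hc.exists_walk_length_eq_dist w y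
  refine ⟨p.getVert k, ?_⟩
  have := aux_geodesic_dist hc p hp (Nat.zero_le k) (by omega)
  simpa using this

lemma aux_card_ge (hc : G.Connected) [DecidableRel G.Adj] (w : V) {x y : V} {d : ℕ}
    (hxy : G.dist x y = d) : G.degree w + d ≤ Fintype.card V + 1 := by
  obtain ⟨p, hp⟩ := hc.exists_walk_length_eq_dist x y
  have hpd : p.length = d := by rw [hp, hxy]
  set A : Finset V := insert w (G.neighborFinset w) with hA
  have hcardA : A.card = G.degree w + 1 := by
    rw [hA, card_insert_of_notMem (by simp), G.card_neighborFinset_eq_degree]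
  have hdistA : ∀ a ∈ A, G.dist w a ≤ 1 := by
    intro a ha
    rw [hA, mem_insert] at ha
    rcases ha with h | h
    · simp [h, SimpleGraph.dist_self]
    · exact le_of_eq ((dist_eq_one_iff_adj).2 (by simpa using h))
  set Z : Finset V := (Finset.range (d+1)).image p.getVert with hZ
  have hginj : ∀ s ∈ Finset.range (d+1), ∀ t ∈ Finset.range (d+1),
      p.getVert s = p.getVert t → s = t := by
    intro s hs t ht hst
    rw [Finset.mem_range] at hs ht
    by_contra hne
    wlog h : s < t generalizing s t
    · exact this t ht s hs hst.symm (Ne.symm hne) (by omega)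
    have := aux_geodesic_dist hc p hp (le_of_lt h) (by omega)
    rw [hst, SimpleGraph.dist_self] at this
    omega
  have hcardZ : Z.card = d + 1 := by
    rw [hZ, Finset.card_image_of_injOn
      (fun s hs t ht => hginj s hs t ht)]
    simp
  set I : Finset ℕ := (Finset.range (d+1)).filter (fun s => p.getVert s ∈ A) with hI
  have hIcard : (A ∩ Z).card ≤ I.card := by
    have hsub : A ∩ Z ⊆ I.image p.getVert := by
      intro a ha
      rw [mem_inter, hZ, mem_image] at ha
      obtain ⟨ha1, s, hs, rfl⟩ := ha
      exact mem_image.2 ⟨s, by rw [hI, mem_filter]; exact ⟨hs, ha1⟩, rfl⟩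
    calc (A ∩ Z).card ≤ (I.image p.getVert).card := card_le_card hsub
      _ ≤ I.card := card_image_le
  have hI3 : I.card ≤ 3 := by
    rcases I.eq_empty_or_nonempty with h | h
    · simp [h]
    · have hmem : ∀ t ∈ I, I.min' h ≤ t ∧ t ≤ I.min' h + 2 := by
        intro t ht
        refine ⟨min'_le _ _ ht, ?_⟩
        have hsI : I.min' h ∈ I := min'_mem _ _
        have hsle : I.min' h ≤ t := min'_le _ _ ht
        have hsI2 := Finset.mem_filter.1 hsI
        have ht2 := Finset.mem_filter.1 ht
        rw [Finset.mem_range] at hsI2 ht2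
        have hd : G.dist (p.getVert (I.min' h)) (p.getVert t) = t - I.min' h :=
          aux_geodesic_dist hc p hp hsle (by omega : t ≤ p.length)
        have h2 : G.dist (p.getVert (I.min' h)) (p.getVert t) ≤ 2 := by
          calc G.dist (p.getVert (I.min' h)) (p.getVert t)
              ≤ G.dist (p.getVert (I.min' h)) w + G.dist w (p.getVert t) := hc.dist_triangle
            _ ≤ 1 + 1 := add_le_add (by rw [SimpleGraph.dist_comm]; exact hdistA _ hsI2.2)
                (hdistA _ ht2.2)
            _ = 2 := rfl
        omega
      have hsub2 : I ⊆ Finset.Icc (I.min' h) (I.min' h + 2) := by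
        intro t ht; rw [Finset.mem_Icc]; exact hmem t ht
      calc I.card ≤ (Finset.Icc (I.min' h) (I.min' h + 2)).card := card_le_card hsub2
        _ = 3 := by rw [Nat.card_Icc]; omega
  have hiu := card_union_add_card_inter A Z
  have hle : (A ∪ Z).card ≤ Fintype.card V := card_le_univ _
  omega

lemma aux_S_mem_iff [DecidableRel G.Adj] (w j : V) :
    j ∈ Finset.univ \ insert w (G.neighborFinset w) ↔ ¬ j = w ∧ ¬ G.Adj w j := by
  simp [Finset.mem_sdiff, Finset.mem_insert, SimpleGraph.mem_neighborFinset, not_or]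

lemma aux_S_dist_ge_two [DecidableRel G.Adj] (hc : G.Connected) (w j : V)
    (hj : j ∈ Finset.univ \ insert w (G.neighborFinset w)) : 2 ≤ G.dist w j := by
  obtain ⟨h1, h2⟩ := (aux_S_mem_iff w j).1 hj
  have hpos : 0 < G.dist w j := hc.pos_dist_of_ne (fun h => h1 h.symm)
  have hne1 : G.dist w j ≠ 1 := fun h => h2 (dist_eq_one_iff_adj.1 h)
  omega

lemma aux_S_card [DecidableRel G.Adj] (w : V) :
    (Finset.univ \ insert w (G.neighborFinset w)).card
      = Fintype.card V - (G.degree w + 1) := by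
  rw [Finset.card_sdiff_of_subset (Finset.subset_univ _), Finset.card_univ,
    Finset.card_insert_of_notMem (by simp), G.card_neighborFinset_eq_degree]

lemma aux_erase_eq_union [DecidableRel G.Adj] (w : V) :
    Finset.univ.erase w
      = G.neighborFinset w ∪ (Finset.univ \ insert w (G.neighborFinset w)) := by
  ext j
  rw [Finset.mem_union, aux_S_mem_iff, Finset.mem_erase]
  simp only [SimpleGraph.mem_neighborFinset, Finset.mem_univ, and_true]
  constructor
  · intro hj
    by_cases ha : G.Adj w j
    · exact Or.inl ha
    · exact Or.inr ⟨hj, ha⟩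
  · rintro (h | h)
    · exact (G.ne_of_adj h).symm
    · exact h.1

lemma aux_transmission_identity [DecidableRel G.Adj] (hc : G.Connected) (w : V) {d : ℕ}
    (hwle : ∀ j, G.dist w j ≤ d) :
    (Fintype.card V - 1) * d = (∑ j, G.dist w j) + G.degree w * (d - 1) +
      ∑ i ∈ Finset.Ico 2 d,
        ((Finset.univ \ insert w (G.neighborFinset w)).filter
          (fun j => G.dist w j ≤ i)).card := by
  classical
  set S := Finset.univ \ insert w (G.neighborFinset w) with hS
  have hdisj : Disjoint (G.neighborFinset w) S :=
    Finset.disjoint_left.2 (fun a ha hs => ((aux_S_mem_iff w a).1 hs).2 (by simpa using ha))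
  have h0 : ∑ j ∈ Finset.univ.erase w, d = (Fintype.card V - 1) * d := by
    rw [Finset.sum_const, Finset.card_erase_of_mem (Finset.mem_univ w), Finset.card_univ,
      smul_eq_mul]
  have h1 : ∀ j ∈ Finset.univ.erase w, d = G.dist w j + (d - G.dist w j) := by
    intro j _; have := hwle j; omega
  have h2 : ∑ j ∈ Finset.univ.erase w, d
      = (∑ j ∈ Finset.univ.erase w, G.dist w j)
        + ∑ j ∈ Finset.univ.erase w, (d - G.dist w j) := by
    rw [← Finset.sum_add_distrib]; exact Finset.sum_congr rfl h1
  have h3 : ∑ j ∈ Finset.univ.erase w, G.dist w j = ∑ j, G.dist w j :=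
    Finset.sum_erase _ (by simp)
  have h4 : ∑ j ∈ Finset.univ.erase w, (d - G.dist w j)
      = (∑ j ∈ G.neighborFinset w, (d - G.dist w j)) + ∑ j ∈ S, (d - G.dist w j) := by
    rw [aux_erase_eq_union (G := G) w, Finset.sum_union hdisj]
  have h5 : ∑ j ∈ G.neighborFinset w, (d - G.dist w j) = G.degree w * (d - 1) := by
    rw [Finset.sum_congr rfl (fun j hj => ?_), Finset.sum_const,
      G.card_neighborFinset_eq_degree, smul_eq_mul]
    rw [dist_eq_one_iff_adj.2 (by simpa using hj)]
  have h6 : ∀ j ∈ S, (d - G.dist w j)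
      = ((Finset.Ico 2 d).filter (fun i => G.dist w j ≤ i)).card := by
    intro j hj
    have ht2 := aux_S_dist_ge_two hc w j hj
    have htd := hwle j
    have : (Finset.Ico 2 d).filter (fun i => G.dist w j ≤ i)
        = Finset.Ico (G.dist w j) d := by
      ext i; simp only [Finset.mem_filter, Finset.mem_Ico]; omega
    rw [this, Nat.card_Ico]
  have h7 : ∑ j ∈ S, (d - G.dist w j)
      = ∑ i ∈ Finset.Ico 2 d, (S.filter (fun j => G.dist w j ≤ i)).card := by
    rw [Finset.sum_congr rfl h6]
    simp only [Finset.card_filter]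
    exact Finset.sum_comm
  omega

lemma aux_c_lower_bound [DecidableRel G.Adj] (hc : G.Connected) {d : ℕ}
    (hdle : ∀ x y : V, G.dist x y ≤ d) {x y : V} (hxy : G.dist x y = d) (w : V)
    {i : ℕ} (hi : i ∈ Finset.Ico 2 d) :
    i - 1 ≤ ((Finset.univ \ insert w (G.neighborFinset w)).filter
      (fun j => G.dist w j ≤ i)).card := by
  rw [Finset.mem_Ico] at hi
  by_cases hcase : ∃ j, i ≤ G.dist w j
  · obtain ⟨j, hj⟩ := hcase
    set f : ℕ → V := fun k =>
      if h : k ≤ G.dist w j then Classical.choose (aux_exists_vert_dist hc w j h) else w with hf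
    have hfd : ∀ k ∈ Finset.Icc 2 i, G.dist w (f k) = k := by
      intro k hk
      rw [Finset.mem_Icc] at hk
      rw [hf]; dsimp only
      rw [dif_pos (le_trans hk.2 hj)]
      exact Classical.choose_spec (aux_exists_vert_dist hc w j (le_trans hk.2 hj))
    have hcard : (Finset.Icc 2 i).card = i - 1 := by rw [Nat.card_Icc]; omega
    calc i - 1 = (Finset.Icc 2 i).card := hcard.symm
      _ ≤ _ := by
        refine Finset.card_le_card_of_injOn f (fun k hk => ?_) (fun k hk l hl hkl => ?_)
        · have hd := hfd k hk
          rw [Finset.mem_coe, Finset.mem_Icc] at hk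
          rw [Finset.mem_coe, Finset.mem_filter, aux_S_mem_iff]
          refine ⟨⟨fun h => ?_, fun h => ?_⟩, by omega⟩
          · rw [h, SimpleGraph.dist_self] at hd; omega
          · rw [dist_eq_one_iff_adj.2 h] at hd; omega
        · have h1 := hfd k (Finset.mem_coe.1 hk)
          have h2 := hfd l (Finset.mem_coe.1 hl)
          rw [hkl] at h1; omega
  · push_neg at hcase
    have hfull : (Finset.univ \ insert w (G.neighborFinset w)).filter
        (fun j => G.dist w j ≤ i) = Finset.univ \ insert w (G.neighborFinset w) := by
      apply Finset.filter_true_of_mem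
      intro j _; exact le_of_lt (hcase j)
    rw [hfull, aux_S_card]
    have hcard := aux_card_ge (G := G) hc w hxy
    omega

lemma aux_Ksum_eq (d : ℕ) : 2 * ∑ i ∈ Finset.Ico 2 d, (i - 1) = (d-1)*(d-2) := by
  induction d with
  | zero => simp
  | succ d ih =>
    rcases Nat.lt_or_ge d 2 with h | h
    · interval_cases d <;> simp
    · obtain ⟨e, rfl⟩ : ∃ e, d = e + 2 := ⟨d - 2, by omega⟩
      have c1 : e + 2 - 1 = e + 1 := by omega
      have c2 : e + 2 - 2 = e := by omega
      have c3 : e + 2 + 1 - 1 = e + 2 := by omega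
      have c4 : e + 2 + 1 - 2 = e + 1 := by omega
      rw [Finset.sum_Ico_succ_top (by omega), c1, c3, c4]
      rw [c1, c2] at ih
      zify at ih ⊢
      linear_combination ih

lemma aux_Breal_cast {d n' δ Ks : ℕ} (hd : 1 ≤ d) (hn : 1 ≤ n') (hK : 2 * Ks = (d-1)*(d-2)) :
    (d:ℝ)*n' - (d:ℝ)*((d:ℝ)-1)/2 - 1 - (δ:ℝ)*((d:ℝ)-1)
      = (((n' - 1) * d : ℕ) : ℝ) - ((δ * (d - 1) : ℕ) : ℝ) - (Ks : ℝ) := by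
  have h1 : (((n' - 1) * d : ℕ) : ℝ) = ((n':ℝ) - 1) * d := by
    push_cast [Nat.cast_sub hn]; ring
  have h2 : ((δ * (d-1) : ℕ) : ℝ) = (δ:ℝ) * ((d:ℝ) - 1) := by
    push_cast [Nat.cast_sub hd]; ring
  have h3 : (Ks:ℝ) = ((d:ℝ)-1)*((d:ℝ)-2)/2 := by
    rcases Nat.lt_or_ge d 2 with h | h
    · have hd1 : d = 1 := by omega
      subst hd1
      have : Ks = 0 := by omega
      simp [this]
    · have hcast : ((2 * Ks : ℕ) : ℝ) = (((d-1)*(d-2) : ℕ) : ℝ) := by rw [hK]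
      push_cast [Nat.cast_sub (by omega : 1 ≤ d), Nat.cast_sub (by omega : 2 ≤ d)] at hcast
      linarith
  rw [h1, h2, h3]; ring

lemma aux_Breal_anti {d : ℕ} (hd : 1 ≤ d) {a b : ℕ} (hab : a ≤ b) (n' : ℝ) :
    (d:ℝ)*n' - (d:ℝ)*((d:ℝ)-1)/2 - 1 - (b:ℝ)*((d:ℝ)-1)
      ≤ (d:ℝ)*n' - (d:ℝ)*((d:ℝ)-1)/2 - 1 - (a:ℝ)*((d:ℝ)-1) := by
  have h1 : (0:ℝ) ≤ (d:ℝ) - 1 := by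
    have : (1:ℝ) ≤ d := by exact_mod_cast hd
    linarith
  have h2 : (a:ℝ) ≤ b := by exact_mod_cast hab
  nlinarith

lemma aux_Breal_inj {d : ℕ} (hd : 2 ≤ d) {a b : ℕ} (n' : ℝ)
    (h : (d:ℝ)*n' - (d:ℝ)*((d:ℝ)-1)/2 - 1 - (a:ℝ)*((d:ℝ)-1)
      = (d:ℝ)*n' - (d:ℝ)*((d:ℝ)-1)/2 - 1 - (b:ℝ)*((d:ℝ)-1)) : a = b := by
  have h1 : (0:ℝ) < (d:ℝ) - 1 := by
    have : (2:ℝ) ≤ d := by exact_mod_cast hd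
    linarith
  have : (a:ℝ) = b := by
    have := mul_right_cancel₀ (ne_of_gt h1) (by linarith : (a:ℝ)*((d:ℝ)-1) = (b:ℝ)*((d:ℝ)-1))
    exact this
  exact_mod_cast this

lemma aux_master [DecidableRel G.Adj] (hc : G.Connected) {d : ℕ}
    (hdle : ∀ x y : V, G.dist x y ≤ d) {x y : V} (hxy : G.dist x y = d) (hd : 1 ≤ d) (w : V) :
    (∑ j, (G.dist w j : ℝ)) ≤ (d:ℝ)*(Fintype.card V) - (d:ℝ)*((d:ℝ)-1)/2 - 1
        - (G.degree w : ℝ)*((d:ℝ)-1)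
    ∧ ((∑ j, (G.dist w j : ℝ)) = (d:ℝ)*(Fintype.card V) - (d:ℝ)*((d:ℝ)-1)/2 - 1
          - (G.degree w : ℝ)*((d:ℝ)-1)
        → ∀ i ∈ Finset.Ico 2 d, ((Finset.univ \ insert w (G.neighborFinset w)).filter
            (fun j => G.dist w j ≤ i)).card = i - 1) := by
  have hn : 1 ≤ Fintype.card V := Fintype.card_pos_iff.2 ⟨w⟩
  have hK := aux_Ksum_eq d
  have hid := aux_transmission_identity hc w (fun j => hdle w j)
  have hcb : ∀ i ∈ Finset.Ico 2 d, i - 1 ≤ ((Finset.univ \ insert w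
      (G.neighborFinset w)).filter (fun j => G.dist w j ≤ i)).card :=
    fun i hi => aux_c_lower_bound hc hdle hxy w hi
  have hSig : (∑ i ∈ Finset.Ico 2 d, (i-1)) ≤ ∑ i ∈ Finset.Ico 2 d,
      ((Finset.univ \ insert w (G.neighborFinset w)).filter
        (fun j => G.dist w j ≤ i)).card := Finset.sum_le_sum hcb
  have hNat : (∑ j, G.dist w j) + G.degree w * (d-1) + (∑ i ∈ Finset.Ico 2 d, (i-1))
      ≤ (Fintype.card V - 1) * d := by omega
  have hcast : (∑ j, (G.dist w j : ℝ)) = ((∑ j, G.dist w j : ℕ) : ℝ) := by push_cast; rfl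
  have hBcast := aux_Breal_cast (δ := G.degree w) (Ks := ∑ i ∈ Finset.Ico 2 d, (i-1)) hd hn hK
  constructor
  · rw [hcast, hBcast]
    have h2 : ((∑ j, G.dist w j : ℕ) : ℝ) + ((G.degree w * (d-1) : ℕ) : ℝ)
        + ((∑ i ∈ Finset.Ico 2 d, (i-1) : ℕ) : ℝ) ≤ (((Fintype.card V - 1)*d : ℕ) : ℝ) := by
      exact_mod_cast hNat
    linarith
  · intro heq
    rw [hcast, hBcast] at heq
    have hNatEq : (∑ j, G.dist w j) + G.degree w * (d-1) + (∑ i ∈ Finset.Ico 2 d, (i-1))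
        = (Fintype.card V - 1) * d := by
      have h2 : ((∑ j, G.dist w j : ℕ) : ℝ) + ((G.degree w * (d-1) : ℕ) : ℝ)
          + ((∑ i ∈ Finset.Ico 2 d, (i-1) : ℕ) : ℝ) = (((Fintype.card V - 1)*d : ℕ) : ℝ) := by
        linarith
      exact_mod_cast h2
    have hSigEq : (∑ i ∈ Finset.Ico 2 d, (i-1)) = ∑ i ∈ Finset.Ico 2 d,
        ((Finset.univ \ insert w (G.neighborFinset w)).filter
          (fun j => G.dist w j ≤ i)).card := by omega
    have hpt := (Finset.sum_eq_sum_iff_of_le hcb).1 hSigEq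
    intro i hi
    exact (hpt i hi).symm

/-! ### Spectral lemmas -/

lemma aux_rho_attained [Nonempty V] (G : SimpleGraph V) :
    ∃ i₀, distSpectralRadius G = (distMatrix_isHermitian G).eigenvalues i₀ ∧
      ∀ i, (distMatrix_isHermitian G).eigenvalues i
        ≤ (distMatrix_isHermitian G).eigenvalues i₀ := by
  obtain ⟨i₀, -, hmax⟩ := Finset.exists_max_image Finset.univ
    (distMatrix_isHermitian G).eigenvalues ⟨Classical.arbitrary V, Finset.mem_univ _⟩
  refine ⟨i₀, le_antisymm (ciSup_le fun i => hmax i (Finset.mem_univ i))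
    (le_ciSup (Set.Finite.bddAbove (Set.finite_range _)) i₀), fun i => hmax i (Finset.mem_univ i)⟩

lemma aux_eigen_le_rho [Nonempty V] (G : SimpleGraph V) (i : V) :
    (distMatrix_isHermitian G).eigenvalues i ≤ distSpectralRadius G :=
  le_ciSup (Set.Finite.bddAbove (Set.finite_range _)) i

lemma aux_eigenBasis_ne_zero (G : SimpleGraph V) (i : V) :
    (⇑((distMatrix_isHermitian G).eigenvectorBasis i) : V → ℝ) ≠ 0 := by
  intro h
  apply (distMatrix_isHermitian G).eigenvectorBasis.orthonormal.ne_zero i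
  ext j
  exact congrFun h j

lemma aux_trace_eq_sum_eigen (G : SimpleGraph V) :
    ∑ i, (distMatrix_isHermitian G).eigenvalues i = 0 := by
  have hM := distMatrix_isHermitian G
  have hspec := hM.spectral_theorem
  have h1 : (distMatrix G).trace = Matrix.trace (Matrix.diagonal
      (RCLike.ofReal ∘ hM.eigenvalues)) := by
    conv_lhs => rw [hspec, Unitary.conjStarAlgAut_apply]
    rw [Matrix.trace_mul_cycle]
    rw [show (star (hM.eigenvectorUnitary : Matrix V V ℝ)) * (hM.eigenvectorUnitary : Matrix V V ℝ)
      = 1 from Matrix.mem_unitaryGroup_iff'.1 (hM.eigenvectorUnitary).2, one_mul]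
  have h2 : (distMatrix G).trace = 0 := by
    simp [Matrix.trace, distMatrix, Matrix.diag, SimpleGraph.dist_self]
  rw [h2] at h1
  rw [Matrix.trace_diagonal] at h1
  simpa [RCLike.ofReal_real_eq_id] using h1.symm

lemma aux_matrix_ne_zero (hc : G.Connected) {u v : V} (huv : u ≠ v) : distMatrix G ≠ 0 := by
  intro h
  have h1 : (distMatrix G) u v = 0 := by rw [h]; rfl
  have h2 : 0 < G.dist u v := hc.pos_dist_of_ne huv
  rw [distMatrix] at h1
  simp only [Nat.cast_eq_zero] at h1
  omega

lemma aux_rho_pos (hc : G.Connected) {u v : V} (huv : u ≠ v) : 0 < distSpectralRadius G := by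
  have : Nonempty V := ⟨u⟩
  by_contra hneg
  push_neg at hneg
  have hM := distMatrix_isHermitian G
  have hall : ∀ i, hM.eigenvalues i ≤ 0 := fun i => le_trans (aux_eigen_le_rho G i) hneg
  have hz : ∀ i ∈ Finset.univ, hM.eigenvalues i = 0 :=
    (Finset.sum_eq_zero_iff_of_nonpos (fun i _ => hall i)).1 (aux_trace_eq_sum_eigen G)
  have hev : hM.eigenvalues = fun _ => 0 := funext fun i => hz i (Finset.mem_univ i)
  have hspec := hM.spectral_theorem
  rw [hev] at hspec
  simp only [RCLike.ofReal_real_eq_id] at hspec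
  rw [show Matrix.diagonal ((id : ℝ → ℝ) ∘ fun _ => (0:ℝ)) = 0 by
    ext i j; simp [Matrix.diagonal]] at hspec
  simp only [Matrix.mul_zero, Matrix.zero_mul, map_zero] at hspec
  exact aux_matrix_ne_zero hc huv hspec

lemma aux_eigen_of_eigenvector {R : ℝ} {z : V → ℝ} (hz : z ≠ 0)
    (h : distMatrix G *ᵥ z = R • z) : ∃ i, (distMatrix_isHermitian G).eigenvalues i = R := by
  by_contra hno
  push_neg at hno
  have hM := distMatrix_isHermitian G
  set U : Matrix V V ℝ := (hM.eigenvectorUnitary : Matrix V V ℝ) with hU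
  have hU1 : U * star U = 1 := Matrix.mem_unitaryGroup_iff.1 (hM.eigenvectorUnitary).2
  have hU2 : star U * U = 1 := Matrix.mem_unitaryGroup_iff'.1 (hM.eigenvectorUnitary).2
  set N : Matrix V V ℝ := distMatrix G - R • (1 : Matrix V V ℝ) with hN
  have hNz : N *ᵥ z = 0 := by
    rw [hN, Matrix.sub_mulVec, h, Matrix.smul_mulVec, Matrix.one_mulVec, sub_self]
  have hdet : N.det = 0 := Matrix.exists_mulVec_eq_zero_iff.1 ⟨z, hz, hNz⟩
  have hfac : N = U * (Matrix.diagonal (fun i => hM.eigenvalues i - R)) * star U := by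
    have hsp : distMatrix G = U * Matrix.diagonal (RCLike.ofReal ∘ hM.eigenvalues) * star U :=
      hM.spectral_theorem
    rw [hN]
    conv_lhs => rw [hsp]
    have hR1 : R • (1 : Matrix V V ℝ) = U * (R • (1 : Matrix V V ℝ)) * star U := by
      rw [Matrix.mul_smul, Matrix.mul_one, Matrix.smul_mul, hU1]
    rw [hR1, ← Matrix.sub_mul, ← Matrix.mul_sub]
    congr 1
    congr 1
    ext i j
    by_cases hij : i = j <;> simp [Matrix.diagonal, hij, Matrix.one_apply]
  have hdet2 : N.det = ∏ i, (hM.eigenvalues i - R) := by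
    rw [hfac, Matrix.det_mul, Matrix.det_mul, mul_comm, ← mul_assoc,
      ← Matrix.det_mul, hU2, Matrix.det_one, one_mul, Matrix.det_diagonal]
  rw [hdet2] at hdet
  obtain ⟨i, -, hi⟩ := Finset.prod_eq_zero_iff.1 hdet
  exact hno i (by linarith [sub_eq_zero.1 hi])

lemma aux_row_abs {lam : ℝ} {x : V → ℝ} (heig : distMatrix G *ᵥ x = lam • x) (w : V) :
    lam * |x w| ≤ ∑ j, (G.dist w j : ℝ) * |x j| := by
  have h1 : ∑ j, (G.dist w j : ℝ) * x j = lam * x w := by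
    have := congrFun heig w
    simpa [Matrix.mulVec, dotProduct, distMatrix] using this
  calc lam * |x w| ≤ |lam| * |x w| := mul_le_mul_of_nonneg_right (le_abs_self lam) (abs_nonneg _)
    _ = |lam * x w| := (abs_mul lam (x w)).symm
    _ = |∑ j, (G.dist w j : ℝ) * x j| := by rw [h1]
    _ ≤ ∑ j, |(G.dist w j : ℝ) * x j| := Finset.abs_sum_le_sum_abs _ _
    _ = ∑ j, (G.dist w j : ℝ) * |x j| := by
        refine Finset.sum_congr rfl fun j _ => ?_
        rw [abs_mul, abs_of_nonneg (by positivity : (0:ℝ) ≤ (G.dist w j : ℝ))]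

lemma aux_sum_bound {x : V → ℝ} (w : V) (c : ℝ) (hcb : ∀ j, j ≠ w → |x j| ≤ c) :
    ∑ j, (G.dist w j : ℝ) * |x j| ≤ (∑ j, (G.dist w j : ℝ)) * c := by
  rw [Finset.sum_mul]
  refine Finset.sum_le_sum fun j _ => ?_
  by_cases hj : j = w
  · subst hj; simp [SimpleGraph.dist_self]
  · exact mul_le_mul_of_nonneg_left (hcb j hj) (by positivity)

lemma aux_sum_eq_forces (hc : G.Connected) {x : V → ℝ} (w : V) (c : ℝ)
    (hcb : ∀ j, j ≠ w → |x j| ≤ c)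
    (heq : ∑ j, (G.dist w j : ℝ) * |x j| = (∑ j, (G.dist w j : ℝ)) * c) :
    ∀ j, j ≠ w → |x j| = c := by
  have h0 : ∑ j, (G.dist w j : ℝ) * (c - |x j|) = 0 := by
    have h' : ∑ j, ((G.dist w j : ℝ) * c - (G.dist w j : ℝ) * |x j|) = 0 := by
      rw [Finset.sum_sub_distrib, ← Finset.sum_mul, heq, sub_self]
    rw [← h']
    exact Finset.sum_congr rfl fun j _ => (mul_sub _ _ _)
  have hnn : ∀ j ∈ Finset.univ, 0 ≤ (G.dist w j : ℝ) * (c - |x j|) := by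
    intro j _
    by_cases hj : j = w
    · subst hj; simp [SimpleGraph.dist_self]
    · exact mul_nonneg (by positivity) (by linarith [hcb j hj])
  have hz := (Finset.sum_eq_zero_iff_of_nonneg hnn).1 h0
  intro j hj
  have hdj : (0:ℝ) < (G.dist w j : ℝ) := by
    exact_mod_cast hc.pos_dist_of_ne (Ne.symm hj)
  have hj0 := hz j (Finset.mem_univ j)
  have hzero : c - |x j| = 0 := by
    rcases mul_eq_zero.1 hj0 with h | h
    · exact absurd h (ne_of_gt hdj)
    · exact h
  linarith

lemma aux_key_bound (hc : G.Connected) (hcard : 2 ≤ Fintype.card V)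
    {lam : ℝ} {x : V → ℝ} (hx : x ≠ 0) (heig : distMatrix G *ᵥ x = lam • x) :
    ∃ p q : V, p ≠ q ∧
      (0 < lam → lam^2 ≤ (∑ j, (G.dist p j : ℝ)) * (∑ j, (G.dist q j : ℝ))) ∧
      (0 < lam → 3 ≤ Fintype.card V →
        lam^2 = (∑ j, (G.dist p j : ℝ)) * (∑ j, (G.dist q j : ℝ)) →
        ∃ c : ℝ, 0 < c ∧ ∀ j, |x j| = c) := by
  have : Nonempty V := Fintype.card_pos_iff.1 (by omega)
  obtain ⟨p, -, hp⟩ := Finset.exists_max_image Finset.univ (fun j => |x j|)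
    ⟨Classical.arbitrary V, Finset.mem_univ _⟩
  have herase : (Finset.univ.erase p).Nonempty := by
    rw [← Finset.card_pos, Finset.card_erase_of_mem (Finset.mem_univ p), Finset.card_univ]
    omega
  obtain ⟨q, hqmem, hq⟩ := Finset.exists_max_image (Finset.univ.erase p) (fun j => |x j|) herase
  have hqp : q ≠ p := (Finset.mem_erase.1 hqmem).1
  have hxp : ∀ j, |x j| ≤ |x p| := fun j => hp j (Finset.mem_univ j)
  have hxq : ∀ j, j ≠ p → |x j| ≤ |x q| := fun j hj =>
    hq j (Finset.mem_erase.2 ⟨hj, Finset.mem_univ j⟩)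
  have hppos : 0 < |x p| := by
    obtain ⟨j, hj⟩ := Function.ne_iff.1 hx
    calc 0 < |x j| := abs_pos.2 hj
      _ ≤ |x p| := hxp j
  set Rp := ∑ j, (G.dist p j : ℝ) with hRp
  set Rq := ∑ j, (G.dist q j : ℝ) with hRq
  have hRpnn : 0 ≤ Rp := Finset.sum_nonneg fun j _ => by positivity
  have hRqnn : 0 ≤ Rq := Finset.sum_nonneg fun j _ => by positivity
  have h1 : lam * |x p| ≤ ∑ j, (G.dist p j : ℝ) * |x j| := aux_row_abs heig p
  have h2 : ∑ j, (G.dist p j : ℝ) * |x j| ≤ Rp * |x q| := aux_sum_bound p (|x q|) hxq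
  have h3 : lam * |x q| ≤ ∑ j, (G.dist q j : ℝ) * |x j| := aux_row_abs heig q
  have h4 : ∑ j, (G.dist q j : ℝ) * |x j| ≤ Rq * |x p| :=
    aux_sum_bound q (|x p|) (fun j _ => hxp j)
  have hqpos : 0 < lam → 0 < |x q| := by
    intro hlam
    rcases lt_or_eq_of_le (abs_nonneg (x q)) with h | h
    · exact h
    · exfalso
      have hzero : ∀ j, j ≠ p → x j = 0 := by
        intro j hj
        have hle := hxq j hj
        rw [← h] at hle
        exact abs_eq_zero.1 (le_antisymm hle (abs_nonneg _))
      have hsum : ∑ j, (G.dist p j : ℝ) * x j = 0 := by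
        refine Finset.sum_eq_zero fun j _ => ?_
        by_cases hj : j = p
        · subst hj; simp [SimpleGraph.dist_self]
        · rw [hzero j hj, mul_zero]
      have heigp : ∑ j, (G.dist p j : ℝ) * x j = lam * x p := by
        have := congrFun heig p
        simpa [Matrix.mulVec, dotProduct, distMatrix] using this
      rw [hsum] at heigp
      have hxpne : x p ≠ 0 := abs_pos.1 hppos
      have : lam = 0 := by
        rcases mul_eq_zero.1 heigp.symm with h' | h'
        · exact h'
        · exact absurd h' hxpne
      linarith
  refine ⟨p, q, hqp.symm, ?_, ?_⟩
  · intro hlam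
    have hq0 := hqpos hlam
    have hA : lam * |x p| ≤ Rp * |x q| := le_trans h1 h2
    have hB : lam * |x q| ≤ Rq * |x p| := le_trans h3 h4
    have hprod : (lam * |x p|) * (lam * |x q|) ≤ (Rp * |x q|) * (Rq * |x p|) :=
      mul_le_mul hA hB (by positivity) (by positivity)
    nlinarith [mul_pos hppos hq0]
  · intro hlam hcard3 heq
    have hq0 := hqpos hlam
    have hA : lam * |x p| ≤ Rp * |x q| := le_trans h1 h2
    have hB : lam * |x q| ≤ Rq * |x p| := le_trans h3 h4
    have hprodeq : (lam * |x p|) * (lam * |x q|) = (Rp * |x q|) * (Rq * |x p|) := by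
      have hh : lam^2 * (|x p| * |x q|) = (Rp * Rq) * (|x p| * |x q|) := by rw [heq]
      ring_nf
      ring_nf at hh
      linarith
    have haA : lam * |x p| = Rp * |x q| := by nlinarith [mul_pos hlam hq0, mul_pos hlam hppos]
    have hbB : lam * |x q| = Rq * |x p| := by nlinarith [mul_pos hlam hq0, mul_pos hlam hppos]
    have hmid : ∑ j, (G.dist p j : ℝ) * |x j| = Rp * |x q| :=
      le_antisymm h2 (by rw [← haA]; exact h1)
    have hforce1 : ∀ j, j ≠ p → |x j| = |x q| := aux_sum_eq_forces hc p (|x q|) hxq hmid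
    have hmid2 : ∑ j, (G.dist q j : ℝ) * |x j| = Rq * |x p| :=
      le_antisymm h4 (by rw [← hbB]; exact h3)
    have hforce2 : ∀ j, j ≠ q → |x j| = |x p| := aux_sum_eq_forces hc q (|x p|)
      (fun j _ => hxp j) hmid2
    obtain ⟨r, hrmem⟩ : ((Finset.univ.erase p).erase q).Nonempty := by
      rw [← Finset.card_pos, Finset.card_erase_of_mem
        (Finset.mem_erase.2 ⟨hqp, Finset.mem_univ q⟩),
        Finset.card_erase_of_mem (Finset.mem_univ p), Finset.card_univ]
      omega
    have hrq : r ≠ q := (Finset.mem_erase.1 hrmem).1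
    have hrp : r ≠ p := (Finset.mem_erase.1 (Finset.mem_erase.1 hrmem).2).1
    have hpq_eq : |x p| = |x q| := by rw [← hforce2 r hrq, hforce1 r hrp]
    refine ⟨|x q|, hq0, fun j => ?_⟩
    by_cases hj : j = p
    · rw [hj, hpq_eq]
    · exact hforce1 j hj

lemma aux_rho_le_rowsum {lam : ℝ} {x : V → ℝ} (heig : distMatrix G *ᵥ x = lam • x)
    {c : ℝ} (hc0 : 0 < c) (hall : ∀ j, |x j| = c) (w : V) :
    lam ≤ ∑ j, (G.dist w j : ℝ) := by
  have h1 := aux_row_abs heig w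
  rw [hall w] at h1
  have h2 : ∑ j, (G.dist w j : ℝ) * |x j| = (∑ j, (G.dist w j : ℝ)) * c := by
    rw [Finset.sum_mul]
    refine Finset.sum_congr rfl fun j _ => ?_
    rw [hall j]
  rw [h2] at h1
  exact le_of_mul_le_mul_right h1 hc0

end Aux

/-- **Theorem 2.** For a connected graph `G` on `n` vertices with minimum degree `δ₁`,
second minimum degree `δ₂` and diameter `d`,
`ρ(G) ≤ √([dn - d(d-1)/2 - 1 - δ₁(d-1)]·[dn - d(d-1)/2 - 1 - δ₂(d-1)])`,
with equality iff `G` is a regular graph of diameter at most 2. -/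
theorem distSpectralRadius_upper_bound_degrees {n : ℕ} (G : SimpleGraph (Fin n))
    [DecidableRel G.Adj] (hconn : G.Connected) (δ₁ δ₂ d : ℕ) (u v : Fin n) (huv : u ≠ v)
    (hu : G.degree u = δ₁) (hv : G.degree v = δ₂)
    (hmin : ∀ w, δ₁ ≤ G.degree w) (hmin2 : ∀ w, w ≠ u → δ₂ ≤ G.degree w)
    (hdle : ∀ x y : Fin n, G.dist x y ≤ d) (hdeq : ∃ x y : Fin n, G.dist x y = d) :
    distSpectralRadius G ≤
      Real.sqrt
        (((d : ℝ) * n - (d : ℝ) * ((d : ℝ) - 1) / 2 - 1 - (δ₁ : ℝ) * ((d : ℝ) - 1)) *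
          ((d : ℝ) * n - (d : ℝ) * ((d : ℝ) - 1) / 2 - 1 - (δ₂ : ℝ) * ((d : ℝ) - 1))) ∧
    (distSpectralRadius G =
        Real.sqrt
          (((d : ℝ) * n - (d : ℝ) * ((d : ℝ) - 1) / 2 - 1 - (δ₁ : ℝ) * ((d : ℝ) - 1)) *
            ((d : ℝ) * n - (d : ℝ) * ((d : ℝ) - 1) / 2 - 1 - (δ₂ : ℝ) * ((d : ℝ) - 1))) ↔
      (∃ r, G.IsRegularOfDegree r) ∧ ∀ x y : Fin n, G.dist x y ≤ 2) := by
  classical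
  have hM := distMatrix_isHermitian G
  have hnonempty : Nonempty (Fin n) := ⟨u⟩
  have hn1 : 1 ≤ n := by
    have := Fintype.card_pos (α := Fin n)
    simp at this; omega
  have hntriv : Nontrivial (Fin n) := ⟨⟨u, v, huv⟩⟩
  have hn2 : 2 ≤ n := by
    have := Fintype.one_lt_card (α := Fin n)
    simp at this; omega
  have hcard2 : 2 ≤ Fintype.card (Fin n) := by simpa using hn2
  have hd1 : 1 ≤ d := le_trans (hconn.pos_dist_of_ne huv) (hdle u v)
  obtain ⟨x₀, y₀, hxy⟩ := hdeq
  set T : Fin n → ℝ := fun w => ∑ j, (G.dist w j : ℝ) with hT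
  set Bfun : ℕ → ℝ := fun δ =>
    (d:ℝ)*(n:ℝ) - (d:ℝ)*((d:ℝ)-1)/2 - 1 - (δ:ℝ)*((d:ℝ)-1) with hBfun
  have hmaster : ∀ w, T w ≤ Bfun (G.degree w) ∧ (T w = Bfun (G.degree w) →
      ∀ i ∈ Finset.Ico 2 d, ((Finset.univ \ insert w (G.neighborFinset w)).filter
        (fun j => G.dist w j ≤ i)).card = i - 1) := by
    intro w
    have h := aux_master hconn hdle hxy hd1 w
    rw [Fintype.card_fin] at h
    exact h
  have hTnn : ∀ w, 0 ≤ T w := fun w => Finset.sum_nonneg fun j _ => by positivity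
  have hB1 : ∀ w, T w ≤ Bfun δ₁ := by
    intro w
    exact le_trans (hmaster w).1 (aux_Breal_anti hd1 (hmin w) (n:ℝ))
  have hB2 : ∀ w, w ≠ u → T w ≤ Bfun δ₂ := by
    intro w hw
    exact le_trans (hmaster w).1 (aux_Breal_anti hd1 (hmin2 w hw) (n:ℝ))
  have hB2nn : 0 ≤ Bfun δ₂ := le_trans (hTnn v) (hB2 v (Ne.symm huv))
  have hB12 : Bfun δ₂ ≤ Bfun δ₁ := by
    have hδ : δ₁ ≤ δ₂ := by rw [← hv]; exact hmin v
    exact aux_Breal_anti hd1 hδ (n:ℝ)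
  have hB1nn : 0 ≤ Bfun δ₁ := le_trans hB2nn hB12
  have hBprodnn : 0 ≤ Bfun δ₁ * Bfun δ₂ := mul_nonneg hB1nn hB2nn
  have hRpq_le : ∀ p q : Fin n, p ≠ q → T p * T q ≤ Bfun δ₁ * Bfun δ₂ := by
    intro p q hpq
    rcases eq_or_ne p u with rfl | hpu
    · exact mul_le_mul (hB1 p) (hB2 q (fun h => hpq h.symm)) (hTnn q) hB1nn
    · calc T p * T q ≤ Bfun δ₂ * Bfun δ₁ :=
          mul_le_mul (hB2 p hpu) (hB1 q) (hTnn q) hB2nn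
        _ = Bfun δ₁ * Bfun δ₂ := mul_comm _ _
  have hpart1 : distSpectralRadius G ≤ Real.sqrt (Bfun δ₁ * Bfun δ₂) := by
    refine ciSup_le fun i => ?_
    rcases le_or_gt (hM.eigenvalues i) 0 with h | h
    · exact le_trans h (Real.sqrt_nonneg _)
    · obtain ⟨p, q, hpq, hineq, -⟩ :=
        aux_key_bound hconn hcard2 (aux_eigenBasis_ne_zero G i) (hM.mulVec_eigenvectorBasis i)
      have h2 : hM.eigenvalues i ^ 2 ≤ T p * T q := hineq h
      have h3 : hM.eigenvalues i ^ 2 ≤ Bfun δ₁ * Bfun δ₂ := le_trans h2 (hRpq_le p q hpq)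
      calc hM.eigenvalues i = Real.sqrt (hM.eigenvalues i ^ 2) := (Real.sqrt_sq h.le).symm
        _ ≤ _ := Real.sqrt_le_sqrt h3
  refine ⟨hpart1, ?_, ?_⟩
  · -- equality implies regular of diameter ≤ 2
    intro heq
    have hρpos : 0 < distSpectralRadius G := aux_rho_pos hconn huv
    have hρsq : distSpectralRadius G ^ 2 = Bfun δ₁ * Bfun δ₂ := by
      rw [heq, Real.sq_sqrt hBprodnn]
    rcases Nat.lt_or_ge d 2 with hd2 | hd2
    · -- d = 1 : complete graph
      have hadj : ∀ a b : Fin n, a ≠ b → G.Adj a b := by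
        intro a b hab
        have h1 : G.dist a b ≤ d := hdle a b
        have h2 : 0 < G.dist a b := hconn.pos_dist_of_ne hab
        exact dist_eq_one_iff_adj.1 (by omega)
      refine ⟨⟨n - 1, fun w => ?_⟩, fun a b => le_trans (hdle a b) (by omega)⟩
      rw [← G.card_neighborFinset_eq_degree]
      have hNw : G.neighborFinset w = Finset.univ.erase w := by
        ext j
        rw [SimpleGraph.mem_neighborFinset, Finset.mem_erase]
        constructor
        · intro h; exact ⟨(G.ne_of_adj h).symm, Finset.mem_univ j⟩
        · intro h; exact (hadj j w h.1).symm
      rw [hNw, Finset.card_erase_of_mem (Finset.mem_univ w), Finset.card_univ, Fintype.card_fin]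
    · -- d ≥ 2
      have hn3 : 3 ≤ n := by
        obtain ⟨p, hp, hlen⟩ := hconn.exists_path_of_dist x₀ y₀
        have hlt := hp.length_lt
        rw [hlen, hxy, Fintype.card_fin] at hlt
        omega
      obtain ⟨i₀, hρeq, -⟩ := aux_rho_attained G
      have heig := hM.mulVec_eigenvectorBasis i₀
      have hx := aux_eigenBasis_ne_zero G i₀
      obtain ⟨p, q, hpq, hineq, heqcl⟩ := aux_key_bound hconn hcard2 hx heig
      have hlam : 0 < hM.eigenvalues i₀ := by rw [← hρeq]; exact hρpos
      have h2 : hM.eigenvalues i₀ ^ 2 ≤ T p * T q := hineq hlam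
      have hevsq : hM.eigenvalues i₀ ^ 2 = Bfun δ₁ * Bfun δ₂ := by rw [← hρeq]; exact hρsq
      have h4 : hM.eigenvalues i₀ ^ 2 = T p * T q :=
        le_antisymm h2 (by rw [hevsq]; exact hRpq_le p q hpq)
      obtain ⟨c, hc0, hall⟩ := heqcl hlam (by rw [Fintype.card_fin]; omega) h4
      have hρle : ∀ w, distSpectralRadius G ≤ T w := by
        intro w
        rw [hρeq]
        exact aux_rho_le_rowsum heig hc0 hall w
      have hρB2 : distSpectralRadius G ≤ Bfun δ₂ := le_trans (hρle v) (hB2 v (Ne.symm huv))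
      have hB2ρ : Bfun δ₂ = distSpectralRadius G := by nlinarith [hB12, hρsq, hρpos, hρB2]
      have hB1ρ : Bfun δ₁ = distSpectralRadius G := by
        have hh : Bfun δ₁ * distSpectralRadius G
            = distSpectralRadius G * distSpectralRadius G := by
          rw [← hB2ρ] at hρsq ⊢
          nlinarith [hρsq]
        exact mul_right_cancel₀ (ne_of_gt hρpos) hh
      have hTeq : ∀ w, T w = Bfun (G.degree w) := by
        intro w
        rcases eq_or_ne w u with rfl | hwu
        · refine le_antisymm (hmaster w).1 ?_
          have hdu : Bfun (G.degree w) = Bfun δ₁ := by rw [hu]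
          rw [hdu, hB1ρ]
          exact hρle w
        · refine le_antisymm (hmaster w).1 ?_
          calc Bfun (G.degree w) ≤ Bfun δ₂ := aux_Breal_anti hd1 (hmin2 w hwu) (n:ℝ)
            _ = distSpectralRadius G := hB2ρ
            _ ≤ T w := hρle w
      have hdeg : ∀ w, G.degree w = δ₂ := by
        intro w
        rcases eq_or_ne w u with rfl | hwu
        · have hbb : Bfun δ₁ = Bfun δ₂ := by rw [hB1ρ, hB2ρ]
          rw [hu]
          exact aux_Breal_inj hd2 (n:ℝ) hbb
        · have h5 : Bfun (G.degree w) ≤ Bfun δ₂ := aux_Breal_anti hd1 (hmin2 w hwu) (n:ℝ)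
          have h6 : Bfun δ₂ ≤ Bfun (G.degree w) := by
            rw [hB2ρ, ← hTeq w]; exact hρle w
          exact aux_Breal_inj hd2 (n:ℝ) (le_antisymm h5 h6)
      refine ⟨⟨δ₂, hdeg⟩, ?_⟩
      -- diameter at most 2
      by_contra hdiam
      push_neg at hdiam
      obtain ⟨a, b, hab⟩ := hdiam
      have hd3 : 3 ≤ d := le_trans (by omega) (hdle a b)
      have huniq2 : ∀ w a' b' : Fin n, G.dist w a' = 2 → G.dist w b' = 2 → a' = b' := by
        intro w a' b' ha' hb'
        have hcl := (hmaster w).2 (hTeq w) 2 (Finset.mem_Ico.2 ⟨le_refl 2, by omega⟩)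
        have hmem : ∀ z : Fin n, G.dist w z = 2 →
            z ∈ (Finset.univ \ insert w (G.neighborFinset w)).filter
              (fun j => G.dist w j ≤ 2) := by
          intro z hzd
          rw [Finset.mem_filter, aux_S_mem_iff]
          refine ⟨⟨fun h => ?_, fun h => ?_⟩, by omega⟩
          · rw [h, SimpleGraph.dist_self] at hzd; omega
          · rw [dist_eq_one_iff_adj.2 h] at hzd; omega
        have hle1 : ((Finset.univ \ insert w (G.neighborFinset w)).filter
            (fun j => G.dist w j ≤ 2)).card ≤ 1 := by omega
        exact Finset.card_le_one.1 hle1 a' (hmem a' ha') b' (hmem b' hb')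
      obtain ⟨pw, hpw⟩ := hconn.exists_walk_length_eq_dist x₀ y₀
      have hplen : pw.length = d := by rw [hpw, hxy]
      have hdista : ∀ s t, s ≤ t → t ≤ d → G.dist (pw.getVert s) (pw.getVert t) = t - s := by
        intro s t hst htd
        exact aux_geodesic_dist hconn pw hpw hst (by omega)
      have h01 : G.Adj (pw.getVert 0) (pw.getVert 1) :=
        dist_eq_one_iff_adj.1 (by rw [hdista 0 1 (by omega) (by omega)])
      have h12 : G.Adj (pw.getVert 1) (pw.getVert 2) :=
        dist_eq_one_iff_adj.1 (by rw [hdista 1 2 (by omega) (by omega)])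
      have h02 : G.dist (pw.getVert 0) (pw.getVert 2) = 2 := hdista 0 2 (by omega) (by omega)
      have h13 : G.dist (pw.getVert 1) (pw.getVert 3) = 2 := hdista 1 3 (by omega) (by omega)
      have h03 : G.dist (pw.getVert 0) (pw.getVert 3) = 3 := hdista 0 3 (by omega) (by omega)
      have hNadj : ∀ a' ∈ G.neighborFinset (pw.getVert 0), a' ≠ pw.getVert 1 →
          G.Adj (pw.getVert 1) a' := by
        intro a' ha' hne
        have haz0 : G.Adj (pw.getVert 0) a' := by simpa using ha'
        have hda1 : G.dist (pw.getVert 0) a' = 1 := dist_eq_one_iff_adj.2 haz0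
        have hd2' : G.dist (pw.getVert 1) a' ≤ 2 := by
          calc G.dist (pw.getVert 1) a'
              ≤ G.dist (pw.getVert 1) (pw.getVert 0) + G.dist (pw.getVert 0) a' :=
                hconn.dist_triangle
            _ ≤ 2 := by
                have e1 : G.dist (pw.getVert 1) (pw.getVert 0) = 1 := by
                  rw [SimpleGraph.dist_comm]; exact hdista 0 1 (by omega) (by omega)
                omega
        have hd0 : 0 < G.dist (pw.getVert 1) a' := hconn.pos_dist_of_ne (Ne.symm hne)
        rcases (by omega : G.dist (pw.getVert 1) a' = 1 ∨ G.dist (pw.getVert 1) a' = 2)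
          with h | h
        · exact dist_eq_one_iff_adj.1 h
        · exfalso
          have ha3 : a' = pw.getVert 3 := huniq2 (pw.getVert 1) a' (pw.getVert 3) h h13
          rw [ha3] at hda1
          omega
      have hz0z2 : pw.getVert 0 ≠ pw.getVert 2 := by
        intro h
        rw [h, SimpleGraph.dist_self] at h02
        omega
      have hz2notN : pw.getVert 2 ∉ G.neighborFinset (pw.getVert 0) := by
        rw [SimpleGraph.mem_neighborFinset]
        intro h
        have := dist_eq_one_iff_adj.2 h
        omega
      have hz1N : pw.getVert 1 ∈ G.neighborFinset (pw.getVert 0) := by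
        rw [SimpleGraph.mem_neighborFinset]; exact h01
      have hdeg1 : 1 ≤ G.degree (pw.getVert 0) := by
        rw [← G.card_neighborFinset_eq_degree]
        exact Finset.card_pos.2 ⟨pw.getVert 1, hz1N⟩
      have hsubset : insert (pw.getVert 0) (insert (pw.getVert 2)
          ((G.neighborFinset (pw.getVert 0)).erase (pw.getVert 1)))
          ⊆ G.neighborFinset (pw.getVert 1) := by
        intro a' ha'
        simp only [Finset.mem_insert, Finset.mem_erase] at ha'
        rw [SimpleGraph.mem_neighborFinset]
        rcases ha' with rfl | rfl | ⟨hne, hmem⟩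
        · exact h01.symm
        · exact h12
        · exact hNadj a' hmem hne
      have hcardins : (insert (pw.getVert 0) (insert (pw.getVert 2)
          ((G.neighborFinset (pw.getVert 0)).erase (pw.getVert 1)))).card
          = G.degree (pw.getVert 0) + 1 := by
        rw [Finset.card_insert_of_notMem, Finset.card_insert_of_notMem,
          Finset.card_erase_of_mem hz1N, G.card_neighborFinset_eq_degree]
        · omega
        · rw [Finset.mem_erase]
          exact fun h => hz2notN h.2
        · rw [Finset.mem_insert, Finset.mem_erase]
          rintro (h | ⟨-, h⟩)
          · exact hz0z2 h
          · exact absurd h (by simp)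
      have hle := Finset.card_le_card hsubset
      rw [hcardins, G.card_neighborFinset_eq_degree] at hle
      rw [hdeg (pw.getVert 0), hdeg (pw.getVert 1)] at hle
      omega
  · -- regular of diameter ≤ 2 implies equality
    rintro ⟨⟨r, hreg⟩, hdiam⟩
    have hd2 : d ≤ 2 := by rw [← hxy]; exact hdiam x₀ y₀
    have hr1 : δ₁ = r := by rw [← hu, hreg u]
    have hr2 : δ₂ = r := by rw [← hv, hreg v]
    have hIco : Finset.Ico 2 d = ∅ := Finset.Ico_eq_empty (by omega)
    have hTn : ∀ w, (∑ j, G.dist w j) + r * (d - 1) = (n - 1) * d := by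
      intro w
      have hid := aux_transmission_identity hconn w (fun j => hdle w j)
      rw [hIco, Finset.sum_empty, Fintype.card_fin, hreg w] at hid
      omega
    have hK0 : 2 * 0 = (d-1)*(d-2) := by
      have : d = 1 ∨ d = 2 := by omega
      rcases this with h | h <;> subst h <;> norm_num
    have hBr := aux_Breal_cast (d := d) (n' := n) (δ := r) (Ks := 0) hd1 hn1 hK0
    have hTreal : ∀ w, T w = Bfun r := by
      intro w
      have h1 : (((∑ j, G.dist w j) : ℕ) : ℝ) + ((r * (d-1) : ℕ) : ℝ)
          = (((n-1)*d : ℕ) : ℝ) := by exact_mod_cast hTn w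
      have h2 : T w = ((∑ j, G.dist w j : ℕ) : ℝ) := by rw [hT]; push_cast; rfl
      have h3 : Bfun r = (((n - 1) * d : ℕ) : ℝ) - ((r * (d - 1) : ℕ) : ℝ) - ((0:ℕ) : ℝ) := hBr
      rw [h2, h3]
      simp only [Nat.cast_zero]
      linarith [h1]
    have heig1 : distMatrix G *ᵥ (fun _ => (1:ℝ)) = (Bfun r) • (fun _ => (1:ℝ)) := by
      funext w
      have h1 : (distMatrix G *ᵥ (fun _ => (1:ℝ))) w = T w := by
        simp [Matrix.mulVec, dotProduct, distMatrix, hT]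
      rw [h1, hTreal w]
      simp
    have hone : (fun _ : Fin n => (1:ℝ)) ≠ 0 := fun h => by simpa using congrFun h u
    obtain ⟨i, hi⟩ := aux_eigen_of_eigenvector hone heig1
    have hge : Bfun r ≤ distSpectralRadius G := by
      rw [← hi]; exact aux_eigen_le_rho G i
    have hBrnn : 0 ≤ Bfun r := le_trans (hTnn u) (le_of_eq (hTreal u))
    have hsqrt : Real.sqrt (Bfun δ₁ * Bfun δ₂) = Bfun r := by
      rw [hr1, hr2, Real.sqrt_mul_self hBrnn]
    have hfinal : distSpectralRadius G = Real.sqrt (Bfun δ₁ * Bfun δ₂) :=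
      le_antisymm hpart1 (by rw [hsqrt]; exact hge)
    exact hfinal
end

section
/- Let G be a connected bipartite graph with bipartition V(G) = A ∪ B, |A| = p, |B| = q, p + q = n, and let Δ_A and Δ_B be the maximum degrees among vertices of A and of B, respectively. Then ρ(G) ≥ n − 2 + √(n² − 4pq + (3q − 2Δ_A)(3p − 2Δ_B)). -/
open SimpleGraph Finset
open Matrix

lemma rayleigh_le_iSup' {m : Type*} [Fintype m] [DecidableEq m] [Nonempty m]
    {A : Matrix m m ℝ} (hA : A.IsHermitian) (x : m → ℝ) :
    x ⬝ᵥ A *ᵥ x ≤ (⨆ i, hA.eigenvalues i) * (x ⬝ᵥ x) := by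
  classical
  set b := hA.eigenvectorBasis
  set y : EuclideanSpace ℝ m := WithLp.toLp 2 x with hy
  set c : m → ℝ := fun i => inner ℝ (b i) y with hc
  have hsum : ∑ i, c i • (b i : EuclideanSpace ℝ m) = y := b.sum_repr' y
  have hdot : ∀ (u v : EuclideanSpace ℝ m), (inner ℝ u v : ℝ) = (u : m → ℝ) ⬝ᵥ (v : m → ℝ) := by
    intro u v
    simp [PiLp.inner_apply, RCLike.inner_apply, dotProduct, mul_comm]
  have dsum : ∀ (v : m → ℝ) (f : m → (m → ℝ)), v ⬝ᵥ (∑ i, f i) = ∑ i, v ⬝ᵥ f i := by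
    intro v f
    simp only [dotProduct, Finset.sum_apply, Finset.mul_sum]
    rw [Finset.sum_comm]
  have hAx : A *ᵥ x = ∑ i, (c i * hA.eigenvalues i) • (b i : m → ℝ) := by
    have hxc : x = ∑ i, c i • (b i : m → ℝ) := by
      have h := congrArg (WithLp.ofLp (p := 2)) hsum.symm
      simpa [hy] using h
    rw [hxc, ← mulVecLin_apply, map_sum]
    congr 1; ext i
    rw [LinearMap.map_smul, mulVecLin_apply]
    have hb : A *ᵥ (b i : m → ℝ) = hA.eigenvalues i • (b i : m → ℝ) :=
      hA.mulVec_eigenvectorBasis i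
    rw [hb, smul_smul, mul_comm]
  have hexp : x ⬝ᵥ A *ᵥ x = ∑ i, hA.eigenvalues i * (c i)^2 := by
    rw [hAx, dsum]
    congr 1; ext i
    rw [dotProduct_smul]
    have : x ⬝ᵥ (b i : m → ℝ) = c i := by
      rw [← hdot, real_inner_comm]
    rw [this, smul_eq_mul]; ring
  have hxx : x ⬝ᵥ x = ∑ i, (c i)^2 := by
    have h1 : (inner ℝ y y : ℝ) = ∑ i, (c i)^2 := by
      nth_rw 2 [← hsum]
      rw [inner_sum]
      congr 1; ext i
      rw [real_inner_smul_right]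
      have : (inner ℝ y (b i) : ℝ) = c i := real_inner_comm _ _
      rw [this]; ring
    rw [← hdot y y]
    exact h1
  rw [hexp, hxx, Finset.mul_sum]
  apply Finset.sum_le_sum
  intro i _
  have h1 : hA.eigenvalues i ≤ ⨆ j, hA.eigenvalues j :=
    le_ciSup (Set.Finite.bddAbove (Set.finite_range _)) i
  nlinarith [sq_nonneg (c i)]

section aux
variable {V : Type*} [Fintype V] [DecidableEq V] {G : SimpleGraph V}
variable {A B : Finset V}

lemma bip_not_adj (hdisj : Disjoint A B)
    (hbip : ∀ x y : V, G.Adj x y → (x ∈ A ∧ y ∈ B) ∨ (x ∈ B ∧ y ∈ A))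
    {u v : V} (hu : u ∈ A) (hv : v ∈ A) : ¬ G.Adj u v := by
  intro h
  rcases hbip u v h with ⟨_, hvB⟩ | ⟨huB, _⟩
  · exact (Finset.disjoint_left.mp hdisj hv) hvB
  · exact (Finset.disjoint_left.mp hdisj hu) huB

lemma bip_nbr_subset (hdisj : Disjoint A B)
    (hbip : ∀ x y : V, G.Adj x y → (x ∈ A ∧ y ∈ B) ∨ (x ∈ B ∧ y ∈ A))
    [DecidableRel G.Adj] {a : V} (ha : a ∈ A) : G.neighborFinset a ⊆ B := by
  intro j hj
  rw [SimpleGraph.mem_neighborFinset] at hj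
  rcases hbip a j hj with ⟨_, h⟩ | ⟨h, _⟩
  · exact h
  · exact absurd h (Finset.disjoint_left.mp hdisj ha)

lemma bip_dist_ge_three (hconn : G.Connected) (hdisj : Disjoint A B)
    (hbip : ∀ x y : V, G.Adj x y → (x ∈ A ∧ y ∈ B) ∨ (x ∈ B ∧ y ∈ A))
    {a b : V} (ha : a ∈ A) (hb : b ∈ B) (hnadj : ¬ G.Adj a b) : 3 ≤ G.dist a b := by
  have hne : a ≠ b := fun h => (Finset.disjoint_left.mp hdisj ha) (h ▸ hb)
  have h0 : 0 < G.dist a b := hconn.pos_dist_of_ne hne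
  have h1 : G.dist a b ≠ 1 := fun h => hnadj (SimpleGraph.dist_eq_one_iff_adj.mp h)
  have hmid : ∀ x : V, G.Adj a x → G.Adj x b → False := by
    intro xx h1 h2
    have hxB : xx ∈ B := by
      rcases hbip a xx h1 with ⟨_, h⟩ | ⟨h, _⟩
      · exact h
      · exact absurd h (Finset.disjoint_left.mp hdisj ha)
    have hxA : xx ∈ A := by
      rcases hbip xx b h2 with ⟨h, _⟩ | ⟨_, h⟩
      · exact h
      · exact absurd h (Finset.disjoint_right.mp hdisj hb)
    exact (Finset.disjoint_left.mp hdisj hxA) hxB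
  have h2 : G.dist a b ≠ 2 := by
    intro h2
    obtain ⟨w, hw⟩ := (hconn a b).exists_walk_length_eq_dist
    rw [h2] at hw
    cases w with
    | nil => simp at hw
    | cons hadj w' =>
      cases w' with
      | nil => simp at hw
      | cons hadj2 w'' =>
        cases w'' with
        | nil => exact hmid _ hadj hadj2
        | cons hadj3 w''' => simp [SimpleGraph.Walk.length_cons] at hw
  omega

lemma bip_dist_ge_two (hconn : G.Connected) (hdisj : Disjoint A B)
    (hbip : ∀ x y : V, G.Adj x y → (x ∈ A ∧ y ∈ B) ∨ (x ∈ B ∧ y ∈ A))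
    {u v : V} (hu : u ∈ A) (hv : v ∈ A) (hne : u ≠ v) : 2 ≤ G.dist u v := by
  have h0 : 0 < G.dist u v := hconn.pos_dist_of_ne hne
  have h1 : G.dist u v ≠ 1 :=
    fun h => (bip_not_adj hdisj hbip hu hv) (SimpleGraph.dist_eq_one_iff_adj.mp h)
  omega

/-- Row sum within the same part. -/
lemma bip_same_row_sum (hconn : G.Connected) (hdisj : Disjoint A B)
    (hbip : ∀ x y : V, G.Adj x y → (x ∈ A ∧ y ∈ B) ∨ (x ∈ B ∧ y ∈ A))
    {i : V} (hi : i ∈ A) :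
    2 * ((A.card : ℝ) - 1) ≤ ∑ j ∈ A, (G.dist i j : ℝ) := by
  have h0 : (G.dist i i : ℝ) = 0 := by simp
  rw [← Finset.sum_erase A h0]
  have hbound : ∀ j ∈ A.erase i, (2 : ℝ) ≤ (G.dist i j : ℝ) := by
    intro j hj
    have hji := Finset.ne_of_mem_erase hj
    have hjA := Finset.mem_of_mem_erase hj
    exact_mod_cast bip_dist_ge_two hconn hdisj hbip hi hjA (Ne.symm hji)
  calc 2 * ((A.card : ℝ) - 1) = ∑ _j ∈ A.erase i, (2 : ℝ) := by
        rw [Finset.sum_const, Finset.card_erase_of_mem hi]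
        have h1 : 1 ≤ A.card := Finset.card_pos.mpr ⟨i, hi⟩
        rw [nsmul_eq_mul, Nat.cast_sub h1]
        push_cast
        ring
    _ ≤ _ := Finset.sum_le_sum hbound

/-- Cross row sum. -/
lemma bip_cross_row_sum [DecidableRel G.Adj] (hconn : G.Connected) (hdisj : Disjoint A B)
    (hbip : ∀ x y : V, G.Adj x y → (x ∈ A ∧ y ∈ B) ∨ (x ∈ B ∧ y ∈ A))
    {i : V} (hi : i ∈ A) :
    3 * (B.card : ℝ) - 2 * (G.degree i : ℝ) ≤ ∑ j ∈ B, (G.dist i j : ℝ) := by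
  classical
  have hfil : B.filter (fun x => G.Adj i x) = G.neighborFinset i := by
    ext j
    simp only [Finset.mem_filter, SimpleGraph.mem_neighborFinset]
    constructor
    · rintro ⟨_, h⟩; exact h
    · intro h
      refine ⟨bip_nbr_subset hdisj hbip hi ?_, h⟩
      rw [SimpleGraph.mem_neighborFinset]
      exact h
  have hbound : ∀ j ∈ B, (if G.Adj i j then (1:ℝ) else 3) ≤ (G.dist i j : ℝ) := by
    intro j hj
    by_cases h : G.Adj i j
    · simp only [h, if_true]
      have : G.dist i j = 1 := SimpleGraph.dist_eq_one_iff_adj.mpr h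
      rw [this]; norm_num
    · simp only [h, if_false]
      exact_mod_cast bip_dist_ge_three hconn hdisj hbip hi hj h
  have hsum : ∑ j ∈ B, (if G.Adj i j then (1:ℝ) else 3)
      = 3 * (B.card : ℝ) - 2 * (G.degree i : ℝ) := by
    rw [Finset.sum_ite, Finset.sum_const, Finset.sum_const, nsmul_eq_mul, nsmul_eq_mul]
    have hfilcard : (B.filter (fun x => G.Adj i x)).card = G.degree i := by
      rw [hfil]; rfl
    have hadd := Finset.card_filter_add_card_filter_not (s := B)
      (p := fun x => G.Adj i x)
    have h5 : (B.filter (fun x => ¬ G.Adj i x)).card + G.degree i = B.card := by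
      omega
    have h5' : ((B.filter (fun x => ¬ G.Adj i x)).card : ℝ) + (G.degree i : ℝ) = (B.card : ℝ) := by
      exact_mod_cast congrArg (Nat.cast : ℕ → ℝ) h5
    rw [hfilcard]
    linarith
  rw [← hsum]
  exact Finset.sum_le_sum hbound

end aux

set_option maxHeartbeats 1600000 in
/-- **Theorem 4.** For a connected bipartite graph `G` with bipartition `A ∪ B`,
`|A| = p`, `|B| = q`, `p + q = n`, and maximum degrees `Δ_A`, `Δ_B` in `A`, `B`
respectively, `ρ(G) ≥ n - 2 + √(n² - 4pq + (3q - 2Δ_A)(3p - 2Δ_B))`. -/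
theorem distSpectralRadius_bipartite_lower_bound {n : ℕ} (G : SimpleGraph (Fin n))
    [DecidableRel G.Adj] (hconn : G.Connected) (A B : Finset (Fin n)) (p q : ℕ)
    (hdisj : Disjoint A B) (hcover : A ∪ B = Finset.univ)
    (hA : A.card = p) (hB : B.card = q) (hpq : p + q = n)
    (hbip : ∀ x y : Fin n, G.Adj x y → (x ∈ A ∧ y ∈ B) ∨ (x ∈ B ∧ y ∈ A))
    (ΔA ΔB : ℕ)
    (hΔAmem : ∃ a ∈ A, G.degree a = ΔA) (hΔAmax : ∀ a ∈ A, G.degree a ≤ ΔA)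
    (hΔBmem : ∃ b ∈ B, G.degree b = ΔB) (hΔBmax : ∀ b ∈ B, G.degree b ≤ ΔB) :
    (n : ℝ) - 2 +
        Real.sqrt ((n : ℝ) ^ 2 - 4 * (p : ℝ) * (q : ℝ) +
          (3 * (q : ℝ) - 2 * (ΔA : ℝ)) * (3 * (p : ℝ) - 2 * (ΔB : ℝ))) ≤
      distSpectralRadius G := by
  classical
  haveI : Nonempty (Fin n) := hconn.nonempty
  -- bipartition symmetric version
  have hbip' : ∀ x y : Fin n, G.Adj x y → (x ∈ B ∧ y ∈ A) ∨ (x ∈ A ∧ y ∈ B) :=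
    fun x y h => (hbip x y h).symm
  -- basic cardinalities
  obtain ⟨a₀, ha₀A, ha₀d⟩ := hΔAmem
  obtain ⟨b₀, hb₀B, hb₀d⟩ := hΔBmem
  have hp1 : 1 ≤ p := hA ▸ Finset.card_pos.mpr ⟨a₀, ha₀A⟩
  have hq1 : 1 ≤ q := hB ▸ Finset.card_pos.mpr ⟨b₀, hb₀B⟩
  have hΔAq : ΔA ≤ q := by
    rw [← ha₀d, ← hB, SimpleGraph.degree]
    exact Finset.card_le_card (bip_nbr_subset hdisj hbip ha₀A)
  have hΔBp : ΔB ≤ p := by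
    rw [← hb₀d, ← hA, SimpleGraph.degree]
    exact Finset.card_le_card (bip_nbr_subset hdisj.symm hbip' hb₀B)
  -- real abbreviations
  set Ra : ℝ := 3 * (q : ℝ) - 2 * (ΔA : ℝ) with hRa
  set Rb : ℝ := 3 * (p : ℝ) - 2 * (ΔB : ℝ) with hRb
  have hn : (n : ℝ) = (p : ℝ) + (q : ℝ) := by exact_mod_cast hpq.symm
  have hRa_pos : 0 < Ra := by
    have : (ΔA : ℝ) ≤ (q : ℝ) := by exact_mod_cast hΔAq
    have : (1 : ℝ) ≤ (q : ℝ) := by exact_mod_cast hq1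
    simp only [hRa]; nlinarith [(by exact_mod_cast hΔAq : (ΔA : ℝ) ≤ (q : ℝ))]
  have hRb_pos : 0 < Rb := by
    simp only [hRb]
    nlinarith [(by exact_mod_cast hΔBp : (ΔB : ℝ) ≤ (p : ℝ)),
      (by exact_mod_cast hp1 : (1 : ℝ) ≤ (p : ℝ))]
  have harg : (n : ℝ) ^ 2 - 4 * (p : ℝ) * (q : ℝ) + Ra * Rb
      = ((p : ℝ) - q) ^ 2 + Ra * Rb := by rw [hn]; ring
  set s : ℝ := Real.sqrt ((n : ℝ) ^ 2 - 4 * (p : ℝ) * (q : ℝ) + Ra * Rb) with hs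
  have hs_nonneg : 0 ≤ s := Real.sqrt_nonneg _
  have hs2 : s ^ 2 = ((p : ℝ) - q) ^ 2 + Ra * Rb := by
    rw [hs, Real.sq_sqrt, harg]
    rw [harg]
    positivity
  set β : ℝ := s + (q : ℝ) - p with hβ
  have hβ_pos : 0 < β := by
    rw [hβ]
    nlinarith [hs2, mul_pos hRa_pos hRb_pos, hs_nonneg]
  set lam : ℝ := (n : ℝ) - 2 + s with hlam
  -- the test vector
  set xv : Fin n → ℝ := fun i => if i ∈ A then Ra else β with hxv
  have hxvA : ∀ i ∈ A, xv i = Ra := fun i hi => by simp [hxv, hi]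
  have hxvB : ∀ i ∈ B, xv i = β := fun i hi => by
    have : i ∉ A := Finset.disjoint_right.mp hdisj hi
    simp [hxv, this]
  have hsplit : ∀ f : Fin n → ℝ, ∑ i, f i = ∑ i ∈ A, f i + ∑ i ∈ B, f i := by
    intro f
    rw [← Finset.sum_union hdisj, hcover]
  set D : Matrix (Fin n) (Fin n) ℝ := distMatrix G with hD
  -- the quadratic form
  have hS : xv ⬝ᵥ D *ᵥ xv
      = ∑ i, ∑ j, xv i * ((G.dist i j : ℝ) * xv j) := by
    simp [dotProduct, Matrix.mulVec, hD, distMatrix, Finset.mul_sum]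
  -- norm of xv
  have hxx : xv ⬝ᵥ xv = (p : ℝ) * Ra ^ 2 + (q : ℝ) * β ^ 2 := by
    have h1 : ∑ i ∈ A, xv i * xv i = (p : ℝ) * Ra ^ 2 := by
      calc ∑ i ∈ A, xv i * xv i = ∑ _i ∈ A, Ra ^ 2 :=
            Finset.sum_congr rfl (fun i hi => by rw [hxvA i hi]; ring)
        _ = (p : ℝ) * Ra ^ 2 := by rw [Finset.sum_const, hA, nsmul_eq_mul]
    have h2 : ∑ i ∈ B, xv i * xv i = (q : ℝ) * β ^ 2 := by
      calc ∑ i ∈ B, xv i * xv i = ∑ _i ∈ B, β ^ 2 :=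
            Finset.sum_congr rfl (fun i hi => by rw [hxvB i hi]; ring)
        _ = (q : ℝ) * β ^ 2 := by rw [Finset.sum_const, hB, nsmul_eq_mul]
    have hdd : xv ⬝ᵥ xv = ∑ i, xv i * xv i := rfl
    rw [hdd, hsplit, h1, h2]
  have hxx_pos : 0 < xv ⬝ᵥ xv := by
    rw [hxx]
    have : (1:ℝ) ≤ (p:ℝ) := by exact_mod_cast hp1
    have : (1:ℝ) ≤ (q:ℝ) := by exact_mod_cast hq1
    positivity
  -- the four block bounds
  have hAA : 2 * (p : ℝ) * ((p : ℝ) - 1) * Ra ^ 2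
      ≤ ∑ i ∈ A, ∑ j ∈ A, xv i * ((G.dist i j : ℝ) * xv j) := by
    have hrow : ∀ i ∈ A, 2 * ((p : ℝ) - 1) * Ra ^ 2
        ≤ ∑ j ∈ A, xv i * ((G.dist i j : ℝ) * xv j) := by
      intro i hi
      have h1 : ∑ j ∈ A, xv i * ((G.dist i j : ℝ) * xv j)
          = Ra ^ 2 * ∑ j ∈ A, (G.dist i j : ℝ) := by
        rw [Finset.mul_sum]
        refine Finset.sum_congr rfl fun j hj => ?_
        rw [hxvA i hi, hxvA j hj]; ring
      rw [h1]
      have h2 := bip_same_row_sum hconn hdisj hbip hi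
      rw [hA] at h2
      nlinarith [sq_nonneg Ra]
    calc 2 * (p : ℝ) * ((p : ℝ) - 1) * Ra ^ 2
        = ∑ _i ∈ A, 2 * ((p : ℝ) - 1) * Ra ^ 2 := by
          rw [Finset.sum_const, hA]; push_cast; ring
      _ ≤ _ := Finset.sum_le_sum hrow
  have hBB : 2 * (q : ℝ) * ((q : ℝ) - 1) * β ^ 2
      ≤ ∑ i ∈ B, ∑ j ∈ B, xv i * ((G.dist i j : ℝ) * xv j) := by
    have hrow : ∀ i ∈ B, 2 * ((q : ℝ) - 1) * β ^ 2
        ≤ ∑ j ∈ B, xv i * ((G.dist i j : ℝ) * xv j) := by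
      intro i hi
      have h1 : ∑ j ∈ B, xv i * ((G.dist i j : ℝ) * xv j)
          = β ^ 2 * ∑ j ∈ B, (G.dist i j : ℝ) := by
        rw [Finset.mul_sum]
        refine Finset.sum_congr rfl fun j hj => ?_
        rw [hxvB i hi, hxvB j hj]; ring
      rw [h1]
      have h2 := bip_same_row_sum hconn hdisj.symm hbip' hi
      rw [hB] at h2
      nlinarith [sq_nonneg β]
    calc 2 * (q : ℝ) * ((q : ℝ) - 1) * β ^ 2
        = ∑ _i ∈ B, 2 * ((q : ℝ) - 1) * β ^ 2 := by
          rw [Finset.sum_const, hB]; push_cast; ring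
      _ ≤ _ := Finset.sum_le_sum hrow
  have hAB : (p : ℝ) * Ra * (Ra * β)
      ≤ ∑ i ∈ A, ∑ j ∈ B, xv i * ((G.dist i j : ℝ) * xv j) := by
    have hrow : ∀ i ∈ A, Ra * (Ra * β)
        ≤ ∑ j ∈ B, xv i * ((G.dist i j : ℝ) * xv j) := by
      intro i hi
      have h1 : ∑ j ∈ B, xv i * ((G.dist i j : ℝ) * xv j)
          = (Ra * β) * ∑ j ∈ B, (G.dist i j : ℝ) := by
        rw [Finset.mul_sum]
        refine Finset.sum_congr rfl fun j hj => ?_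
        rw [hxvA i hi, hxvB j hj]; ring
      rw [h1]
      have h2 := bip_cross_row_sum hconn hdisj hbip hi
      rw [hB] at h2
      have h3 : Ra ≤ ∑ j ∈ B, (G.dist i j : ℝ) := by
        refine le_trans ?_ h2
        rw [hRa]
        have : (G.degree i : ℝ) ≤ (ΔA : ℝ) := by exact_mod_cast hΔAmax i hi
        linarith
      calc Ra * (Ra * β) = (Ra * β) * Ra := by ring
        _ ≤ (Ra * β) * ∑ j ∈ B, (G.dist i j : ℝ) := by
            apply mul_le_mul_of_nonneg_left h3
            positivity
    calc (p : ℝ) * Ra * (Ra * β) = ∑ _i ∈ A, Ra * (Ra * β) := by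
          rw [Finset.sum_const, hA]; push_cast; ring
      _ ≤ _ := Finset.sum_le_sum hrow
  have hBA : (q : ℝ) * Rb * (Ra * β)
      ≤ ∑ i ∈ B, ∑ j ∈ A, xv i * ((G.dist i j : ℝ) * xv j) := by
    have hrow : ∀ i ∈ B, Rb * (Ra * β)
        ≤ ∑ j ∈ A, xv i * ((G.dist i j : ℝ) * xv j) := by
      intro i hi
      have h1 : ∑ j ∈ A, xv i * ((G.dist i j : ℝ) * xv j)
          = (Ra * β) * ∑ j ∈ A, (G.dist i j : ℝ) := by
        rw [Finset.mul_sum]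
        refine Finset.sum_congr rfl fun j hj => ?_
        rw [hxvB i hi, hxvA j hj]; ring
      rw [h1]
      have h2 := bip_cross_row_sum hconn hdisj.symm hbip' hi
      rw [hA] at h2
      have h3 : Rb ≤ ∑ j ∈ A, (G.dist i j : ℝ) := by
        refine le_trans ?_ h2
        rw [hRb]
        have : (G.degree i : ℝ) ≤ (ΔB : ℝ) := by exact_mod_cast hΔBmax i hi
        linarith
      calc Rb * (Ra * β) = (Ra * β) * Rb := by ring
        _ ≤ (Ra * β) * ∑ j ∈ A, (G.dist i j : ℝ) := by
            apply mul_le_mul_of_nonneg_left h3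
            positivity
    calc (q : ℝ) * Rb * (Ra * β) = ∑ _i ∈ B, Rb * (Ra * β) := by
          rw [Finset.sum_const, hB]; push_cast; ring
      _ ≤ _ := Finset.sum_le_sum hrow
  -- combine
  have hquad : lam * (xv ⬝ᵥ xv) ≤ xv ⬝ᵥ D *ᵥ xv := by
    have key : lam * ((p : ℝ) * Ra ^ 2 + (q : ℝ) * β ^ 2)
        = 2 * (p : ℝ) * ((p : ℝ) - 1) * Ra ^ 2 + (p : ℝ) * Ra * (Ra * β)
          + (q : ℝ) * Rb * (Ra * β) + 2 * (q : ℝ) * ((q : ℝ) - 1) * β ^ 2 := by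
      rw [hlam, hβ, hn]
      linear_combination ((q : ℝ) * (s + (q : ℝ) - p)) * hs2
    rw [hxx, key, hS]
    have hsum_split : ∑ i, ∑ j, xv i * ((G.dist i j : ℝ) * xv j)
        = (∑ i ∈ A, ∑ j ∈ A, xv i * ((G.dist i j : ℝ) * xv j)
            + ∑ i ∈ A, ∑ j ∈ B, xv i * ((G.dist i j : ℝ) * xv j))
          + (∑ i ∈ B, ∑ j ∈ A, xv i * ((G.dist i j : ℝ) * xv j)
            + ∑ i ∈ B, ∑ j ∈ B, xv i * ((G.dist i j : ℝ) * xv j)) := by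
      rw [hsplit]
      congr 1
      · rw [← Finset.sum_add_distrib]
        exact Finset.sum_congr rfl fun i _ => hsplit _
      · rw [← Finset.sum_add_distrib]
        exact Finset.sum_congr rfl fun i _ => hsplit _
    rw [hsum_split]
    linarith [hAA, hAB, hBA, hBB]
  -- Rayleigh
  have hray := rayleigh_le_iSup' (distMatrix_isHermitian G) xv
  have : lam * (xv ⬝ᵥ xv) ≤ distSpectralRadius G * (xv ⬝ᵥ xv) := by
    refine hquad.trans ?_
    exact hray
  have hfinal : lam ≤ distSpectralRadius G := le_of_mul_le_mul_right this hxx_pos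
  exact hfinal
end

section
/- Let G be a connected bipartite graph with n vertices, diameter d, and bipartition V(G) = A ∪ B with |A| = p, |B| = q, p + q = n; let δ_A and δ_B be the minimum degrees among vertices of A and of B, respectively. If d is even, then ρ(G) ≤ (d/2)(n − 1 − d/2) + (1/2)·√(d²n² + 4δ_Aδ_B(d−2)² − 4pq(2d−1) − 4(d−1)(d−2)(pδ_A + qδ_B)). -/
open SimpleGraph Finset

section helpers

set_option linter.unusedSectionVars false
set_option maxHeartbeats 1000000

variable {V : Type*} [Fintype V] [DecidableEq V] {G : SimpleGraph V}

private lemma my_walk_parity {A B : Finset V}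
    (hdisj : Disjoint A B) (hcover : A ∪ B = Finset.univ)
    (hbip : ∀ x y : V, G.Adj x y → (x ∈ A ∧ y ∈ B) ∨ (x ∈ B ∧ y ∈ A)) :
    ∀ {x y : V} (W : G.Walk x y),
      (x ∈ A → (Even W.length ↔ y ∈ A)) ∧ (x ∈ B → (Even W.length ↔ y ∈ B)) := by
  have hmem : ∀ z : V, z ∈ A ∨ z ∈ B := by
    intro z
    have : z ∈ A ∪ B := by rw [hcover]; exact mem_univ z
    exact mem_union.mp this
  have hnotboth : ∀ z : V, z ∈ A → z ∈ B → False := fun z hA hB =>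
    (Finset.disjoint_left.mp hdisj hA) hB
  intro x y W
  induction W with
  | nil =>
      refine ⟨fun h => ?_, fun h => ?_⟩ <;> simp [h]
  | @cons a b yy h W ih =>
      constructor
      · intro hxA
        have hz : b ∈ B := by
          rcases hbip a b h with ⟨_, hz⟩ | ⟨hx, _⟩
          · exact hz
          · exact absurd hx (fun hh => hnotboth a hxA hh)
        have h2 := ih.2 hz
        rw [Walk.length_cons, Nat.even_add_one]
        have := hmem yy
        have := fun hh => hnotboth yy hh
        tauto
      · intro hxB
        have hz : b ∈ A := by
          rcases hbip a b h with ⟨hx, _⟩ | ⟨_, hz⟩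
          · exact absurd hx (fun hh => hnotboth a hh hxB)
          · exact hz
        have h1 := ih.1 hz
        rw [Walk.length_cons, Nat.even_add_one]
        have := hmem yy
        have := fun hh => hnotboth yy hh
        tauto

private lemma my_even_dist_iff {A B : Finset V}
    (hdisj : Disjoint A B) (hcover : A ∪ B = Finset.univ)
    (hbip : ∀ x y : V, G.Adj x y → (x ∈ A ∧ y ∈ B) ∨ (x ∈ B ∧ y ∈ A))
    (hconn : G.Connected) {x y : V} (hx : x ∈ A) :
    Even (G.dist x y) ↔ y ∈ A := by
  obtain ⟨W, hW⟩ := (hconn x y).exists_walk_length_eq_dist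
  rw [← hW]
  exact (my_walk_parity hdisj hcover hbip W).1 hx

private lemma my_exists_dist_eq (hconn : G.Connected) (u : V) :
    ∀ (k : ℕ) (w : V), G.dist u w = k → ∀ j, j ≤ k → ∃ z, G.dist u z = j := by
  intro k
  induction k with
  | zero =>
      intro w _ j hj
      interval_cases j
      exact ⟨u, SimpleGraph.dist_self⟩
  | succ k ih =>
      intro w hw j hj
      rcases eq_or_lt_of_le hj with rfl | hlt
      · exact ⟨w, hw⟩
      · have hjk : j ≤ k := Nat.lt_succ_iff.mp hlt
        have hne : G.dist u w ≠ 0 := by omega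
        obtain ⟨W, hW⟩ := SimpleGraph.exists_walk_of_dist_ne_zero hne
        have hlen : W.reverse.length = k + 1 := by
          rw [Walk.length_reverse]; omega
        have hnil : ¬ W.reverse.Nil := by
          rw [Walk.nil_iff_length_eq]; omega
        set z1 := W.reverse.getVert 1 with hz1
        have hadj : G.Adj w z1 := W.reverse.adj_snd hnil
        have htail : (W.reverse.tail).length + 1 = W.reverse.length :=
          Walk.length_tail_add_one hnil
        have h1 : G.dist z1 u ≤ k := by
          have hdl := SimpleGraph.dist_le W.reverse.tail
          exact hdl.trans (by omega)
        have h2 : G.dist u z1 = k := by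
          have htri : G.dist u w ≤ G.dist u z1 + G.dist z1 w := hconn.dist_triangle
          have hone : G.dist z1 w = 1 := SimpleGraph.dist_eq_one_iff_adj.mpr hadj.symm
          have hcm : G.dist u z1 = G.dist z1 u := SimpleGraph.dist_comm
          omega
        exact ih z1 h2 j hjk

private lemma my_quad_bound {lam a1 a2 b1 b2 : ℝ} (hb1 : 0 ≤ b1) (hb2 : 0 ≤ b2)
    (h : lam ≤ a1 ∨ lam ≤ a2 ∨ (lam - a1) * (lam - a2) ≤ b1 * b2) :
    lam ≤ (a1 + a2) / 2 + 1 / 2 * Real.sqrt ((a1 - a2) ^ 2 + 4 * (b1 * b2)) := by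
  set s := Real.sqrt ((a1 - a2) ^ 2 + 4 * (b1 * b2)) with hs
  have harg : (0:ℝ) ≤ (a1 - a2) ^ 2 + 4 * (b1 * b2) := by positivity
  have hs2 : s ^ 2 = (a1 - a2) ^ 2 + 4 * (b1 * b2) := Real.sq_sqrt harg
  have hs0 : 0 ≤ s := Real.sqrt_nonneg _
  have habs : |a1 - a2| ≤ s := by
    rw [← Real.sqrt_sq_eq_abs]
    exact Real.sqrt_le_sqrt (by nlinarith)
  have habs1 : a1 - a2 ≤ s := le_trans (le_abs_self _) habs
  have habs2 : a2 - a1 ≤ s := le_trans (by rw [abs_sub_comm]; exact le_abs_self _) habs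
  rcases h with h | h | h
  · linarith
  · linarith
  · by_cases h1 : lam ≤ a1
    · linarith
    by_cases h2 : lam ≤ a2
    · linarith
    push_neg at h1 h2
    nlinarith [sq_nonneg (lam - (a1 + a2) / 2 - s / 2), sq_nonneg (lam - (a1 + a2) / 2 + s / 2)]

private lemma my_part_card {A B : Finset V}
    (hdisj : Disjoint A B) (hcover : A ∪ B = Finset.univ)
    (hbip : ∀ x y : V, G.Adj x y → (x ∈ A ∧ y ∈ B) ∨ (x ∈ B ∧ y ∈ A))
    (hconn : G.Connected) {z0 zd : V} {c : ℕ}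
    (hz : G.dist z0 zd = 2 * c) (hz0 : z0 ∈ A) :
    c ≤ A.card ∧ c ≤ B.card := by
  have hmem : ∀ z : V, z ∉ A → z ∈ B := by
    intro z hz
    have : z ∈ A ∪ B := by rw [hcover]; exact mem_univ z
    rcases mem_union.mp this with h | h
    · exact absurd h hz
    · exact h
  have hex : ∀ j, j ≤ 2 * c → ∃ z, G.dist z0 z = j :=
    fun j hj => my_exists_dist_eq hconn z0 (2 * c) zd hz j hj
  have hex' : ∀ j : ℕ, ∃ z, j ≤ 2 * c → G.dist z0 z = j := by
    intro j
    by_cases hj : j ≤ 2 * c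
    · obtain ⟨z, hz⟩ := hex j hj
      exact ⟨z, fun _ => hz⟩
    · exact ⟨z0, fun h => absurd h hj⟩
  choose f hf using hex'
  constructor
  · have hsub : (Finset.range c).image (fun k => f (2 * k)) ⊆ A := by
      intro z hzm
      obtain ⟨k, hk, rfl⟩ := Finset.mem_image.mp hzm
      have hkc : k < c := Finset.mem_range.mp hk
      have hdist : G.dist z0 (f (2 * k)) = 2 * k := hf (2 * k) (by omega)
      have : Even (G.dist z0 (f (2 * k))) := by rw [hdist]; exact ⟨k, by ring⟩
      exact (my_even_dist_iff hdisj hcover hbip hconn hz0).mp this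
    have hcard : ((Finset.range c).image (fun k => f (2 * k))).card = c := by
      rw [Finset.card_image_of_injOn, Finset.card_range]
      intro k1 h1 k2 h2 heq
      have hk1 : k1 < c := by simpa using h1
      have hk2 : k2 < c := by simpa using h2
      have heq' : f (2 * k1) = f (2 * k2) := heq
      have e1 : G.dist z0 (f (2 * k1)) = 2 * k1 := hf _ (by omega)
      have e2 : G.dist z0 (f (2 * k2)) = 2 * k2 := hf _ (by omega)
      rw [heq'] at e1
      omega
    calc c = _ := hcard.symm
    _ ≤ A.card := Finset.card_le_card hsub
  · have hsub : (Finset.range c).image (fun k => f (2 * k + 1)) ⊆ B := by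
      intro z hzm
      obtain ⟨k, hk, rfl⟩ := Finset.mem_image.mp hzm
      have hkc : k < c := Finset.mem_range.mp hk
      have hdist : G.dist z0 (f (2 * k + 1)) = 2 * k + 1 := hf (2 * k + 1) (by omega)
      have hodd : ¬ Even (G.dist z0 (f (2 * k + 1))) := by
        rw [hdist]; simp [Nat.even_add_one, parity_simps]
      apply hmem
      intro hA
      exact hodd ((my_even_dist_iff hdisj hcover hbip hconn hz0).mpr hA)
    have hcard : ((Finset.range c).image (fun k => f (2 * k + 1))).card = c := by
      rw [Finset.card_image_of_injOn, Finset.card_range]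
      intro k1 h1 k2 h2 heq
      have hk1 : k1 < c := by simpa using h1
      have hk2 : k2 < c := by simpa using h2
      have heq' : f (2 * k1 + 1) = f (2 * k2 + 1) := heq
      have e1 : G.dist z0 (f (2 * k1 + 1)) = 2 * k1 + 1 := hf _ (by omega)
      have e2 : G.dist z0 (f (2 * k2 + 1)) = 2 * k2 + 1 := hf _ (by omega)
      rw [heq'] at e1
      omega
    calc c = _ := hcard.symm
    _ ≤ B.card := Finset.card_le_card hsub

/-- Key Lemma A: the sum of distances from `u ∈ A` to other vertices of `A`. -/
private lemma my_sum_own_part {A B : Finset V}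
    (hdisj : Disjoint A B) (hcover : A ∪ B = Finset.univ)
    (hbip : ∀ x y : V, G.Adj x y → (x ∈ A ∧ y ∈ B) ∨ (x ∈ B ∧ y ∈ A))
    (hconn : G.Connected) {c : ℕ} (hc1 : 1 ≤ c)
    (hdle : ∀ x y : V, G.dist x y ≤ 2 * c) {z0 zd : V} (hz : G.dist z0 zd = 2 * c)
    (hcA : c ≤ A.card)
    {u : V} (hu : u ∈ A) :
    (∑ w ∈ A.erase u, G.dist u w) + c * (c - 1) + 2 * c ≤ 2 * c * A.card := by
  classical
  obtain ⟨c₁, rfl⟩ : ∃ c₁, c = c₁ + 1 := ⟨c - 1, by omega⟩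
  set c := c₁ + 1 with hcc
  obtain ⟨wst, -, hwst⟩ := Finset.exists_max_image (Finset.univ : Finset V)
    (fun w => G.dist u w) ⟨u, Finset.mem_univ u⟩
  set e := G.dist u wst with he
  have hemax : ∀ w : V, G.dist u w ≤ e := fun w => hwst w (Finset.mem_univ w)
  have he2 : 2 * c ≤ 2 * e := by
    have h1 : G.dist z0 zd ≤ G.dist z0 u + G.dist u zd := hconn.dist_triangle
    have h2 : G.dist z0 u = G.dist u z0 := SimpleGraph.dist_comm
    have h3 : G.dist u z0 ≤ e := hemax z0
    have h4 : G.dist u zd ≤ e := hemax zd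
    omega
  set m := e / 2 with hm
  have hAdist : ∀ w ∈ A, G.dist u w ≤ 2 * m := by
    intro w hw
    have heven : Even (G.dist u w) := (my_even_dist_iff hdisj hcover hbip hconn hu).mpr hw
    have hle : G.dist u w ≤ e := hemax w
    obtain ⟨t, ht⟩ := heven
    omega
  set M := min m (c - 1) with hM
  have hex' : ∀ j : ℕ, ∃ z, j ≤ e → G.dist u z = j := by
    intro j
    by_cases hj : j ≤ e
    · obtain ⟨z, hz⟩ := my_exists_dist_eq hconn u e wst rfl j hj
      exact ⟨z, fun _ => hz⟩
    · exact ⟨u, fun h => absurd h hj⟩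
  choose f hf using hex'
  have hfd : ∀ k, 1 ≤ k → k ≤ M → G.dist u (f (2 * k)) = 2 * k := by
    intro k hk1 hkM
    apply hf
    have : M ≤ m := min_le_left _ _
    omega
  set W := (Finset.Icc 1 M).image (fun k => f (2 * k)) with hW
  have hWsub : W ⊆ A.erase u := by
    intro z hzm
    obtain ⟨k, hk, rfl⟩ := Finset.mem_image.mp hzm
    have hk1 : 1 ≤ k := (Finset.mem_Icc.mp hk).1
    have hkM : k ≤ M := (Finset.mem_Icc.mp hk).2
    have hdk : G.dist u (f (2 * k)) = 2 * k := hfd k hk1 hkM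
    have hfA : f (2 * k) ∈ A := by
      refine (my_even_dist_iff hdisj hcover hbip hconn hu).mp ?_
      rw [hdk]; exact ⟨k, by ring⟩
    refine Finset.mem_erase.mpr ⟨?_, hfA⟩
    intro hfu
    rw [hfu] at hdk
    rw [SimpleGraph.dist_self] at hdk
    omega
  have hWcard : W.card = M := by
    rw [hW, Finset.card_image_of_injOn, Nat.card_Icc]
    · omega
    · intro k1 h1 k2 h2 heq
      have hk1 := Finset.mem_Icc.mp (by simpa using h1)
      have hk2 := Finset.mem_Icc.mp (by simpa using h2)
      have heq' : f (2 * k1) = f (2 * k2) := heq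
      have e1 := hfd k1 hk1.1 hk1.2
      have e2 := hfd k2 hk2.1 hk2.2
      rw [heq'] at e1
      omega
  have hsumW : ∑ w ∈ W, G.dist u w = M * (M + 1) := by
    rw [hW, Finset.sum_image]
    · have : ∀ k ∈ Finset.Icc 1 M, G.dist u (f (2 * k)) = 2 * k := by
        intro k hk
        exact hfd k (Finset.mem_Icc.mp hk).1 (Finset.mem_Icc.mp hk).2
      rw [Finset.sum_congr rfl this]
      induction M with
      | zero => simp
      | succ t iht =>
          rw [Finset.sum_Icc_succ_top (by omega)]
          rw [iht]
          ring
    · intro k1 h1 k2 h2 heq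
      have hk1 := Finset.mem_Icc.mp h1
      have hk2 := Finset.mem_Icc.mp h2
      have heq' : f (2 * k1) = f (2 * k2) := heq
      have e1 := hfd k1 hk1.1 hk1.2
      have e2 := hfd k2 hk2.1 hk2.2
      rw [heq'] at e1
      omega
  have hsplit : ∑ w ∈ (A.erase u) \ W, G.dist u w + ∑ w ∈ W, G.dist u w
      = ∑ w ∈ A.erase u, G.dist u w := Finset.sum_sdiff hWsub
  have hcardsplit : ((A.erase u) \ W).card + W.card = (A.erase u).card :=
    Finset.card_sdiff_add_card_eq_card hWsub
  have hcerase : (A.erase u).card = A.card - 1 := Finset.card_erase_of_mem hu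
  have hp1 : 1 ≤ A.card := Finset.card_pos.mpr ⟨u, hu⟩
  set R := ((A.erase u) \ W).card with hR
  have hgoal : c * (c - 1) = (c₁ + 1) * c₁ := by rw [hcc, Nat.add_sub_cancel]
  rw [hgoal]
  by_cases hcase : c - 1 ≤ m
  · -- M = c - 1
    have hMc : M = c₁ := by rw [hM, hcc]; omega
    have hrest : ∑ w ∈ (A.erase u) \ W, G.dist u w ≤ R * (2 * c) := by
      apply Finset.sum_le_card_nsmul
      intro w _
      exact hdle u w
    rw [hcc] at hrest
    have key : ∑ w ∈ A.erase u, G.dist u w ≤ R * (2 * (c₁ + 1)) + c₁ * (c₁ + 1) := by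
      rw [← hsplit, hsumW, hMc]
      exact Nat.add_le_add_right hrest _
    have hRP : R + c₁ + 1 = A.card := by omega
    rw [← hRP, hcc]
    nlinarith [key]
  · -- M = m, and m < c - 1
    have hMeq : M = m := min_eq_left (by rw [hcc] at hcase ⊢; omega)
    have hrest : ∑ w ∈ (A.erase u) \ W, G.dist u w ≤ R * (2 * m) := by
      apply Finset.sum_le_card_nsmul
      intro w hw
      have hw' : w ∈ A := Finset.mem_of_mem_erase (Finset.mem_sdiff.mp hw).1
      exact hAdist w hw'
    have key : ∑ w ∈ A.erase u, G.dist u w ≤ R * (2 * m) + m * (m + 1) := by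
      rw [← hsplit, hsumW, hMeq]
      exact Nat.add_le_add_right hrest _
    have hRP : R + m + 1 = A.card := by omega
    have hcm : m + 2 ≤ c₁ + 1 := by rw [hcc] at hcase; omega
    have hcA' : c₁ + 1 ≤ A.card := by rw [hcc] at hcA; exact hcA
    obtain ⟨t1, ht1⟩ : ∃ t1, c₁ = m + 1 + t1 := ⟨c₁ - m - 1, by omega⟩
    obtain ⟨a, ha⟩ : ∃ a, R + m = c₁ + a := ⟨R + m - c₁, by omega⟩
    have haR : a + 1 ≤ R := by omega
    rw [← hRP, hcc]
    nlinarith [key, ht1, ha, haR]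

/-- Key Lemma B: the sum of distances from `u ∈ A` to vertices of `B`. -/
private lemma my_sum_cross_part {A B : Finset V} [DecidableRel G.Adj]
    (hdisj : Disjoint A B) (hcover : A ∪ B = Finset.univ)
    (hbip : ∀ x y : V, G.Adj x y → (x ∈ A ∧ y ∈ B) ∨ (x ∈ B ∧ y ∈ A))
    (hconn : G.Connected) {c : ℕ} (hc1 : 1 ≤ c)
    (hdle : ∀ x y : V, G.dist x y ≤ 2 * c)
    {u : V} (hu : u ∈ A) :
    (∑ w ∈ B, G.dist u w) + B.card + 2 * c * G.degree u
      ≤ 2 * c * B.card + 2 * G.degree u := by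
  classical
  set Nu := G.neighborFinset u with hNu
  have hNsub : Nu ⊆ B := by
    intro w hw
    have hadj : G.Adj u w := (SimpleGraph.mem_neighborFinset G u w).mp hw
    rcases hbip u w hadj with ⟨_, hwB⟩ | ⟨huB, _⟩
    · exact hwB
    · exact absurd huB (Finset.disjoint_left.mp hdisj hu)
  have hsum1 : ∑ w ∈ Nu, G.dist u w = Nu.card := by
    rw [Finset.sum_congr rfl (fun w hw => ?_), Finset.sum_const, smul_eq_mul, mul_one]
    exact SimpleGraph.dist_eq_one_iff_adj.mpr ((SimpleGraph.mem_neighborFinset G u w).mp hw)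
  obtain ⟨c₂, rfl⟩ : ∃ c₂, c = c₂ + 1 := ⟨c - 1, by omega⟩
  have hrest : ∑ w ∈ B \ Nu, G.dist u w ≤ (B \ Nu).card * (2 * c₂ + 1) := by
    apply Finset.sum_le_card_nsmul
    intro w hw
    have hwB : w ∈ B := (Finset.mem_sdiff.mp hw).1
    have hodd : ¬ Even (G.dist u w) := by
      intro hev
      have : w ∈ A := (my_even_dist_iff hdisj hcover hbip hconn hu).mp hev
      exact (Finset.disjoint_left.mp hdisj this) hwB
    have hle := hdle u w
    rcases Nat.even_or_odd (G.dist u w) with h | h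
    · exact absurd h hodd
    · obtain ⟨t, ht⟩ := h
      omega
  have hsplit : ∑ w ∈ B \ Nu, G.dist u w + ∑ w ∈ Nu, G.dist u w
      = ∑ w ∈ B, G.dist u w := Finset.sum_sdiff hNsub
  have hcards : (B \ Nu).card + Nu.card = B.card := Finset.card_sdiff_add_card_eq_card hNsub
  have hdeg : G.degree u = Nu.card := rfl
  set R := (B \ Nu).card
  set D := Nu.card
  nlinarith [hsplit, hcards, hsum1, hrest]

private lemma my_sum_own_part_real {A B : Finset V}
    (hdisj : Disjoint A B) (hcover : A ∪ B = Finset.univ)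
    (hbip : ∀ x y : V, G.Adj x y → (x ∈ A ∧ y ∈ B) ∨ (x ∈ B ∧ y ∈ A))
    (hconn : G.Connected) {c : ℕ} (hc1 : 1 ≤ c)
    (hdle : ∀ x y : V, G.dist x y ≤ 2 * c) {z0 zd : V} (hz : G.dist z0 zd = 2 * c)
    (hcA : c ≤ A.card)
    {u : V} (hu : u ∈ A) :
    (∑ w ∈ A.erase u, (G.dist u w : ℝ)) ≤
      2 * (c:ℝ) * A.card - 2 * c - c * ((c:ℝ) - 1) := by
  have h := my_sum_own_part hdisj hcover hbip hconn hc1 hdle hz hcA hu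
  have h' : (((∑ w ∈ A.erase u, G.dist u w) + c * (c - 1) + 2 * c : ℕ) : ℝ)
      ≤ ((2 * c * A.card : ℕ) : ℝ) := Nat.cast_le.mpr h
  push_cast [Nat.cast_sub hc1] at h'
  linarith

private lemma my_sum_cross_part_real {A B : Finset V} [DecidableRel G.Adj]
    (hdisj : Disjoint A B) (hcover : A ∪ B = Finset.univ)
    (hbip : ∀ x y : V, G.Adj x y → (x ∈ A ∧ y ∈ B) ∨ (x ∈ B ∧ y ∈ A))
    (hconn : G.Connected) {c : ℕ} (hc1 : 1 ≤ c)
    (hdle : ∀ x y : V, G.dist x y ≤ 2 * c)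
    {u : V} (hu : u ∈ A) {δ : ℕ} (hδ : δ ≤ G.degree u) :
    (∑ w ∈ B, (G.dist u w : ℝ)) ≤
      (2 * (c:ℝ) - 1) * B.card - (2 * (c:ℝ) - 2) * δ := by
  have h := my_sum_cross_part hdisj hcover hbip hconn hc1 hdle hu
  have h' : (((∑ w ∈ B, G.dist u w) + B.card + 2 * c * G.degree u : ℕ) : ℝ)
      ≤ ((2 * c * B.card + 2 * G.degree u : ℕ) : ℝ) := Nat.cast_le.mpr h
  push_cast at h'
  have hδ' : (δ : ℝ) ≤ (G.degree u : ℝ) := Nat.cast_le.mpr hδ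
  have hc' : (1:ℝ) ≤ (c:ℝ) := by exact_mod_cast hc1
  nlinarith

/-- One-sided estimate for the weighted eigen-inequality. -/
private lemma my_one_side {A B : Finset V} [DecidableRel G.Adj]
    (hdisj : Disjoint A B) (hcover : A ∪ B = Finset.univ)
    (hbip : ∀ x y : V, G.Adj x y → (x ∈ A ∧ y ∈ B) ∨ (x ∈ B ∧ y ∈ A))
    (hconn : G.Connected) {c : ℕ} (hc1 : 1 ≤ c)
    (hdle : ∀ x y : V, G.dist x y ≤ 2 * c) {z0 zd : V} (hz : G.dist z0 zd = 2 * c)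
    (hcA : c ≤ A.card)
    {z : V → ℝ} (hz0 : ∀ i, 0 ≤ z i) {u v : V} (hu : u ∈ A) (hv : v ∈ B)
    (humax : ∀ w ∈ A, z w ≤ z u) (hvmax : ∀ w ∈ B, z w ≤ z v)
    {δ : ℕ} (hδ : δ ≤ G.degree u) :
    ∑ w, (G.dist u w : ℝ) * z w ≤
      (2 * (c:ℝ) * A.card - 2 * c - c * ((c:ℝ) - 1)) * z u
        + ((2 * (c:ℝ) - 1) * B.card - (2 * (c:ℝ) - 2) * δ) * z v := by
  have hsplitc : ∑ w, (G.dist u w : ℝ) * z w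
      = (∑ w ∈ A, (G.dist u w : ℝ) * z w) + ∑ w ∈ B, (G.dist u w : ℝ) * z w := by
    rw [← Finset.sum_union hdisj, hcover]
  have hAsum : ∑ w ∈ A, (G.dist u w : ℝ) * z w
      = ∑ w ∈ A.erase u, (G.dist u w : ℝ) * z w := by
    rw [← Finset.sum_erase_add A _ hu, SimpleGraph.dist_self]
    simp
  have hA1 : ∑ w ∈ A.erase u, (G.dist u w : ℝ) * z w
      ≤ (∑ w ∈ A.erase u, (G.dist u w : ℝ)) * z u := by
    rw [Finset.sum_mul]
    apply Finset.sum_le_sum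
    intro w hw
    exact mul_le_mul_of_nonneg_left (humax w (Finset.mem_of_mem_erase hw)) (Nat.cast_nonneg _)
  have hA2 : (∑ w ∈ A.erase u, (G.dist u w : ℝ)) * z u
      ≤ (2 * (c:ℝ) * A.card - 2 * c - c * ((c:ℝ) - 1)) * z u :=
    mul_le_mul_of_nonneg_right
      (my_sum_own_part_real hdisj hcover hbip hconn hc1 hdle hz hcA hu) (hz0 u)
  have hB1 : ∑ w ∈ B, (G.dist u w : ℝ) * z w
      ≤ (∑ w ∈ B, (G.dist u w : ℝ)) * z v := by
    rw [Finset.sum_mul]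
    apply Finset.sum_le_sum
    intro w hw
    exact mul_le_mul_of_nonneg_left (hvmax w hw) (Nat.cast_nonneg _)
  have hB2 : (∑ w ∈ B, (G.dist u w : ℝ)) * z v
      ≤ ((2 * (c:ℝ) - 1) * B.card - (2 * (c:ℝ) - 2) * δ) * z v :=
    mul_le_mul_of_nonneg_right
      (my_sum_cross_part_real hdisj hcover hbip hconn hc1 hdle hu hδ) (hz0 v)
  rw [hsplitc, hAsum]
  linarith

end helpers

/-- **Theorem 5 (even diameter case).** For a connected bipartite graph `G` with `n`
vertices, even diameter `d`, bipartition `A ∪ B` with `|A| = p`, `|B| = q`,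
`p + q = n`, and minimum degrees `δ_A`, `δ_B` in `A`, `B`, we have
`ρ(G) ≤ (d/2)(n-1-d/2) + (1/2)√(d²n² + 4δ_Aδ_B(d-2)² - 4pq(2d-1) - 4(d-1)(d-2)(pδ_A + qδ_B))`. -/
theorem distSpectralRadius_bipartite_upper_bound_even {n : ℕ} (G : SimpleGraph (Fin n))
    [DecidableRel G.Adj] (hconn : G.Connected) (A B : Finset (Fin n)) (p q d : ℕ)
    (hdisj : Disjoint A B) (hcover : A ∪ B = Finset.univ)
    (hA : A.card = p) (hB : B.card = q) (hpq : p + q = n)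
    (hbip : ∀ x y : Fin n, G.Adj x y → (x ∈ A ∧ y ∈ B) ∨ (x ∈ B ∧ y ∈ A))
    (hdle : ∀ x y : Fin n, G.dist x y ≤ d) (hdeq : ∃ x y : Fin n, G.dist x y = d)
    (δA δB : ℕ)
    (hδAmem : ∃ a ∈ A, G.degree a = δA) (hδAmin : ∀ a ∈ A, δA ≤ G.degree a)
    (hδBmem : ∃ b ∈ B, G.degree b = δB) (hδBmin : ∀ b ∈ B, δB ≤ G.degree b)
    (hd : Even d) :
    distSpectralRadius G ≤
      (d : ℝ) / 2 * ((n : ℝ) - 1 - (d : ℝ) / 2) +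
        1 / 2 *
          Real.sqrt ((d : ℝ) ^ 2 * (n : ℝ) ^ 2 +
            4 * (δA : ℝ) * (δB : ℝ) * ((d : ℝ) - 2) ^ 2 -
            4 * (p : ℝ) * (q : ℝ) * (2 * (d : ℝ) - 1) -
            4 * ((d : ℝ) - 1) * ((d : ℝ) - 2) * ((p : ℝ) * (δA : ℝ) + (q : ℝ) * (δB : ℝ))) := by
  classical
  obtain ⟨c, hc⟩ := hd
  have hdc : d = 2 * c := by omega
  subst hdc
  obtain ⟨a0, ha0A, ha0deg⟩ := hδAmem
  obtain ⟨b0, hb0B, hb0deg⟩ := hδBmem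
  have hab : a0 ≠ b0 := by
    intro h
    exact (Finset.disjoint_left.mp hdisj ha0A) (h ▸ hb0B)
  have hc1 : 1 ≤ c := by
    have h1 : 0 < G.dist a0 b0 := hconn.pos_dist_of_ne hab
    have h2 := hdle a0 b0
    omega
  obtain ⟨z0, zd, hzd⟩ := hdeq
  -- swapped-part hypotheses
  have hdisj' : Disjoint B A := hdisj.symm
  have hcover' : B ∪ A = Finset.univ := by rw [Finset.union_comm]; exact hcover
  have hbip' : ∀ x y : Fin n, G.Adj x y → (x ∈ B ∧ y ∈ A) ∨ (x ∈ A ∧ y ∈ B) :=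
    fun x y h => (hbip x y h).symm
  -- both parts have at least c vertices
  have hmemAB : ∀ x : Fin n, x ∈ A ∨ x ∈ B := by
    intro x
    have : x ∈ A ∪ B := by rw [hcover]; exact Finset.mem_univ x
    exact Finset.mem_union.mp this
  have hparts : c ≤ p ∧ c ≤ q := by
    rcases hmemAB z0 with h | h
    · have := my_part_card hdisj hcover hbip hconn hzd h
      rw [hA, hB] at this
      exact this
    · have := my_part_card hdisj' hcover' hbip' hconn hzd h
      rw [hA, hB] at this
      exact ⟨this.2, this.1⟩
  have hcp : c ≤ p := hparts.1
  have hcq : c ≤ q := hparts.2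
  -- degree bounds
  have hdegB : ∀ a ∈ A, G.degree a ≤ q := by
    intro a ha
    have hsub : G.neighborFinset a ⊆ B := by
      intro w hw
      have hadj : G.Adj a w := (SimpleGraph.mem_neighborFinset G a w).mp hw
      rcases hbip a w hadj with ⟨_, hwB⟩ | ⟨haB, _⟩
      · exact hwB
      · exact absurd haB (Finset.disjoint_left.mp hdisj ha)
    calc G.degree a = (G.neighborFinset a).card := rfl
    _ ≤ B.card := Finset.card_le_card hsub
    _ = q := hB
  have hdegA : ∀ b ∈ B, G.degree b ≤ p := by
    intro b hb
    have hsub : G.neighborFinset b ⊆ A := by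
      intro w hw
      have hadj : G.Adj b w := (SimpleGraph.mem_neighborFinset G b w).mp hw
      rcases hbip b w hadj with ⟨hbA, _⟩ | ⟨_, hwA⟩
      · exact absurd hbA (Finset.disjoint_right.mp hdisj hb)
      · exact hwA
    calc G.degree b = (G.neighborFinset b).card := rfl
    _ ≤ A.card := Finset.card_le_card hsub
    _ = p := hA
  have hδAq : δA ≤ q := ha0deg ▸ hdegB a0 ha0A
  have hδBp : δB ≤ p := hb0deg ▸ hdegA b0 hb0B
  -- real abbreviations
  have hcr : (1:ℝ) ≤ (c:ℝ) := by exact_mod_cast hc1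
  have hpr : (c:ℝ) ≤ (p:ℝ) := by exact_mod_cast hcp
  have hqr : (c:ℝ) ≤ (q:ℝ) := by exact_mod_cast hcq
  have hδAr : (δA:ℝ) ≤ (q:ℝ) := by exact_mod_cast hδAq
  have hδBr : (δB:ℝ) ≤ (p:ℝ) := by exact_mod_cast hδBp
  set a1 : ℝ := 2 * (c:ℝ) * p - 2 * c - c * ((c:ℝ) - 1) with ha1
  set a2 : ℝ := 2 * (c:ℝ) * q - 2 * c - c * ((c:ℝ) - 1) with ha2
  set b1 : ℝ := (2 * (c:ℝ) - 1) * q - (2 * (c:ℝ) - 2) * δA with hb1'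
  set b2 : ℝ := (2 * (c:ℝ) - 1) * p - (2 * (c:ℝ) - 2) * δB with hb2'
  have hb1nn : 0 ≤ b1 := by rw [hb1']; nlinarith
  have hb2nn : 0 ≤ b2 := by rw [hb2']; nlinarith
  have ha1nn : 0 ≤ a1 := by rw [ha1]; nlinarith
  have hnr : (n:ℝ) = (p:ℝ) + (q:ℝ) := by exact_mod_cast hpq.symm
  have hdr : ((2 * c : ℕ) : ℝ) = 2 * (c:ℝ) := by push_cast; ring
  -- rewrite the right-hand side
  have hfirst : ((2 * c : ℕ) : ℝ) / 2 * ((n : ℝ) - 1 - ((2 * c : ℕ) : ℝ) / 2)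
      = (a1 + a2) / 2 := by
    rw [hdr, hnr, ha1, ha2]; ring
  have hsqrt_arg : ((2 * c : ℕ) : ℝ) ^ 2 * (n : ℝ) ^ 2 +
      4 * (δA : ℝ) * (δB : ℝ) * (((2 * c : ℕ) : ℝ) - 2) ^ 2 -
      4 * (p : ℝ) * (q : ℝ) * (2 * ((2 * c : ℕ) : ℝ) - 1) -
      4 * (((2 * c : ℕ) : ℝ) - 1) * (((2 * c : ℕ) : ℝ) - 2) *
        ((p : ℝ) * (δA : ℝ) + (q : ℝ) * (δB : ℝ))
      = (a1 - a2) ^ 2 + 4 * (b1 * b2) := by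
    rw [hdr, hnr, ha1, ha2, hb1', hb2']; ring
  rw [hfirst, hsqrt_arg]
  -- apply the quadratic bound
  apply my_quad_bound hb1nn hb2nn
  rcases lt_or_ge (distSpectralRadius G) 0 with hneg | hlam0
  · left; linarith
  -- spectral setup
  haveI : Nonempty (Fin n) := ⟨a0⟩
  obtain ⟨i0, hi0⟩ := exists_eq_ciSup_of_finite
    (f := fun i => (distMatrix_isHermitian G).eigenvalues i)
  set lam := distSpectralRadius G with hlam
  have hlam_eq : (distMatrix_isHermitian G).eigenvalues i0 = lam := hi0
  set y : Fin n → ℝ := ⇑((distMatrix_isHermitian G).eigenvectorBasis i0) with hy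
  have hmul : (distMatrix G).mulVec y = lam • y := by
    rw [hy, (distMatrix_isHermitian G).mulVec_eigenvectorBasis i0, hlam_eq]
  have hynorm : ‖(distMatrix_isHermitian G).eigenvectorBasis i0‖ = 1 :=
    (distMatrix_isHermitian G).eigenvectorBasis.orthonormal.1 i0
  have hyne : ∃ i, y i ≠ 0 := by
    by_contra h
    push_neg at h
    have hz : (distMatrix_isHermitian G).eigenvectorBasis i0 = 0 := by
      ext i
      exact h i
    rw [hz, norm_zero] at hynorm
    norm_num at hynorm
  set z : Fin n → ℝ := fun i => |y i| with hzdef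
  have hz0 : ∀ i, 0 ≤ z i := fun i => abs_nonneg _
  have hsub : ∀ i, lam * z i ≤ ∑ w, (G.dist i w : ℝ) * z w := by
    intro i
    have h1 : ((distMatrix G).mulVec y) i = lam * y i := by rw [hmul]; simp
    have h2 : ((distMatrix G).mulVec y) i = ∑ w, (G.dist i w : ℝ) * y w := by
      simp [Matrix.mulVec, dotProduct, distMatrix]
    calc lam * z i = |lam * y i| := by
          rw [hzdef, abs_mul, abs_of_nonneg hlam0]
    _ = |∑ w, (G.dist i w : ℝ) * y w| := by rw [← h2, h1]
    _ ≤ ∑ w, |(G.dist i w : ℝ) * y w| := Finset.abs_sum_le_sum_abs _ _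
    _ = ∑ w, (G.dist i w : ℝ) * z w := by
          apply Finset.sum_congr rfl
          intro w _
          rw [abs_mul, abs_of_nonneg (by positivity : (0:ℝ) ≤ (G.dist i w : ℝ))]
  -- argmax vertices
  obtain ⟨u, huA, humax⟩ := Finset.exists_max_image A z ⟨a0, ha0A⟩
  obtain ⟨v, hvB, hvmax⟩ := Finset.exists_max_image B z ⟨b0, hb0B⟩
  have hcA' : c ≤ A.card := by rw [hA]; exact hcp
  have hcB' : c ≤ B.card := by rw [hB]; exact hcq
  -- the two key eigen-inequalities
  have hineq1 : lam * z u ≤ a1 * z u + b1 * z v := by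
    have h := my_one_side hdisj hcover hbip hconn hc1 hdle hzd hcA' hz0 huA hvB
      humax hvmax (hδAmin u huA)
    rw [hA, hB] at h
    rw [ha1, hb1']
    exact (hsub u).trans h
  have hineq2 : lam * z v ≤ a2 * z v + b2 * z u := by
    have h := my_one_side hdisj' hcover' hbip' hconn hc1 hdle hzd hcB' hz0 hvB huA
      hvmax humax (hδBmin v hvB)
    rw [hA, hB] at h
    rw [ha2, hb2']
    exact (hsub v).trans h
  have hzupos_or : 0 < z u ∨ 0 < z v := by
    obtain ⟨i1, hi1⟩ := hyne
    have hpos : 0 < z i1 := abs_pos.mpr hi1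
    rcases hmemAB i1 with h | h
    · left; exact lt_of_lt_of_le hpos (humax i1 h)
    · right; exact lt_of_lt_of_le hpos (hvmax i1 h)
  by_cases hzv : z v ≤ 0
  · have hzv0 : z v = 0 := le_antisymm hzv (hz0 v)
    have hzu : 0 < z u := by
      rcases hzupos_or with h | h
      · exact h
      · rw [hzv0] at h; exact absurd h (lt_irrefl 0)
    left
    have h1 := hineq1
    rw [hzv0, mul_zero, add_zero] at h1
    exact le_of_mul_le_mul_right h1 hzu
  push_neg at hzv
  by_cases hzu : z u ≤ 0
  · have hzu0 : z u = 0 := le_antisymm hzu (hz0 u)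
    right; left
    have h2 := hineq2
    rw [hzu0, mul_zero, add_zero] at h2
    exact le_of_mul_le_mul_right h2 hzv
  push_neg at hzu
  by_cases hla1 : lam ≤ a1
  · exact Or.inl hla1
  by_cases hla2 : lam ≤ a2
  · exact Or.inr (Or.inl hla2)
  right; right
  push_neg at hla1 hla2
  have k1 : (lam - a1) * z u ≤ b1 * z v := by rw [sub_mul]; linarith
  have k2 : (lam - a2) * z v ≤ b2 * z u := by rw [sub_mul]; linarith
  have hprod : ((lam - a1) * z u) * ((lam - a2) * z v) ≤ (b1 * z v) * (b2 * z u) :=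
    mul_le_mul k1 k2 (mul_nonneg (by linarith) (le_of_lt hzv))
      (mul_nonneg hb1nn (le_of_lt hzv))
  have hzuv : 0 < z u * z v := mul_pos hzu hzv
  have hfin : (lam - a1) * (lam - a2) * (z u * z v) ≤ b1 * b2 * (z u * z v) := by
    calc (lam - a1) * (lam - a2) * (z u * z v)
        = ((lam - a1) * z u) * ((lam - a2) * z v) := by ring
    _ ≤ (b1 * z v) * (b2 * z u) := hprod
    _ = b1 * b2 * (z u * z v) := by ring
  exact le_of_mul_le_mul_right hfin hzuv
end

section
/- Let G be a connected bipartite graph with n vertices, diameter d, and bipartition V(G) = A ∪ B with |A| = p, |B| = q, p + q = n; let δ_A and δ_B be the minimum degrees among vertices of A and of B, respectively. If d is odd, then ρ(G) ≤ (2(d−1)n + 1 − d²)/4 + (1/2)·√((d−1)²n² + 4δ_Aδ_B(d−1)² + 4pq(2d−1) − 4d(d−1)(pδ_A + qδ_B)). -/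
open SimpleGraph Finset Matrix

set_option linter.unusedSectionVars false
section GraphLemmas

variable {V : Type*} [Fintype V] [DecidableEq V] {G : SimpleGraph V}

/-- step toward target along a geodesic -/
lemma step_toward (hconn : G.Connected) {z w : V} {s : ℕ} (h : G.dist z w = s + 1) :
    ∃ z', G.Adj z z' ∧ G.dist z' w = s := by
  obtain ⟨p, hp⟩ := (hconn.preconnected z w).exists_walk_length_eq_dist
  cases p with
  | nil => simp at h
  | cons hadj q =>
    refine ⟨_, hadj, le_antisymm ?_ ?_⟩
    · have := SimpleGraph.dist_le q
      simp only [SimpleGraph.Walk.length_cons, h] at hp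
      omega
    · obtain ⟨r, hr⟩ := (hconn.preconnected _ w).exists_walk_length_eq_dist
      have h2 := SimpleGraph.dist_le (SimpleGraph.Walk.cons hadj r)
      simp only [SimpleGraph.Walk.length_cons, hr, h] at h2
      omega

lemma exists_intermediate (hconn : G.Connected) (u w : V) :
    ∀ k, k ≤ G.dist u w → ∃ z, G.dist u z = k ∧ k + G.dist z w = G.dist u w := by
  intro k
  induction k with
  | zero => intro _; exact ⟨u, SimpleGraph.dist_self, by simp⟩
  | succ k ih =>
    intro hk
    obtain ⟨z, hz1, hz2⟩ := ih (by omega)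
    have hzw : G.dist z w = (G.dist u w - k - 1) + 1 := by omega
    obtain ⟨z', hadj, hz'⟩ := step_toward hconn hzw
    refine ⟨z', le_antisymm ?_ ?_, by omega⟩
    · have h1 : G.dist u z' ≤ G.dist u z + G.dist z z' := hconn.dist_triangle
      have h2 : G.dist z z' ≤ 1 := by
        have := SimpleGraph.dist_le (SimpleGraph.Walk.cons hadj SimpleGraph.Walk.nil)
        simpa using this
      omega
    · have h1 : G.dist u w ≤ G.dist u z' + G.dist z' w := hconn.dist_triangle
      omega

end GraphLemmas


set_option linter.unusedSectionVars false

section Parity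

variable {V : Type*} [Fintype V] [DecidableEq V] {G : SimpleGraph V}
variable {A B : Finset V}

lemma walk_parity (hdisj : Disjoint A B) (hcover : A ∪ B = Finset.univ)
    (hbip : ∀ x y : V, G.Adj x y → (x ∈ A ∧ y ∈ B) ∨ (x ∈ B ∧ y ∈ A))
    {x y : V} (p : G.Walk x y) : Even p.length ↔ (x ∈ A ↔ y ∈ A) := by
  induction p with
  | nil => simp
  | @cons x z y h q ih =>
    rw [SimpleGraph.Walk.length_cons, Nat.even_add_one, ih]
    have hz : z ∈ A ↔ x ∉ A := by
      rcases hbip x z h with ⟨hx, hz⟩ | ⟨hx, hz⟩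
      · constructor
        · intro hzA _; exact (Finset.disjoint_left.mp hdisj hzA) hz
        · intro hxA; exact absurd hx hxA
      · constructor
        · intro _ hxA; exact (Finset.disjoint_left.mp hdisj hxA) hx
        · intro _
          have : z ∈ A ∪ B := hcover ▸ Finset.mem_univ z
          rcases Finset.mem_union.mp this with h' | h'
          · exact h'
          · exact absurd hz (Finset.disjoint_right.mp hdisj h')
    tauto

lemma dist_parity (hconn : G.Connected) (hdisj : Disjoint A B)
    (hcover : A ∪ B = Finset.univ)
    (hbip : ∀ x y : V, G.Adj x y → (x ∈ A ∧ y ∈ B) ∨ (x ∈ B ∧ y ∈ A))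
    (x y : V) : Even (G.dist x y) ↔ (x ∈ A ↔ y ∈ A) := by
  obtain ⟨p, hp⟩ := (hconn.preconnected x y).exists_walk_length_eq_dist
  rw [← hp]
  exact walk_parity hdisj hcover hbip p

end Parity
set_option linter.unusedSectionVars false
section Levels
variable {V : Type*} [Fintype V] [DecidableEq V] {G : SimpleGraph V} {A B : Finset V}

/-- jar: at least j vertices of A at distance < 2j from u, given a witness at distance ≥ 2j -/
lemma level_count (hconn : G.Connected) (hdisj : Disjoint A B)
    (hcover : A ∪ B = Finset.univ)
    (hbip : ∀ x y : V, G.Adj x y → (x ∈ A ∧ y ∈ B) ∨ (x ∈ B ∧ y ∈ A))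
    {u : V} (hu : u ∈ A) {w : V} {j : ℕ} (hj : 2 * j ≤ G.dist u w) :
    j ≤ (A.filter fun v => G.dist u v < 2 * j).card := by
  have hz : ∀ i : Fin j, ∃ z : V, G.dist u z = 2 * i := by
    intro i
    obtain ⟨z, hz1, _⟩ := exists_intermediate hconn u w (2 * i) (by have := i.2; omega)
    exact ⟨z, hz1⟩
  choose f hf using hz
  have hmaps : ∀ i : Fin j, f i ∈ A.filter fun v => G.dist u v < 2 * j := by
    intro i
    rw [Finset.mem_filter]
    constructor
    · have : Even (G.dist u (f i)) := by rw [hf i]; exact even_two_mul _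
      exact ((dist_parity hconn hdisj hcover hbip u (f i)).mp this).mp hu
    · rw [hf i]; have := i.2; omega
  calc j = (Finset.univ : Finset (Fin j)).card := by simp
    _ ≤ _ := Finset.card_le_card_of_injOn f (fun i _ => hmaps i) (by
        intro i _ i' _ hii
        have : 2 * (i : ℕ) = 2 * (i' : ℕ)  := by rw [← hf i, ← hf i', hii]
        exact Fin.ext (by omega))

end Levels

lemma gauss_sum_two (m : ℕ) : ∑ j ∈ Finset.Icc 1 m, 2 * j = m * (m + 1) := by
  induction m with
  | zero => simp
  | succ m ih => rw [Finset.sum_Icc_succ_top (by omega), ih]; ring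
set_option linter.unusedSectionVars false
section RowSums
variable {V : Type*} [Fintype V] [DecidableEq V] {G : SimpleGraph V} {A B : Finset V}

lemma rowsum_within (hconn : G.Connected) (hdisj : Disjoint A B)
    (hcover : A ∪ B = Finset.univ)
    (hbip : ∀ x y : V, G.Adj x y → (x ∈ A ∧ y ∈ B) ∨ (x ∈ B ∧ y ∈ A))
    {u : V} (hu : u ∈ A) {m : ℕ} (hdle : ∀ x y : V, G.dist x y ≤ 2 * m + 1)
    (hmA : m ≤ A.card) :
    (∑ v ∈ A, G.dist u v) + m * (m + 1) ≤ 2 * m * A.card := by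


  have hstep1 : ∀ v ∈ A, G.dist u v = ∑ j ∈ Finset.Icc 1 m, (if 2 * j ≤ G.dist u v then 2 else 0) := by
    intro v hv
    obtain ⟨s, hs⟩ : Even (G.dist u v) :=
      (dist_parity hconn hdisj hcover hbip u v).mpr (iff_of_true hu hv)
    have hsle : s ≤ m := by have := hdle u v; omega
    rw [← Finset.sum_filter]
    have hfe : (Finset.Icc 1 m).filter (fun j => 2 * j ≤ G.dist u v) = Finset.Icc 1 s := by
      ext a; simp only [Finset.mem_filter, Finset.mem_Icc]; omega
    rw [hfe, Finset.sum_const, Nat.card_Icc, smul_eq_mul]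
    omega
  have hstep2 : (∑ v ∈ A, G.dist u v)
      = ∑ j ∈ Finset.Icc 1 m, 2 * ((A.filter fun v => 2 * j ≤ G.dist u v).card) := by
    rw [Finset.sum_congr rfl hstep1, Finset.sum_comm]
    refine Finset.sum_congr rfl fun j _ => ?_
    rw [← Finset.sum_filter, Finset.sum_const, smul_eq_mul]
    ring
  have hstep3 : ∀ j ∈ Finset.Icc 1 m,
      2 * ((A.filter fun v => 2 * j ≤ G.dist u v).card) + 2 * j ≤ 2 * A.card := by
    intro j hj
    rcases (A.filter fun v => 2 * j ≤ G.dist u v).eq_empty_or_nonempty with he | ⟨w, hw⟩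
    · rw [he]; simp only [Finset.card_empty]
      rw [Finset.mem_Icc] at hj; omega
    · rw [Finset.mem_filter] at hw
      have hlc := level_count hconn hdisj hcover hbip hu hw.2
      have hdisj2 : Disjoint (A.filter fun v => 2 * j ≤ G.dist u v)
          (A.filter fun v => G.dist u v < 2 * j) := by
        rw [Finset.disjoint_left]
        intro a ha ha'
        rw [Finset.mem_filter] at ha ha'
        omega
      have hsub : (A.filter fun v => 2 * j ≤ G.dist u v)
          ∪ (A.filter fun v => G.dist u v < 2 * j) ⊆ A := by
        intro a ha
        rcases Finset.mem_union.mp ha with h | h <;> exact (Finset.mem_filter.mp h).1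
      have := Finset.card_le_card hsub
      rw [Finset.card_union_of_disjoint hdisj2] at this
      omega
  calc (∑ v ∈ A, G.dist u v) + m * (m + 1)
      = ∑ j ∈ Finset.Icc 1 m, (2 * ((A.filter fun v => 2 * j ≤ G.dist u v).card) + 2 * j) := by
        rw [Finset.sum_add_distrib, ← hstep2, gauss_sum_two]
    _ ≤ ∑ _j ∈ Finset.Icc 1 m, 2 * A.card := Finset.sum_le_sum hstep3
    _ = 2 * m * A.card := by rw [Finset.sum_const, Nat.card_Icc, Nat.add_sub_cancel, smul_eq_mul]; ring
end RowSums
lemma rowsum_across {V : Type*} [Fintype V] [DecidableEq V] {G : SimpleGraph V}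
    [DecidableRel G.Adj] {A B : Finset V} (hdisj : Disjoint A B)
    (hbip : ∀ x y : V, G.Adj x y → (x ∈ A ∧ y ∈ B) ∨ (x ∈ B ∧ y ∈ A))
    {u : V} (hu : u ∈ A) {d : ℕ} (hdle : ∀ x y : V, G.dist x y ≤ d) :
    (∑ v ∈ B, G.dist u v) + (G.degree u) * d ≤ G.degree u + B.card * d := by
  have hNB : G.neighborFinset u ⊆ B := by
    intro v hv
    rw [SimpleGraph.mem_neighborFinset] at hv
    rcases hbip u v hv with ⟨_, h⟩ | ⟨h, _⟩
    · exact h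
    · exact absurd h (Finset.disjoint_left.mp hdisj hu)
  have hsplit : (∑ v ∈ B \ G.neighborFinset u, G.dist u v) + ∑ v ∈ G.neighborFinset u, G.dist u v
      = ∑ v ∈ B, G.dist u v := Finset.sum_sdiff hNB
  have h1 : ∑ v ∈ G.neighborFinset u, G.dist u v ≤ (G.neighborFinset u).card := by
    calc ∑ v ∈ G.neighborFinset u, G.dist u v ≤ ∑ _v ∈ G.neighborFinset u, 1 := by
          refine Finset.sum_le_sum fun v hv => ?_
          rw [SimpleGraph.mem_neighborFinset] at hv
          have := SimpleGraph.dist_le (SimpleGraph.Walk.cons hv SimpleGraph.Walk.nil)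
          simpa using this
      _ = (G.neighborFinset u).card := by simp
  have h2 : ∑ v ∈ B \ G.neighborFinset u, G.dist u v ≤ (B.card - (G.neighborFinset u).card) * d := by
    calc ∑ v ∈ B \ G.neighborFinset u, G.dist u v ≤ ∑ _v ∈ B \ G.neighborFinset u, d :=
          Finset.sum_le_sum fun v _ => hdle u v
      _ = (B.card - (G.neighborFinset u).card) * d := by
          rw [Finset.sum_const, Finset.card_sdiff_of_subset hNB, smul_eq_mul]
  have hcard : (G.neighborFinset u).card ≤ B.card := Finset.card_le_card hNB
  rw [SimpleGraph.degree]
  have hsub : ((B.card - (G.neighborFinset u).card) * d) + (G.neighborFinset u).card * d = B.card * d := by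
    rw [← Nat.add_mul]; congr 1; omega
  omega
lemma eig_bound {V : Type*} [Fintype V] [DecidableEq V] (M : Matrix V V ℝ)
    (hM : M.IsHermitian) (hnn : ∀ i j, 0 ≤ M i j) (A B : Finset V)
    (hdisj : Disjoint A B) (hcover : A ∪ B = Finset.univ)
    (α β γ ε : ℝ) (hα0 : 0 ≤ α) (hγ : 0 ≤ γ) (hε : 0 ≤ ε)
    (hrowA : ∀ i ∈ A, (∑ j ∈ A, M i j ≤ α) ∧ (∑ j ∈ B, M i j ≤ γ))
    (hrowB : ∀ i ∈ B, (∑ j ∈ B, M i j ≤ β) ∧ (∑ j ∈ A, M i j ≤ ε))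
    (hA : A.Nonempty) (hB : B.Nonempty) (i : V) :
    hM.eigenvalues i ≤ (α + β) / 2 + Real.sqrt ((α - β) ^ 2 + 4 * γ * ε) / 2 := by
  set lam := hM.eigenvalues i with hlam
  set x : V → ℝ := ⇑(hM.eigenvectorBasis i) with hx
  have heig : M *ᵥ x = lam • x := hM.mulVec_eigenvectorBasis i
  have hxne : ∃ k, x k ≠ 0 := by
    by_contra hc
    push_neg at hc
    have : (hM.eigenvectorBasis i) = 0 := by
      ext k; exact hc k
    have hnorm := hM.eigenvectorBasis.orthonormal.1 i
    rw [this] at hnorm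
    simp at hnorm
  set y : V → ℝ := fun k => |x k| with hy
  have hynn : ∀ k, 0 ≤ y k := fun k => abs_nonneg _
  have key : ∀ jj, |lam| * y jj ≤ ∑ k, M jj k * y k := by
    intro jj
    have h1 : (M *ᵥ x) jj = lam * x jj := by rw [heig]; rfl
    have h2 : ∑ k, M jj k * x k = lam * x jj := by
      rw [← h1]; rfl
    calc |lam| * y jj = |∑ k, M jj k * x k| := by rw [h2, abs_mul]
      _ ≤ ∑ k, |M jj k * x k| := Finset.abs_sum_le_sum_abs _ _
      _ = ∑ k, M jj k * y k := by
          refine Finset.sum_congr rfl fun k _ => ?_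
          rw [abs_mul, abs_of_nonneg (hnn jj k)]
  obtain ⟨a, haA, hamax⟩ := Finset.exists_max_image A y hA
  obtain ⟨b, hbB, hbmax⟩ := Finset.exists_max_image B y hB
  have hsplit : ∀ jj, ∑ k, M jj k * y k = (∑ k ∈ A, M jj k * y k) + ∑ k ∈ B, M jj k * y k := by
    intro jj
    rw [← Finset.sum_union hdisj, hcover]
  have hpart : ∀ (jj : V) (s : Finset V) (c cm : ℝ), 0 ≤ cm → (∀ k ∈ s, y k ≤ cm) →
      (∑ k ∈ s, M jj k ≤ c) → ∑ k ∈ s, M jj k * y k ≤ c * cm := by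
    intro jj s c cm hcm hmax hsum
    calc ∑ k ∈ s, M jj k * y k ≤ ∑ k ∈ s, M jj k * cm :=
          Finset.sum_le_sum fun k hk => mul_le_mul_of_nonneg_left (hmax k hk) (hnn jj k)
      _ = (∑ k ∈ s, M jj k) * cm := by rw [Finset.sum_mul]
      _ ≤ c * cm := mul_le_mul_of_nonneg_right hsum hcm
  have i1 : |lam| * y a ≤ α * y a + γ * y b := by
    calc |lam| * y a ≤ ∑ k, M a k * y k := key a
      _ = _ := hsplit a
      _ ≤ α * y a + γ * y b := by
          refine add_le_add ?_ ?_
          · exact hpart a A α (y a) (hynn a) hamax (hrowA a haA).1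
          · exact hpart a B γ (y b) (hynn b) hbmax (hrowA a haA).2
  have i2 : |lam| * y b ≤ ε * y a + β * y b := by
    calc |lam| * y b ≤ ∑ k, M b k * y k := key b
      _ = _ := hsplit b
      _ ≤ ε * y a + β * y b := by
          refine add_le_add ?_ ?_
          · exact hpart b A ε (y a) (hynn a) hamax (hrowB b hbB).2
          · exact hpart b B β (y b) (hynn b) hbmax (hrowB b hbB).1
  set S := Real.sqrt ((α - β) ^ 2 + 4 * γ * ε) with hSdef
  have hS0 : 0 ≤ S := Real.sqrt_nonneg _
  have hSsq : S ^ 2 = (α - β) ^ 2 + 4 * γ * ε := by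
    rw [hSdef, Real.sq_sqrt]; positivity
  have hSge : |α - β| ≤ S := by
    rw [hSdef, ← Real.sqrt_sq_eq_abs]
    apply Real.sqrt_le_sqrt
    nlinarith [mul_nonneg hγ hε]
  have hRα : α ≤ (α + β) / 2 + S / 2 := by
    rcases abs_cases (α - β) with ⟨h1, _⟩ | ⟨h1, _⟩ <;> linarith
  have hRβ : β ≤ (α + β) / 2 + S / 2 := by
    rcases abs_cases (α - β) with ⟨h1, _⟩ | ⟨h1, _⟩ <;> linarith
  by_contra hcon
  push_neg at hcon
  have hlampos : 0 < lam := lt_of_le_of_lt (by linarith) hcon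
  rw [abs_of_pos hlampos] at i1 i2
  have hαlam : α < lam := lt_of_le_of_lt hRα hcon
  have hβlam : β < lam := lt_of_le_of_lt hRβ hcon
  -- positivity of the maxima
  have hmaxpos : 0 < y a ∨ 0 < y b := by
    obtain ⟨k, hk⟩ := hxne
    have hky : 0 < y k := abs_pos.mpr hk
    have : k ∈ A ∪ B := by rw [hcover]; exact Finset.mem_univ k
    rcases Finset.mem_union.mp this with h | h
    · exact Or.inl (lt_of_lt_of_le hky (hamax k h))
    · exact Or.inr (lt_of_lt_of_le hky (hbmax k h))
  have hyApos : 0 < y a := by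
    rcases hmaxpos with h | h
    · exact h
    · by_contra hc
      push_neg at hc
      have hya : y a = 0 := le_antisymm hc (hynn a)
      rw [hya] at i2
      nlinarith
  have hyBpos : 0 < y b := by
    by_contra hc
    push_neg at hc
    have hyb : y b = 0 := le_antisymm hc (hynn b)
    rw [hyb] at i1
    nlinarith
  have j1 : (lam - α) * y a ≤ γ * y b := by linarith
  have j2 : (lam - β) * y b ≤ ε * y a := by linarith
  have hprod : ((lam - α) * y a) * ((lam - β) * y b) ≤ (γ * y b) * (ε * y a) :=
    mul_le_mul j1 j2 (mul_nonneg (by linarith) (hynn b)) (mul_nonneg hγ (hynn b))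
  have hq : (lam - α) * (lam - β) ≤ γ * ε := by
    have h := hprod
    have hpos : 0 < y a * y b := mul_pos hyApos hyBpos
    nlinarith
  have hS2 : S < 2 * lam - α - β := by linarith
  nlinarith [mul_self_nonneg (2 * lam - α - β - S)]
lemma degree_le_of_bip {V : Type*} [Fintype V] [DecidableEq V] {G : SimpleGraph V}
    [DecidableRel G.Adj] {A B : Finset V} (hdisj : Disjoint A B)
    (hbip : ∀ x y : V, G.Adj x y → (x ∈ A ∧ y ∈ B) ∨ (x ∈ B ∧ y ∈ A))
    {u : V} (hu : u ∈ A) : G.degree u ≤ B.card := by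
  rw [← SimpleGraph.card_neighborFinset_eq_degree]
  refine Finset.card_le_card fun v hv => ?_
  rw [SimpleGraph.mem_neighborFinset] at hv
  rcases hbip u v hv with ⟨_, h⟩ | ⟨h, _⟩
  · exact h
  · exact absurd h (Finset.disjoint_left.mp hdisj hu)

set_option maxHeartbeats 1000000 in
/-- **Theorem 5 (odd diameter case).** For a connected bipartite graph `G` with `n`
vertices, odd diameter `d`, bipartition `A ∪ B` with `|A| = p`, `|B| = q`,
`p + q = n`, and minimum degrees `δ_A`, `δ_B` in `A`, `B`, we have
`ρ(G) ≤ (2(d-1)n + 1 - d²)/4 + (1/2)√((d-1)²n² + 4δ_Aδ_B(d-1)² + 4pq(2d-1) - 4d(d-1)(pδ_A + qδ_B))`. -/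
theorem distSpectralRadius_bipartite_upper_bound_odd {n : ℕ} (G : SimpleGraph (Fin n))
    [DecidableRel G.Adj] (hconn : G.Connected) (A B : Finset (Fin n)) (p q d : ℕ)
    (hdisj : Disjoint A B) (hcover : A ∪ B = Finset.univ)
    (hA : A.card = p) (hB : B.card = q) (hpq : p + q = n)
    (hbip : ∀ x y : Fin n, G.Adj x y → (x ∈ A ∧ y ∈ B) ∨ (x ∈ B ∧ y ∈ A))
    (hdle : ∀ x y : Fin n, G.dist x y ≤ d) (hdeq : ∃ x y : Fin n, G.dist x y = d)
    (δA δB : ℕ)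
    (hδAmem : ∃ a ∈ A, G.degree a = δA) (hδAmin : ∀ a ∈ A, δA ≤ G.degree a)
    (hδBmem : ∃ b ∈ B, G.degree b = δB) (hδBmin : ∀ b ∈ B, δB ≤ G.degree b)
    (hd : Odd d) :
    distSpectralRadius G ≤
      (2 * ((d : ℝ) - 1) * (n : ℝ) + 1 - (d : ℝ) ^ 2) / 4 +
        1 / 2 *
          Real.sqrt (((d : ℝ) - 1) ^ 2 * (n : ℝ) ^ 2 +
            4 * (δA : ℝ) * (δB : ℝ) * ((d : ℝ) - 1) ^ 2 +
            4 * (p : ℝ) * (q : ℝ) * (2 * (d : ℝ) - 1) -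
            4 * (d : ℝ) * ((d : ℝ) - 1) * ((p : ℝ) * (δA : ℝ) + (q : ℝ) * (δB : ℝ))) := by
  classical
  have hNe : Nonempty (Fin n) := hconn.nonempty
  obtain ⟨m, hm⟩ := hd
  subst hm
  subst hpq
  -- symmetric versions of the bipartition hypotheses
  have hdisj' : Disjoint B A := hdisj.symm
  have hcover' : B ∪ A = Finset.univ := by rw [Finset.union_comm]; exact hcover
  have hbip' : ∀ x y : Fin (p + q), G.Adj x y → (x ∈ B ∧ y ∈ A) ∨ (x ∈ A ∧ y ∈ B) :=
    fun x y h => (hbip x y h).symm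
  -- a diametral pair with one end in each part
  obtain ⟨x0, y0, hxy0⟩ := hdeq
  have hodd : ¬ Even (G.dist x0 y0) := by
    rw [hxy0]; exact Nat.not_even_iff_odd.mpr ⟨m, rfl⟩
  have hpar := dist_parity hconn hdisj hcover hbip x0 y0
  have hmemx : x0 ∈ A ∪ B := by rw [hcover]; exact Finset.mem_univ _
  have hmemy : y0 ∈ A ∪ B := by rw [hcover]; exact Finset.mem_univ _
  rw [Finset.mem_union] at hmemx hmemy
  obtain ⟨x', y', hx'A, hy'B, hxy'⟩ :
      ∃ x' y' : Fin (p + q), x' ∈ A ∧ y' ∈ B ∧ G.dist x' y' = 2 * m + 1 := by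
    by_cases hx0 : x0 ∈ A
    · have hy0 : y0 ∉ A := by tauto
      have hy0B : y0 ∈ B := by tauto
      exact ⟨x0, y0, hx0, hy0B, hxy0⟩
    · have hx0B : x0 ∈ B := by tauto
      have hy0A : y0 ∈ A := by tauto
      exact ⟨y0, x0, hy0A, hx0B, by rw [SimpleGraph.dist_comm]; exact hxy0⟩
  have hAne : A.Nonempty := ⟨x', hx'A⟩
  have hBne : B.Nonempty := ⟨y', hy'B⟩
  -- m ≤ p and m ≤ q
  have hmp : m ≤ p := by
    have h1 := level_count hconn hdisj hcover hbip hx'A (w := y') (j := m)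
      (by rw [hxy']; omega)
    calc m ≤ _ := h1
      _ ≤ A.card := Finset.card_le_card (Finset.filter_subset _ _)
      _ = p := hA
  have hmq : m ≤ q := by
    have h1 := level_count hconn hdisj' hcover' hbip' hy'B (w := x') (j := m)
      (by rw [SimpleGraph.dist_comm, hxy']; omega)
    calc m ≤ _ := h1
      _ ≤ B.card := Finset.card_le_card (Finset.filter_subset _ _)
      _ = q := hB
  -- δA ≤ q, δB ≤ p
  have hδAq : δA ≤ q := by
    obtain ⟨a0, ha0, hd0⟩ := hδAmem
    have := degree_le_of_bip hdisj hbip ha0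
    omega
  have hδBp : δB ≤ p := by
    obtain ⟨b0, hb0, hd0⟩ := hδBmem
    have := degree_le_of_bip hdisj' hbip' hb0
    omega
  -- the four real bounds
  have hα0 : (0:ℝ) ≤ 2 * m * p - m * (m + 1) := by
    have hn1 : m * (m + 1) ≤ 2 * m * p := by
      rcases Nat.eq_zero_or_pos m with h | h
      · simp [h]
      · calc m * (m + 1) ≤ m * (2 * p) := Nat.mul_le_mul_left _ (by omega)
          _ = 2 * m * p := by ring
    have := (Nat.cast_le (α := ℝ)).mpr hn1
    push_cast at this
    linarith
  have hγ0 : (0:ℝ) ≤ (2 * m + 1) * q - 2 * m * δA := by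
    have hn1 : 2 * m * δA ≤ (2 * m + 1) * q := by
      calc 2 * m * δA ≤ 2 * m * q := Nat.mul_le_mul_left _ hδAq
        _ ≤ (2 * m + 1) * q := Nat.mul_le_mul_right _ (by omega)
    have := (Nat.cast_le (α := ℝ)).mpr hn1
    push_cast at this
    linarith
  have hε0 : (0:ℝ) ≤ (2 * m + 1) * p - 2 * m * δB := by
    have hn1 : 2 * m * δB ≤ (2 * m + 1) * p := by
      calc 2 * m * δB ≤ 2 * m * p := Nat.mul_le_mul_left _ hδBp
        _ ≤ (2 * m + 1) * p := Nat.mul_le_mul_right _ (by omega)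
    have := (Nat.cast_le (α := ℝ)).mpr hn1
    push_cast at this
    linarith
  have hdle' : ∀ x y : Fin (p + q), G.dist x y ≤ 2 * m + 1 := hdle
  -- row sum bounds
  have hrowA : ∀ i ∈ A, (∑ j ∈ A, distMatrix G i j ≤ 2 * (m:ℝ) * p - m * (m + 1)) ∧
      (∑ j ∈ B, distMatrix G i j ≤ (2 * (m:ℝ) + 1) * q - 2 * m * δA) := by
    intro i hi
    constructor
    · have hw := rowsum_within hconn hdisj hcover hbip hi hdle' (by rw [hA]; exact hmp)
      rw [hA] at hw
      have hc := (Nat.cast_le (α := ℝ)).mpr hw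
      push_cast at hc
      simp only [distMatrix]
      linarith
    · have hw := rowsum_across hdisj hbip hi hdle
      rw [hB] at hw
      have hc := (Nat.cast_le (α := ℝ)).mpr hw
      push_cast at hc
      have h3 : (δA : ℝ) ≤ (G.degree i : ℝ) := by exact_mod_cast hδAmin i hi
      have h4 : 2 * (m:ℝ) * δA ≤ 2 * m * (G.degree i : ℝ) := by
        have : (0:ℝ) ≤ 2 * m := by positivity
        nlinarith
      simp only [distMatrix]
      linarith
  have hrowB : ∀ i ∈ B, (∑ j ∈ B, distMatrix G i j ≤ 2 * (m:ℝ) * q - m * (m + 1)) ∧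
      (∑ j ∈ A, distMatrix G i j ≤ (2 * (m:ℝ) + 1) * p - 2 * m * δB) := by
    intro i hi
    constructor
    · have hw := rowsum_within hconn hdisj' hcover' hbip' hi hdle' (by rw [hB]; exact hmq)
      rw [hB] at hw
      have hc := (Nat.cast_le (α := ℝ)).mpr hw
      push_cast at hc
      simp only [distMatrix]
      linarith
    · have hw := rowsum_across hdisj' hbip' hi hdle
      rw [hA] at hw
      have hc := (Nat.cast_le (α := ℝ)).mpr hw
      push_cast at hc
      have h3 : (δB : ℝ) ≤ (G.degree i : ℝ) := by exact_mod_cast hδBmin i hi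
      have h4 : 2 * (m:ℝ) * δB ≤ 2 * m * (G.degree i : ℝ) := by
        have : (0:ℝ) ≤ 2 * m := by positivity
        nlinarith
      simp only [distMatrix]
      linarith
  -- apply the spectral bound
  have hnn : ∀ i j : Fin (p + q), 0 ≤ distMatrix G i j := fun i j => Nat.cast_nonneg _
  have hbound := fun i => eig_bound (distMatrix G) (distMatrix_isHermitian G) hnn A B
    hdisj hcover (2 * (m:ℝ) * p - m * (m + 1)) (2 * (m:ℝ) * q - m * (m + 1))
    ((2 * (m:ℝ) + 1) * q - 2 * m * δA) ((2 * (m:ℝ) + 1) * p - 2 * m * δB)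
    hα0 hγ0 hε0 hrowA hrowB hAne hBne i
  have hsup : distSpectralRadius G ≤
      ((2 * (m:ℝ) * p - m * (m + 1)) + (2 * (m:ℝ) * q - m * (m + 1))) / 2 +
      Real.sqrt (((2 * (m:ℝ) * p - m * (m + 1)) - (2 * (m:ℝ) * q - m * (m + 1))) ^ 2 +
        4 * ((2 * (m:ℝ) + 1) * q - 2 * m * δA) * ((2 * (m:ℝ) + 1) * p - 2 * m * δB)) / 2 := by
    rw [distSpectralRadius]
    exact ciSup_le hbound
  -- identify the two expressions
  have h1 : ((2 * (m:ℝ) * p - m * (m + 1)) + (2 * (m:ℝ) * q - m * (m + 1))) / 2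
      = (2 * (((2*m+1 : ℕ) : ℝ) - 1) * (((p+q : ℕ)) : ℝ) + 1 - (((2*m+1 : ℕ)) : ℝ) ^ 2) / 4 := by
    push_cast; ring
  have h2 : (((2 * (m:ℝ) * p - m * (m + 1)) - (2 * (m:ℝ) * q - m * (m + 1))) ^ 2 +
        4 * ((2 * (m:ℝ) + 1) * q - 2 * m * δA) * ((2 * (m:ℝ) + 1) * p - 2 * m * δB)) =
      ((((2*m+1 : ℕ)) : ℝ) - 1) ^ 2 * (((p+q : ℕ)) : ℝ) ^ 2 +
        4 * (δA : ℝ) * (δB : ℝ) * ((((2*m+1 : ℕ)) : ℝ) - 1) ^ 2 +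
        4 * (p : ℝ) * (q : ℝ) * (2 * (((2*m+1 : ℕ)) : ℝ) - 1) -
        4 * (((2*m+1 : ℕ)) : ℝ) * ((((2*m+1 : ℕ)) : ℝ) - 1) *
          ((p : ℝ) * (δA : ℝ) + (q : ℝ) * (δB : ℝ)) := by
    push_cast; ring
  rw [h1, h2] at hsup
  calc distSpectralRadius G ≤ _ := hsup
    _ = _ := by ring
end

section
/- Let G be a connected graph and let v_r, v_s be two distinct nonadjacent vertices of G. Then ρ(G + v_r v_s) < ρ(G). -/
open SimpleGraph Finset

open Matrix


section SpectralAux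

variable {n : ℕ} {A : Matrix (Fin n) (Fin n) ℝ}

lemma aux_sum_repr (hA : A.IsHermitian) (y : Fin n → ℝ) :
    y = ∑ i, (⇑(hA.eigenvectorBasis i) ⬝ᵥ y) • ⇑(hA.eigenvectorBasis i) := by
  set b := hA.eigenvectorBasis
  have h := b.sum_repr' ((WithLp.equiv 2 (Fin n → ℝ)).symm y)
  have h2 : ∀ i, (inner ℝ (b i) ((WithLp.equiv 2 (Fin n → ℝ)).symm y) : ℝ) = ⇑(b i) ⬝ᵥ y := by
    intro i
    simp [PiLp.inner_apply, dotProduct, mul_comm]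
  simp_rw [h2] at h
  have h3 := congrArg (WithLp.linearEquiv 2 ℝ (Fin n → ℝ)) h
  rw [map_sum] at h3
  simp only [_root_.map_smul] at h3
  exact h3.symm

lemma aux_dot_sum (y : Fin n → ℝ) (w : Fin n → Fin n → ℝ) (d : Fin n → ℝ) :
    y ⬝ᵥ (∑ i, d i • w i) = ∑ i, d i * (y ⬝ᵥ w i) := by
  calc y ⬝ᵥ (∑ i, d i • w i) = ∑ k, ∑ i, y k * (d i * w i k) := by
        simp [dotProduct, Finset.sum_apply, Finset.mul_sum]
    _ = ∑ i, ∑ k, y k * (d i * w i k) := Finset.sum_comm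
    _ = ∑ i, d i * (y ⬝ᵥ w i) := by
        simp only [dotProduct, Finset.mul_sum]
        exact Finset.sum_congr rfl fun i _ => Finset.sum_congr rfl fun k _ => by ring

lemma aux_mulVec_decomp (hA : A.IsHermitian) (y : Fin n → ℝ) :
    A *ᵥ y = ∑ i, (hA.eigenvalues i * (⇑(hA.eigenvectorBasis i) ⬝ᵥ y)) • ⇑(hA.eigenvectorBasis i) := by
  set b := hA.eigenvectorBasis
  set c : Fin n → ℝ := fun i => ⇑(b i) ⬝ᵥ y with hc
  nth_rw 1 [aux_sum_repr hA y]
  rw [← Matrix.mulVecLin_apply, map_sum]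
  simp only [_root_.map_smul, Matrix.mulVecLin_apply, hA.mulVec_eigenvectorBasis, smul_smul]
  exact Finset.sum_congr rfl fun i _ => by rw [mul_comm]

lemma aux_dot_mulVec (hA : A.IsHermitian) (y : Fin n → ℝ) :
    y ⬝ᵥ (A *ᵥ y) = ∑ i, hA.eigenvalues i * (⇑(hA.eigenvectorBasis i) ⬝ᵥ y) ^ 2 := by
  rw [aux_mulVec_decomp hA y, aux_dot_sum]
  exact Finset.sum_congr rfl fun i _ => by
    rw [dotProduct_comm]; ring

lemma aux_dot_self (hA : A.IsHermitian) (y : Fin n → ℝ) :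
    y ⬝ᵥ y = ∑ i, (⇑(hA.eigenvectorBasis i) ⬝ᵥ y) ^ 2 := by
  nth_rw 2 [aux_sum_repr hA y]
  rw [aux_dot_sum]
  exact Finset.sum_congr rfl fun i _ => by
    rw [dotProduct_comm]; ring

/-- Rayleigh quotient upper bound. -/
lemma aux_rayleigh_le (hA : A.IsHermitian) (y : Fin n → ℝ) {M : ℝ}
    (hM : ∀ i, hA.eigenvalues i ≤ M) :
    y ⬝ᵥ (A *ᵥ y) ≤ M * (y ⬝ᵥ y) := by
  rw [aux_dot_mulVec hA y, aux_dot_self hA y, Finset.mul_sum]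
  exact Finset.sum_le_sum fun i _ =>
    mul_le_mul_of_nonneg_right (hM i) (sq_nonneg _)

/-- Equality case: a vector attaining the maximal Rayleigh quotient is an eigenvector. -/
lemma aux_rayleigh_eq (hA : A.IsHermitian) (y : Fin n → ℝ) {M : ℝ}
    (hM : ∀ i, hA.eigenvalues i ≤ M)
    (heq : y ⬝ᵥ (A *ᵥ y) = M * (y ⬝ᵥ y)) :
    A *ᵥ y = M • y := by
  have hzero : ∑ i, (M - hA.eigenvalues i) * (⇑(hA.eigenvectorBasis i) ⬝ᵥ y) ^ 2 = 0 := by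
    have h : ∑ i, (M - hA.eigenvalues i) * (⇑(hA.eigenvectorBasis i) ⬝ᵥ y) ^ 2
        = M * (y ⬝ᵥ y) - y ⬝ᵥ (A *ᵥ y) := by
      rw [aux_dot_mulVec hA y, aux_dot_self hA y, Finset.mul_sum, ← Finset.sum_sub_distrib]
      exact Finset.sum_congr rfl fun i _ => by ring
    rw [h, heq, sub_self]
  have hterm := (Finset.sum_eq_zero_iff_of_nonneg fun i (_ : i ∈ Finset.univ) =>
    mul_nonneg (sub_nonneg.mpr (hM i)) (sq_nonneg _)).mp hzero
  have hkey : ∀ i, hA.eigenvalues i * (⇑(hA.eigenvectorBasis i) ⬝ᵥ y)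
      = M * (⇑(hA.eigenvectorBasis i) ⬝ᵥ y) := by
    intro i
    rcases mul_eq_zero.mp (hterm i (Finset.mem_univ i)) with h | h
    · rw [sub_eq_zero] at h; rw [h]
    · have h0 : ⇑(hA.eigenvectorBasis i) ⬝ᵥ y = 0 := by
        have := sq_eq_zero_iff.mp h
        exact this
      rw [h0, mul_zero, mul_zero]
  calc A *ᵥ y = ∑ i, (hA.eigenvalues i * (⇑(hA.eigenvectorBasis i) ⬝ᵥ y)) • ⇑(hA.eigenvectorBasis i) :=
        aux_mulVec_decomp hA y
    _ = M • ∑ i, (⇑(hA.eigenvectorBasis i) ⬝ᵥ y) • ⇑(hA.eigenvectorBasis i) := by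
        rw [Finset.smul_sum]
        exact Finset.sum_congr rfl fun i _ => by rw [hkey i, smul_smul]
    _ = M • y := by rw [← aux_sum_repr hA y]

end SpectralAux

section MainAux

variable {n : ℕ}

lemma aux_dot_self_norm (w : EuclideanSpace ℝ (Fin n)) : ⇑w ⬝ᵥ ⇑w = ‖w‖ ^ 2 := by
  rw [← real_inner_self_eq_norm_sq, PiLp.inner_apply]
  simp [dotProduct, sq]

lemma aux_abs_dot_le (M : Matrix (Fin n) (Fin n) ℝ) (hM : ∀ i j, 0 ≤ M i j) (x : Fin n → ℝ) :
    x ⬝ᵥ (M *ᵥ x) ≤ (fun k => |x k|) ⬝ᵥ (M *ᵥ fun k => |x k|) := by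
  simp only [dotProduct, Matrix.mulVec, Finset.mul_sum]
  refine Finset.sum_le_sum fun k _ => Finset.sum_le_sum fun j _ => ?_
  calc x k * (M k j * x j) ≤ |x k * (M k j * x j)| := le_abs_self _
    _ = |x k| * (M k j * |x j|) := by
        rw [abs_mul, abs_mul, abs_of_nonneg (hM k j)]

end MainAux

/-- Adding an edge between two distinct nonadjacent vertices of a connected graph
strictly decreases the distance spectral radius. -/
theorem distSpectralRadius_lt_of_addEdge {n : ℕ} (G : SimpleGraph (Fin n))
    (hconn : G.Connected) (u v : Fin n) (hne : u ≠ v) (hnadj : ¬ G.Adj u v) :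
    distSpectralRadius (G ⊔ fromEdgeSet {s(u, v)}) < distSpectralRadius G := by
  classical
  set G' := G ⊔ fromEdgeSet {s(u, v)} with hG'
  have hle : G ≤ G' := le_sup_left
  have hconn' : G'.Connected := hconn.mono hle
  have hNE : Nonempty (Fin n) := ⟨u⟩
  -- distance comparisons
  have hmono : ∀ i j, G'.dist i j ≤ G.dist i j := by
    intro i j
    obtain ⟨p, hp⟩ := hconn.exists_walk_length_eq_dist i j
    calc G'.dist i j ≤ (p.map (SimpleGraph.Hom.ofLE hle)).length :=
          SimpleGraph.dist_le _
      _ = G.dist i j := by rw [SimpleGraph.Walk.length_map, hp]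
  have hadj' : G'.Adj u v := by
    rw [hG', SimpleGraph.sup_adj]
    exact Or.inr ((SimpleGraph.fromEdgeSet_adj _).mpr ⟨rfl, hne⟩)
  have hd'uv : G'.dist u v = 1 := SimpleGraph.dist_eq_one_iff_adj.mpr hadj'
  have hduv : 2 ≤ G.dist u v := by
    have h0 : G.dist u v ≠ 0 := fun h => hne (hconn.dist_eq_zero_iff.mp h)
    have h1 : G.dist u v ≠ 1 := fun h => hnadj (SimpleGraph.dist_eq_one_iff_adj.mp h)
    omega
  -- matrix facts
  have hH := distMatrix_isHermitian G
  have hH' := distMatrix_isHermitian G'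
  have hD'nn : ∀ i j, (0 : ℝ) ≤ distMatrix G' i j := fun i j => Nat.cast_nonneg _
  have hmonoR : ∀ i j, distMatrix G' i j ≤ distMatrix G i j := fun i j =>
    Nat.cast_le.mpr (hmono i j)
  have hD'pos : ∀ i j, i ≠ j → (1 : ℝ) ≤ distMatrix G' i j := by
    intro i j h
    have h1 : 1 ≤ G'.dist i j := hconn'.pos_dist_of_ne h
    show (1 : ℝ) ≤ ((G'.dist i j : ℕ) : ℝ)
    exact_mod_cast h1
  -- spectral data
  obtain ⟨i0, hi0⟩ := exists_eq_ciSup_of_finite (f := hH'.eigenvalues)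
  have hρ'def : distSpectralRadius G' = ⨆ i, hH'.eigenvalues i := rfl
  have hρdef : distSpectralRadius G = ⨆ i, hH.eigenvalues i := rfl
  have hMle' : ∀ i, hH'.eigenvalues i ≤ distSpectralRadius G' := by
    intro i
    rw [hρ'def]
    exact le_ciSup (Set.finite_range _).bddAbove i
  have hMle : ∀ i, hH.eigenvalues i ≤ distSpectralRadius G := by
    intro i
    rw [hρdef]
    exact le_ciSup (Set.finite_range _).bddAbove i
  set x : Fin n → ℝ := ⇑(hH'.eigenvectorBasis i0) with hxdef
  have hxx : x ⬝ᵥ x = 1 := by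
    rw [hxdef, aux_dot_self_norm, hH'.eigenvectorBasis.orthonormal.1 i0]
    norm_num
  have hx : distMatrix G' *ᵥ x = distSpectralRadius G' • x := by
    rw [hxdef, hH'.mulVec_eigenvectorBasis i0, hi0, ← hρ'def]
  set y : Fin n → ℝ := fun k => |x k| with hydef
  have hynn : ∀ k, 0 ≤ y k := fun k => abs_nonneg _
  have hyy : y ⬝ᵥ y = 1 := by
    rw [← hxx]
    exact Finset.sum_congr rfl fun k _ => abs_mul_abs_self _
  have hray : x ⬝ᵥ (distMatrix G' *ᵥ x) = distSpectralRadius G' := by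
    rw [hx, dotProduct_smul, hxx, smul_eq_mul, mul_one]
  have hxy : distSpectralRadius G' ≤ y ⬝ᵥ (distMatrix G' *ᵥ y) := by
    rw [← hray]
    exact aux_abs_dot_le _ hD'nn x
  have hyray : y ⬝ᵥ (distMatrix G' *ᵥ y) = distSpectralRadius G' * (y ⬝ᵥ y) := by
    rw [hyy, mul_one]
    exact le_antisymm (by simpa [hyy] using aux_rayleigh_le hH' y hMle') hxy
  have hyeig : distMatrix G' *ᵥ y = distSpectralRadius G' • y :=
    aux_rayleigh_eq hH' y hMle' hyray
  -- positivity of y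
  have hypos : ∀ k, 0 < y k := by
    intro k
    by_contra hk
    have h : y k = 0 := le_antisymm (not_lt.mp hk) (hynn k)
    have hzero : ∀ j, y j = 0 := by
      have h1 : (distMatrix G' *ᵥ y) k = 0 := by
        rw [hyeig, Pi.smul_apply, h, smul_eq_mul, mul_zero]
      have h2 : ∑ j, distMatrix G' k j * y j = 0 := h1
      have h3 := (Finset.sum_eq_zero_iff_of_nonneg fun j (_ : j ∈ Finset.univ) =>
        mul_nonneg (hD'nn k j) (hynn j)).mp h2
      intro j
      rcases eq_or_ne j k with rfl | hjk
      · exact h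
      · rcases mul_eq_zero.mp (h3 j (Finset.mem_univ j)) with h4 | h4
        · exact absurd h4 (by have := hD'pos k j (Ne.symm hjk); linarith)
        · exact h4
    have hcon : y ⬝ᵥ y = 0 := by
      simp only [dotProduct]
      exact Finset.sum_eq_zero fun j _ => by rw [hzero j, mul_zero]
    rw [hyy] at hcon
    norm_num at hcon
  -- strict inequality
  have hstrict : y ⬝ᵥ (distMatrix G' *ᵥ y) < y ⬝ᵥ (distMatrix G *ᵥ y) := by
    simp only [dotProduct, Matrix.mulVec, Finset.mul_sum]
    refine Finset.sum_lt_sum (fun k _ => Finset.sum_le_sum fun j _ =>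
      mul_le_mul_of_nonneg_left (mul_le_mul_of_nonneg_right (hmonoR k j) (hynn j)) (hynn k))
      ⟨u, Finset.mem_univ u, ?_⟩
    refine Finset.sum_lt_sum (fun j _ =>
      mul_le_mul_of_nonneg_left (mul_le_mul_of_nonneg_right (hmonoR u j) (hynn j)) (hynn u))
      ⟨v, Finset.mem_univ v, ?_⟩
    have h1 : distMatrix G' u v = 1 := by
      simp [distMatrix, hd'uv]
    have h2 : (2 : ℝ) ≤ distMatrix G u v := by
      show (2 : ℝ) ≤ ((G.dist u v : ℕ) : ℝ)
      exact_mod_cast hduv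
    have hu := hypos u
    have hv := hypos v
    rw [h1]
    have hprod : 0 < y u * y v := mul_pos hu hv
    nlinarith [mul_nonneg (mul_nonneg (sub_nonneg.mpr h2) hu.le) hv.le]
  -- conclude
  calc distSpectralRadius G' ≤ y ⬝ᵥ (distMatrix G' *ᵥ y) := hxy
    _ < y ⬝ᵥ (distMatrix G *ᵥ y) := hstrict
    _ ≤ distSpectralRadius G * (y ⬝ᵥ y) := aux_rayleigh_le hH y hMle
    _ = distSpectralRadius G := by rw [hyy, mul_one]
end

section
/- Let G be a connected graph with n ≥ 2 vertices and let D_i = Σ_j d_{ij} denote the i-th row sum of the distance matrix D(G). Then the distance energy satisfies DE(G) ≥ 2·√((1/n)·Σ_{i=1}^n D_i²). -/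
open SimpleGraph Finset

open Matrix in
lemma unitary_dot {n : ℕ} (U : Matrix (Fin n) (Fin n) ℝ)
    (hU : U ∈ Matrix.unitaryGroup (Fin n) ℝ)
    (z : Fin n → ℝ) : (U *ᵥ z) ⬝ᵥ (U *ᵥ z) = z ⬝ᵥ z := by
  rw [Matrix.dotProduct_mulVec, ← Matrix.mulVec_transpose, Matrix.mulVec_mulVec]
  have : Uᵀ * U = 1 := by simpa [Matrix.star_eq_conjTranspose] using hU.1
  rw [this, Matrix.one_mulVec]

/-- **Theorem 6.** For a connected graph `G` with `n ≥ 2` vertices,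
`DE(G) ≥ 2√((1/n)·Σᵢ Dᵢ²)`, where `Dᵢ` is the `i`-th row sum of the distance matrix. -/
theorem distEnergy_ge_rowSums {n : ℕ} (hn : 2 ≤ n) (G : SimpleGraph (Fin n))
    (hconn : G.Connected) :
    2 * Real.sqrt (1 / (n : ℝ) * ∑ i : Fin n, (∑ j : Fin n, (G.dist i j : ℝ)) ^ 2) ≤
      distEnergy G := by
  classical
  set A : Matrix (Fin n) (Fin n) ℝ := distMatrix G with hA_def
  set hA := distMatrix_isHermitian G
  set μ : Fin n → ℝ := hA.eigenvalues with hμ_def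
  have : Nonempty (Fin n) := ⟨⟨0, by omega⟩⟩
  have hne : (Finset.univ : Finset (Fin n)).Nonempty := Finset.univ_nonempty
  -- trace is zero, so sum of eigenvalues is zero
  have htr : ∑ i, μ i = 0 := by
    have h1 : Matrix.trace A = 0 := by
      simp [Matrix.trace, Matrix.diag, hA_def, distMatrix, SimpleGraph.dist_self]
    have h2 : Matrix.trace A = ∑ i, μ i := by
      conv_lhs => rw [hA_def, hA.spectral_theorem, Unitary.conjStarAlgAut_apply]
      rw [Matrix.trace_mul_cycle]
      have : (star (hA.eigenvectorUnitary : Matrix (Fin n) (Fin n) ℝ)) *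
          (hA.eigenvectorUnitary : Matrix (Fin n) (Fin n) ℝ) = 1 := hA.eigenvectorUnitary.2.1
      rw [this, Matrix.one_mul, Matrix.trace_diagonal]
      simp [hμ_def]
    rw [h1] at h2; exact h2.symm
  -- pick k maximizing |μ k|
  obtain ⟨k, -, hk⟩ := Finset.exists_max_image Finset.univ (fun i => |μ i|) hne
  -- distEnergy ≥ 2 |μ k|
  have hDE : 2 * |μ k| ≤ distEnergy G := by
    have h1 : distEnergy G = |μ k| + ∑ i ∈ Finset.univ.erase k, |μ i| := by
      rw [distEnergy, ← Finset.add_sum_erase _ _ (Finset.mem_univ k)]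
    have h2 : ∑ i ∈ Finset.univ.erase k, μ i = -μ k := by
      have := Finset.add_sum_erase Finset.univ μ (Finset.mem_univ k)
      rw [htr] at this
      linarith
    have h3 : |μ k| ≤ ∑ i ∈ Finset.univ.erase k, |μ i| := by
      calc |μ k| = |∑ i ∈ Finset.univ.erase k, μ i| := by rw [h2, abs_neg]
        _ ≤ ∑ i ∈ Finset.univ.erase k, |μ i| := Finset.abs_sum_le_sum_abs _ _
    rw [h1]; linarith
  -- the row-sum bound: ∑ D_i² ≤ μ k ^ 2 * n
  have hrow : ∑ i : Fin n, (∑ j : Fin n, (G.dist i j : ℝ)) ^ 2 ≤ μ k ^ 2 * n := by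
    set U : Matrix (Fin n) (Fin n) ℝ := (hA.eigenvectorUnitary : Matrix (Fin n) (Fin n) ℝ)
      with hU_def
    have hUmem : U ∈ Matrix.unitaryGroup (Fin n) ℝ := hA.eigenvectorUnitary.2
    have hUstar : star U ∈ Matrix.unitaryGroup (Fin n) ℝ := Unitary.star_mem hUmem
    set x : Fin n → ℝ := fun _ => 1 with hx_def
    set y : Fin n → ℝ := Matrix.mulVec (star U) x with hy_def
    have hdiag : Matrix.mulVec (Matrix.diagonal (RCLike.ofReal ∘ μ) : Matrix (Fin n) (Fin n) ℝ) y
        = fun i => μ i * y i := by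
      ext i
      simp [Matrix.mulVec_diagonal]
    have hAx : Matrix.mulVec A x = Matrix.mulVec U (fun i => μ i * y i) := by
      conv_lhs => rw [hA_def, hA.spectral_theorem, Unitary.conjStarAlgAut_apply]
      rw [← Matrix.mulVec_mulVec, ← hy_def, ← Matrix.mulVec_mulVec, hdiag]
    have h1 : ∑ i : Fin n, (∑ j : Fin n, (G.dist i j : ℝ)) ^ 2
        = dotProduct (Matrix.mulVec A x) (Matrix.mulVec A x) := by
      simp [dotProduct, Matrix.mulVec, hA_def, distMatrix, hx_def, sq]
    have h2 : dotProduct (Matrix.mulVec A x) (Matrix.mulVec A x) = ∑ i, (μ i * y i) ^ 2 := by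
      rw [hAx, unitary_dot U hUmem]
      simp [dotProduct, sq]
    have h3 : ∑ i, y i ^ 2 = (n : ℝ) := by
      have := unitary_dot (star U) hUstar x
      rw [← hy_def] at this
      simp only [dotProduct] at this
      simp only [sq]
      rw [this]
      simp [hx_def]
    calc ∑ i : Fin n, (∑ j : Fin n, (G.dist i j : ℝ)) ^ 2 = ∑ i, (μ i * y i) ^ 2 := by
          rw [h1, h2]
      _ ≤ ∑ i, μ k ^ 2 * y i ^ 2 := by
          apply Finset.sum_le_sum
          intro i _
          rw [mul_pow]
          apply mul_le_mul_of_nonneg_right _ (sq_nonneg _)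
          rw [← sq_abs (μ i), ← sq_abs (μ k)]
          exact pow_le_pow_left₀ (abs_nonneg _) (hk i (Finset.mem_univ i)) 2
      _ = μ k ^ 2 * n := by rw [← Finset.mul_sum, h3]
  -- combine
  have hnpos : (0 : ℝ) < n := by positivity
  have hsqrt : Real.sqrt (1 / (n : ℝ) * ∑ i : Fin n, (∑ j : Fin n, (G.dist i j : ℝ)) ^ 2)
      ≤ |μ k| := by
    rw [← Real.sqrt_sq_eq_abs]
    apply Real.sqrt_le_sqrt
    rw [div_mul_eq_mul_div, one_mul, div_le_iff₀ hnpos]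
    linarith
  linarith
end

section
/- Let G be a connected graph with n ≥ 2 vertices. Then DE(G) ≥ 4W(G)/n, where W(G) is the Wiener index of G. -/
open SimpleGraph Finset

open Matrix

/-- For a connected graph `G` with `n ≥ 2` vertices, `DE(G) ≥ 4W(G)/n`, where
`W(G) = (1/2)·Σᵢ Σⱼ d(i,j)` is the Wiener index. -/
theorem distEnergy_ge_wiener {n : ℕ} (hn : 2 ≤ n) (G : SimpleGraph (Fin n))
    (hconn : G.Connected) :
    4 * ((∑ i : Fin n, ∑ j : Fin n, (G.dist i j : ℝ)) / 2) / (n : ℝ) ≤ distEnergy G := by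
  classical
  have hA := distMatrix_isHermitian G
  set A := distMatrix G with hAdef
  set lam := hA.eigenvalues with hlamdef
  set U : Matrix (Fin n) (Fin n) ℝ := (hA.eigenvectorUnitary : Matrix (Fin n) (Fin n) ℝ)
    with hUdef
  have hUU : U * star U = 1 := (Matrix.mem_unitaryGroup_iff).mp hA.eigenvectorUnitary.2
  have hUU' : star U * U = 1 := (Matrix.mem_unitaryGroup_iff').mp hA.eigenvectorUnitary.2
  have hofReal : (RCLike.ofReal ∘ lam : Fin n → ℝ) = lam := by
    funext i; simp
  have hspec : A = U * Matrix.diagonal lam * star U := by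
    have := hA.spectral_theorem
    rwa [hofReal] at this
  set x : Fin n → ℝ := fun _ => 1 with hxdef
  set y : Fin n → ℝ := star U *ᵥ x with hydef
  have hstarU : star U = Uᵀ := by
    rw [Matrix.star_eq_conjTranspose, Matrix.conjTranspose_eq_transpose_of_trivial]
  -- sum of squares of y is n
  have hy2 : ∑ i, y i ^ 2 = (n : ℝ) := by
    have h1 : ∑ i, y i ^ 2 = y ⬝ᵥ y := by
      simp [dotProduct, sq]
    rw [h1]
    nth_rewrite 2 [hydef]
    rw [Matrix.dotProduct_mulVec, hstarU, ← Matrix.mulVec_transpose, Matrix.transpose_transpose,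
      hydef, Matrix.mulVec_mulVec, hUU, Matrix.one_mulVec]
    simp [hxdef, dotProduct]
  -- quadratic form equals weighted sum of eigenvalues
  have hS : ∑ i, ∑ j, (G.dist i j : ℝ) = ∑ i, lam i * y i ^ 2 := by
    have h1 : ∑ i, ∑ j, (G.dist i j : ℝ) = x ⬝ᵥ (A *ᵥ x) := by
      simp [dotProduct, Matrix.mulVec, hxdef, hAdef, distMatrix]
    rw [h1, hspec, ← Matrix.mulVec_mulVec, ← Matrix.mulVec_mulVec, ← hydef,
      Matrix.dotProduct_mulVec]
    have h2 : x ᵥ* U = y := by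
      rw [← Matrix.mulVec_transpose, ← hstarU, hydef]
    rw [h2]
    simp only [dotProduct, Matrix.mulVec_diagonal, sq]
    exact Finset.sum_congr rfl fun i _ => by ring
  -- trace is zero, i.e. sum of eigenvalues is zero
  have htr : ∑ i, lam i = 0 := by
    have h1 : A.trace = ∑ i, lam i := by
      rw [hspec, Matrix.trace_mul_cycle, hUU', one_mul, Matrix.trace_diagonal]
    have h2 : A.trace = 0 := by
      simp [Matrix.trace, Matrix.diag, hAdef, distMatrix, SimpleGraph.dist_self]
    rw [← h1, h2]
  -- pick the max eigenvalue
  have : Nonempty (Fin n) := ⟨⟨0, by omega⟩⟩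
  obtain ⟨k, -, hk⟩ := Finset.exists_max_image Finset.univ lam
    (Finset.univ_nonempty (α := Fin n))
  have hn0 : (0 : ℝ) < n := by positivity
  -- S ≤ lam k * n
  have hSk : ∑ i, ∑ j, (G.dist i j : ℝ) ≤ lam k * n := by
    rw [hS]
    calc ∑ i, lam i * y i ^ 2 ≤ ∑ i, lam k * y i ^ 2 := by
          apply Finset.sum_le_sum
          intro i _
          exact mul_le_mul_of_nonneg_right (hk i (Finset.mem_univ i)) (sq_nonneg _)
      _ = lam k * n := by rw [← Finset.mul_sum, hy2]
  -- distEnergy ≥ 2 * lam k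
  have hDE : 2 * lam k ≤ distEnergy G := by
    have hsplit : distEnergy G = |lam k| + ∑ i ∈ Finset.univ.erase k, |lam i| := by
      rw [distEnergy, ← Finset.add_sum_erase _ _ (Finset.mem_univ k)]
    have habs : |∑ i ∈ Finset.univ.erase k, lam i| ≤ ∑ i ∈ Finset.univ.erase k, |lam i| :=
      Finset.abs_sum_le_sum_abs _ _
    have hrest : ∑ i ∈ Finset.univ.erase k, lam i = -lam k := by
      have := Finset.add_sum_erase _ lam (Finset.mem_univ k)
      rw [htr] at this
      linarith
    rw [hsplit]
    rw [hrest] at habs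
    have h1 : lam k ≤ |lam k| := le_abs_self _
    have h2 : lam k ≤ |-lam k| := by rw [abs_neg]; exact le_abs_self _
    linarith
  rw [div_le_iff₀ hn0]
  nlinarith [hSk, hDE, hn0.le]
end

section
/- Let G be a connected graph with n ≥ 2 vertices and m edges. Then DE(G) ≥ 4(n − 1) − 4m/n. -/
open SimpleGraph Finset

section Aux
open Matrix
variable {n : Type*} [Fintype n] [DecidableEq n] {A : Matrix n n ℝ} (hA : A.IsHermitian)

lemma aux_trace_eq_sum_eig : A.trace = ∑ i, hA.eigenvalues i := by
  conv_lhs => rw [hA.spectral_theorem, Unitary.conjStarAlgAut_apply]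
  rw [Matrix.trace_mul_cycle, Unitary.coe_star_mul_self, one_mul, Matrix.trace_diagonal]
  simp

lemma aux_quad_eq (v : n → ℝ) :
    v ⬝ᵥ (A *ᵥ v) = ∑ i, hA.eigenvalues i *
      ((star (hA.eigenvectorUnitary : Matrix n n ℝ) *ᵥ v) i)^2 := by
  have hvw : v ᵥ* (hA.eigenvectorUnitary : Matrix n n ℝ)
      = star (hA.eigenvectorUnitary : Matrix n n ℝ) *ᵥ v := by
    rw [Matrix.star_eq_conjTranspose, Matrix.mulVec_conjTranspose]
    simp
  conv_lhs => rw [hA.spectral_theorem, Unitary.conjStarAlgAut_apply]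
  rw [← Matrix.mulVec_mulVec, ← Matrix.mulVec_mulVec, Matrix.dotProduct_mulVec, hvw]
  rw [dotProduct, Finset.sum_congr rfl]
  intro i _
  rw [Matrix.mulVec_diagonal]
  simp [sq]
  ring

lemma aux_norm_w_eq (v : n → ℝ) :
    ∑ i, ((star (hA.eigenvectorUnitary : Matrix n n ℝ) *ᵥ v) i)^2 = v ⬝ᵥ v := by
  have hvw : v ᵥ* (hA.eigenvectorUnitary : Matrix n n ℝ)
      = star (hA.eigenvectorUnitary : Matrix n n ℝ) *ᵥ v := by
    rw [Matrix.star_eq_conjTranspose, Matrix.mulVec_conjTranspose]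
    simp
  have h1 : ∑ i, ((star (hA.eigenvectorUnitary : Matrix n n ℝ) *ᵥ v) i)^2
      = (v ᵥ* (hA.eigenvectorUnitary : Matrix n n ℝ)) ⬝ᵥ
        (star (hA.eigenvectorUnitary : Matrix n n ℝ) *ᵥ v) := by
    rw [hvw]; simp [dotProduct, sq]
  rw [h1, ← Matrix.dotProduct_mulVec, Matrix.mulVec_mulVec,
    (Matrix.mem_unitaryGroup_iff).mp hA.eigenvectorUnitary.2, Matrix.one_mulVec]

/-- There is an eigenvalue `≥` the Rayleigh quotient of the all-ones vector. -/
lemma aux_exists_eig [Nonempty n] :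
    ∃ j, (∑ i, ∑ k, A i k) ≤ hA.eigenvalues j * (Fintype.card n : ℝ) := by
  set v : n → ℝ := fun _ => 1 with hv
  obtain ⟨j, -, hj⟩ := Finset.exists_max_image Finset.univ hA.eigenvalues ⟨Classical.arbitrary n, Finset.mem_univ _⟩
  refine ⟨j, ?_⟩
  have hS : (∑ i, ∑ k, A i k) = v ⬝ᵥ (A *ᵥ v) := by
    simp [dotProduct, Matrix.mulVec, hv]
  have hvv : v ⬝ᵥ v = (Fintype.card n : ℝ) := by simp [dotProduct, hv]
  rw [hS, aux_quad_eq hA v, ← hvv, ← aux_norm_w_eq hA v, Finset.mul_sum]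
  exact Finset.sum_le_sum fun i _ => by
    have := sq_nonneg ((star (hA.eigenvectorUnitary : Matrix n n ℝ) *ᵥ v) i)
    nlinarith [hj i (Finset.mem_univ i)]

/-- If the trace vanishes, the energy is at least twice any eigenvalue. -/
lemma aux_energy_ge (htr : A.trace = 0) (j : n) :
    2 * hA.eigenvalues j ≤ ∑ i, |hA.eigenvalues i| := by
  have hsum : ∑ i, hA.eigenvalues i = 0 := by rw [← aux_trace_eq_sum_eig hA, htr]
  have h1 : ∑ i ∈ Finset.univ.erase j, hA.eigenvalues i = - hA.eigenvalues j := by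
    rw [Finset.sum_erase_eq_sub (Finset.mem_univ j), hsum]; ring
  have h2 : |∑ i ∈ Finset.univ.erase j, hA.eigenvalues i|
      ≤ ∑ i ∈ Finset.univ.erase j, |hA.eigenvalues i| := Finset.abs_sum_le_sum_abs _ _
  rw [h1, abs_neg] at h2
  have h3 : ∑ i, |hA.eigenvalues i|
      = |hA.eigenvalues j| + ∑ i ∈ Finset.univ.erase j, |hA.eigenvalues i| :=
    (Finset.add_sum_erase _ _ (Finset.mem_univ j)).symm
  have := le_abs_self (hA.eigenvalues j)
  linarith

end Aux


/-- For a connected graph `G` with `n ≥ 2` vertices and `m` edges,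
`DE(G) ≥ 4(n-1) - 4m/n`. -/
theorem distEnergy_ge_edges {n : ℕ} (hn : 2 ≤ n) (G : SimpleGraph (Fin n))
    [DecidableRel G.Adj] (hconn : G.Connected) (m : ℕ) (hm : G.edgeFinset.card = m) :
    4 * ((n : ℝ) - 1) - 4 * (m : ℝ) / (n : ℝ) ≤ distEnergy G := by
  have hn0 : (0:ℝ) < n := by positivity
  have : NeZero n := ⟨by omega⟩
  set A := distMatrix G with hA_def
  have hA := distMatrix_isHermitian G
  -- trace is zero
  have htr : A.trace = 0 := by
    simp [Matrix.trace, Matrix.diag, hA_def, distMatrix, SimpleGraph.dist_self]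
  -- combinatorial bound on the sum of entries
  have hpt : ∀ i k : Fin n,
      2 * (if i = k then (0:ℝ) else 1) - (if G.Adj i k then 1 else 0) ≤ A i k := by
    intro i k
    by_cases h : i = k
    · simp [h, hA_def, distMatrix, G.loopless]
    · by_cases h2 : G.Adj i k
      · have h1 : 1 ≤ G.dist i k := hconn.pos_dist_of_ne h
        have h1' : (1:ℝ) ≤ G.dist i k := by exact_mod_cast h1
        simp only [h, h2, if_false, if_true, hA_def, distMatrix]
        linarith
      · have h1 : 1 ≤ G.dist i k := hconn.pos_dist_of_ne h
        have hne1 : G.dist i k ≠ 1 := fun hc => h2 (SimpleGraph.dist_eq_one_iff_adj.mp hc)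
        have h2' : 2 ≤ G.dist i k := by omega
        have h2'' : (2:ℝ) ≤ G.dist i k := by exact_mod_cast h2'
        simp only [h, h2, if_false, hA_def, distMatrix]
        linarith
  have hdeg : ∑ i : Fin n, ∑ k : Fin n, (if G.Adj i k then (1:ℝ) else 0) = 2*(m:ℝ) := by
    have hd : ∀ i : Fin n, ∑ k : Fin n, (if G.Adj i k then (1:ℝ) else 0)
        = (G.degree i : ℝ) := by
      intro i
      rw [SimpleGraph.degree, SimpleGraph.neighborFinset_eq_filter]
      rw [Finset.sum_boole]
    rw [Finset.sum_congr rfl (fun i _ => hd i), ← Nat.cast_sum,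
      SimpleGraph.sum_degrees_eq_twice_card_edges, hm]
    push_cast; ring
  have hone : ∑ i : Fin n, ∑ k : Fin n, (if i = k then (0:ℝ) else 1)
      = (n:ℝ)*(n:ℝ) - (n:ℝ) := by
    have h1 : ∀ i : Fin n, ∑ k : Fin n, (if i = k then (0:ℝ) else 1) = (n:ℝ) - 1 := by
      intro i
      have he : ∀ k : Fin n, (if i = k then (0:ℝ) else 1)
          = 1 - (if i = k then (1:ℝ) else 0) := by
        intro k; by_cases h : i = k <;> simp [h]
      rw [Finset.sum_congr rfl (fun k _ => he k), Finset.sum_sub_distrib,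
        Finset.sum_ite_eq]
      simp
    rw [Finset.sum_congr rfl (fun i _ => h1 i)]
    simp [Finset.sum_const]
  have key : ∑ i : Fin n, ∑ k : Fin n,
      (2 * (if i = k then (0:ℝ) else 1) - (if G.Adj i k then 1 else 0))
      = 2*((n:ℝ)*(n:ℝ) - (n:ℝ)) - 2*(m:ℝ) := by
    simp only [Finset.sum_sub_distrib, ← Finset.mul_sum, hone, hdeg]
  have hcomb : 2 * (n:ℝ) * ((n:ℝ) - 1) - 2 * (m:ℝ) ≤ ∑ i, ∑ k, A i k := by
    calc 2 * (n:ℝ) * ((n:ℝ) - 1) - 2 * (m:ℝ)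
        = 2*((n:ℝ)*(n:ℝ) - (n:ℝ)) - 2*(m:ℝ) := by ring
      _ = _ := key.symm
      _ ≤ ∑ i, ∑ k, A i k :=
          Finset.sum_le_sum fun i _ => Finset.sum_le_sum fun k _ => hpt i k
  obtain ⟨j, hj⟩ := aux_exists_eig hA
  have hE := aux_energy_ge hA htr j
  have hcard : (Fintype.card (Fin n) : ℝ) = (n : ℝ) := by simp
  rw [hcard] at hj
  have hlow : 2 * (n:ℝ) * ((n:ℝ) - 1) - 2 * (m:ℝ) ≤ hA.eigenvalues j * n :=
    le_trans hcomb hj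
  have hXn : (4 * ((n : ℝ) - 1) - 4 * (m : ℝ) / (n : ℝ)) * n
      ≤ (2 * hA.eigenvalues j) * n := by
    have heq : (4 * ((n : ℝ) - 1) - 4 * (m : ℝ) / (n : ℝ)) * n
        = 2*(2 * (n:ℝ) * ((n:ℝ) - 1) - 2 * (m:ℝ)) := by
      field_simp; ring
    rw [heq]; linarith
  have hfin := le_of_mul_le_mul_right hXn hn0
  exact le_trans hfin hE
end
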